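/- arXiv:2102.07609 — 12 statements merged into one kernel-verified Lean document; each statement's English description precedes it below -/
import Mathlib

section
/- Let (M,ρ) be a pseudometric space and X a real Banach space with dim X > 1. Let F assign to each x ∈ M a nonempty compact convex subset F(x) ⊆ X of dimension at most 1 (i.e., a point or a closed bounded line segment). Assume that for every subset M' ⊆ M with at most 4 points there is a selection f : M' → X with ‖f(x) − f(y)‖ ≤ ρ(x,y) for all x,y ∈ M'. Let λ1 ≥ 1, λ2 ≥ 3λ1, and γ ≥ λ2·(3λ2+λ1)/(λ2−λ1). Then for every x ∈ M the second balanced refinement F²(x) is nonempty, and d_H(F²(x), F²(y)) ≤ γ·ρ(x,y) for all x,y ∈ M. In particular, one can take λ1 = 1, λ2 = 3, γ = 15. -/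
open Pointwise Metric

/-- Hausdorff distance between subsets of a normed space, defined via Minkowski
sums with closed balls. -/
noncomputable def hausDistB {X : Type*} [NormedAddCommGroup X] (A B : Set X) : ℝ :=
  sInf {r : ℝ | 0 < r ∧ A ⊆ B + closedBall (0 : X) r ∧ B ⊆ A + closedBall (0 : X) r}

lemma mem_add_cb {X : Type*} [NormedAddCommGroup X] (A : Set X) (r : ℝ) (p : X) :
    p ∈ A + closedBall (0 : X) r ↔ ∃ u ∈ A, ‖p - u‖ ≤ r := by
  constructor
  · rintro ⟨u, hu, y, hy, rfl⟩
    exact ⟨u, hu, by simpa [add_sub_cancel_left] using mem_closedBall_zero_iff.mp hy⟩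
  · rintro ⟨u, hu, h⟩
    exact ⟨u, hu, p - u, mem_closedBall_zero_iff.mpr h, by simp⟩

lemma sum_cb_closed {X : Type*} [NormedAddCommGroup X] (A : Set X) (r : ℝ)
    (hA : IsCompact A) : IsClosed (A + closedBall (0 : X) r) := by
  rcases A.eq_empty_or_nonempty with h | hne
  · simp [h]
  · have : A + closedBall (0 : X) r = (fun p => Metric.infDist p A) ⁻¹' (Set.Iic r) := by
      ext p
      rw [mem_add_cb]
      constructor
      · rintro ⟨u, hu, h⟩
        exact le_trans (by simpa [dist_eq_norm] using Metric.infDist_le_dist_of_mem hu) h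
      · intro h
        obtain ⟨u, hu, hd⟩ := hA.exists_infDist_eq_dist hne p
        exact ⟨u, hu, by rw [← dist_eq_norm]; exact hd ▸ h⟩
    rw [this]
    exact IsClosed.preimage (Metric.continuous_infDist_pt A) isClosed_Iic

lemma card_quad {M : Type*} [DecidableEq M] (a b c d : M) :
    ({a, b, c, d} : Finset M).card ≤ 4 := by
  calc ({a, b, c, d} : Finset M).card ≤ ({b, c, d} : Finset M).card + 1 :=
        Finset.card_insert_le _ _
    _ ≤ (({c, d} : Finset M).card + 1) + 1 :=
        Nat.add_le_add_right (Finset.card_insert_le _ _) 1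
    _ ≤ ((({d} : Finset M).card + 1) + 1) + 1 :=
        Nat.add_le_add_right (Nat.add_le_add_right (Finset.card_insert_le _ _) 1) 1
    _ ≤ 4 := by simp

lemma helly_real {ι : Type*} [Nonempty ι] (T : ι → Set ℝ)
    (hcp : ∀ i, IsCompact (T i)) (hcv : ∀ i, Convex ℝ (T i))
    (hpw : ∀ i j, (T i ∩ T j).Nonempty) : (⋂ i, T i).Nonempty := by
  have hne : ∀ i, (T i).Nonempty := fun i => ((hpw i i).mono (Set.inter_subset_left))
  have key : ∀ i j, sInf (T i) ≤ sSup (T j) := by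
    intro i j
    obtain ⟨c, hci, hcj⟩ := hpw i j
    exact le_trans (csInf_le (hcp i).bddBelow hci) (le_csSup (hcp j).bddAbove hcj)
  obtain ⟨j0⟩ := ‹Nonempty ι›
  have hba : BddAbove (Set.range fun i => sInf (T i)) :=
    ⟨sSup (T j0), by rintro _ ⟨i, rfl⟩; exact key i j0⟩
  refine ⟨⨆ i, sInf (T i), Set.mem_iInter.mpr fun j => ?_⟩
  have h1 : sInf (T j) ≤ ⨆ i, sInf (T i) := le_ciSup hba j
  have h2 : (⨆ i, sInf (T i)) ≤ sSup (T j) := ciSup_le fun i => key i j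
  exact (hcv j).ordConnected.out ((hcp j).sInf_mem (hne j)) ((hcp j).sSup_mem (hne j)) ⟨h1, h2⟩

lemma helly_line {X : Type*} [NormedAddCommGroup X] [NormedSpace ℝ X]
    {ι : Type*} [Nonempty ι] (S : ι → Set X) (a d : X)
    (hline : ∀ i, ∀ p ∈ S i, ∃ t : ℝ, p = a + t • d)
    (hcp : ∀ i, IsCompact (S i)) (hcv : ∀ i, Convex ℝ (S i))
    (hpw : ∀ i j, (S i ∩ S j).Nonempty) : (⋂ i, S i).Nonempty := by
  rcases eq_or_ne d 0 with hd | hd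
  · refine ⟨a, Set.mem_iInter.mpr fun i => ?_⟩
    obtain ⟨p, hp⟩ := (hpw i i).mono Set.inter_subset_left
    obtain ⟨t, ht⟩ := hline i p hp
    rw [hd, smul_zero, add_zero] at ht
    rwa [ht] at hp
  · set L : ℝ →ᵃ[ℝ] X := AffineMap.lineMap a (a + d) with hL
    have hLval : ∀ t : ℝ, L t = a + t • d := by
      intro t; simp [hL, AffineMap.lineMap_apply, add_sub_cancel_left, add_comm]
    set T : ι → Set ℝ := fun i => L ⁻¹' S i with hT
    have hTcv : ∀ i, Convex ℝ (T i) := fun i => (hcv i).affine_preimage L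
    have hTcp : ∀ i, IsCompact (T i) := by
      intro i
      rw [isCompact_iff_isClosed_bounded]
      constructor
      · exact IsClosed.preimage L.continuous_of_finiteDimensional (hcp i).isClosed
      · obtain ⟨r, hr⟩ := ((hcp i).isBounded).subset_closedBall a
        rw [isBounded_iff_forall_norm_le]
        refine ⟨r / ‖d‖, fun t ht => ?_⟩
        have h1 : dist (a + t • d) a ≤ r := hr (by rw [← hLval]; exact ht)
        have h2 : |t| * ‖d‖ ≤ r := by
          simpa [dist_eq_norm, norm_smul, add_sub_cancel_left] using h1
        rw [Real.norm_eq_abs, le_div_iff₀ (norm_pos_iff.mpr hd)]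
        exact h2
    have hTpw : ∀ i j, (T i ∩ T j).Nonempty := by
      intro i j
      obtain ⟨p, hpi, hpj⟩ := hpw i j
      obtain ⟨t, ht⟩ := hline i p hpi
      have h1 : t ∈ T i := by rw [hT]; show L t ∈ S i; rw [hLval t, ← ht]; exact hpi
      have h2 : t ∈ T j := by rw [hT]; show L t ∈ S j; rw [hLval t, ← ht]; exact hpj
      exact ⟨t, h1, h2⟩
    obtain ⟨t, ht⟩ := helly_real T hTcp hTcv hTpw
    refine ⟨a + t • d, Set.mem_iInter.mpr fun i => ?_⟩
    have := Set.mem_iInter.mp ht i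
    rwa [hT, Set.mem_preimage, hLval] at this

lemma seg3_real (t1 t2 t3 : ℝ) :
    t3 ∈ segment ℝ t1 t2 ∨ t1 ∈ segment ℝ t3 t2 ∨ t2 ∈ segment ℝ t1 t3 := by
  simp only [segment_eq_uIcc, Set.mem_uIcc]
  rcases le_total t1 t2 with h12 | h12 <;> rcases le_total t3 t1 with h31 | h31 <;>
    rcases le_total t3 t2 with h32 | h32 <;> tauto

lemma collin3 {X : Type*} [NormedAddCommGroup X] [NormedSpace ℝ X] (a d p q r : X)
    (hp : ∃ t : ℝ, p = a + t • d) (hq : ∃ t : ℝ, q = a + t • d)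
    (hr : ∃ t : ℝ, r = a + t • d) :
    r ∈ segment ℝ p q ∨ p ∈ segment ℝ r q ∨ q ∈ segment ℝ p r := by
  obtain ⟨t1, rfl⟩ := hp; obtain ⟨t2, rfl⟩ := hq; obtain ⟨t3, rfl⟩ := hr
  set L : ℝ →ᵃ[ℝ] X := AffineMap.lineMap a (a + d) with hL
  have hLval : ∀ t : ℝ, L t = a + t • d := by
    intro t; simp [hL, AffineMap.lineMap_apply, add_sub_cancel_left, add_comm]
  have himg : ∀ s t : ℝ, L '' segment ℝ s t = segment ℝ (L s) (L t) := fun s t =>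
    image_segment ℝ L s t
  rcases seg3_real t1 t2 t3 with h | h | h
  · left
    rw [← hLval t1, ← hLval t2, ← hLval t3, ← himg]
    exact ⟨t3, h, rfl⟩
  · right; left
    rw [← hLval t1, ← hLval t2, ← hLval t3, ← himg]
    exact ⟨t1, h, rfl⟩
  · right; right
    rw [← hLval t1, ← hLval t2, ← hLval t3, ← himg]
    exact ⟨t2, h, rfl⟩

lemma norm_combo {X : Type*} [NormedAddCommGroup X] [NormedSpace ℝ X]
    (s1 s2 : ℝ) (h1 : 0 ≤ s1) (h2 : 0 ≤ s2) (w1 w2 : X) :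
    ‖s1 • w1 + s2 • w2‖ ≤ s1 * ‖w1‖ + s2 * ‖w2‖ := by
  calc ‖s1 • w1 + s2 • w2‖ ≤ ‖s1 • w1‖ + ‖s2 • w2‖ := norm_add_le _ _
    _ = s1 * ‖w1‖ + s2 * ‖w2‖ := by
        rw [norm_smul, norm_smul, Real.norm_eq_abs, Real.norm_eq_abs,
          abs_of_nonneg h1, abs_of_nonneg h2]

set_option maxHeartbeats 1000000 in
theorem core_line_segments_banach
    {M : Type*} (ρ : M → M → ℝ)
    (hρ_refl : ∀ x, ρ x x = 0)
    (hρ_symm : ∀ x y, ρ x y = ρ y x)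
    (hρ_tri : ∀ x y z, ρ x z ≤ ρ x y + ρ y z)
    {X : Type*} [NormedAddCommGroup X] [NormedSpace ℝ X] [CompleteSpace X]
    (hdim : 1 < Module.rank ℝ X)
    (F : M → Set X)
    (hFne : ∀ x, (F x).Nonempty)
    (hFcp : ∀ x, IsCompact (F x))
    (hFcv : ∀ x, Convex ℝ (F x))
    -- every set `F x` has dimension at most 1: it lies on a line
    (hFdim : ∀ x, ∃ a d : X, ∀ y ∈ F x, ∃ t : ℝ, y = a + t • d)
    -- finiteness hypothesis: selections on subsets of at most 4 points
    (hfin : ∀ M' : Finset M, M'.card ≤ 4 →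
      ∃ f : M → X, (∀ x ∈ M', f x ∈ F x) ∧
        ∀ x ∈ M', ∀ y ∈ M', ‖f x - f y‖ ≤ ρ x y)
    (lam1 lam2 γ : ℝ) (hlam1 : 1 ≤ lam1) (hlam2 : 3 * lam1 ≤ lam2)
    (hγ : lam2 * (3 * lam2 + lam1) / (lam2 - lam1) ≤ γ)
    -- the first and second balanced refinements of `F`
    (F1 F2 : M → Set X)
    (hF1 : ∀ x, F1 x = ⋂ z, F z + closedBall (0 : X) (lam1 * ρ x z))
    (hF2 : ∀ x, F2 x = ⋂ z, F1 z + closedBall (0 : X) (lam2 * ρ x z)) :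
    (∀ x, (F2 x).Nonempty) ∧ ∀ x y, hausDistB (F2 x) (F2 y) ≤ γ * ρ x y := by
  classical
  -- basic facts
  have hρnn : ∀ a b, 0 ≤ ρ a b := by
    intro a b
    have h := hρ_tri a b a
    rw [hρ_refl a, hρ_symm b a] at h
    linarith
  have hl2 : (3:ℝ) ≤ lam2 := by linarith
  have hl21 : (0:ℝ) < lam2 - lam1 := by linarith
  have hγ0 : 0 < γ := lt_of_lt_of_le (div_pos (by nlinarith) hl21) hγ
  have hsel : ∀ a b c d : M, ∃ f : M → X,
      (∀ x ∈ ({a,b,c,d} : Finset M), f x ∈ F x) ∧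
      ∀ x ∈ ({a,b,c,d} : Finset M), ∀ y ∈ ({a,b,c,d} : Finset M), ‖f x - f y‖ ≤ ρ x y :=
    fun a b c d => hfin _ (card_quad a b c d)
  set J : M → M → Set X := fun z w => F z ∩ (F w + closedBall (0:X) (lam1 * ρ z w)) with hJ
  have hJcv : ∀ z w, Convex ℝ (J z w) :=
    fun z w => (hFcv z).inter ((hFcv w).add (convex_closedBall _ _))
  have hJcp : ∀ z w, IsCompact (J z w) :=
    fun z w => (hFcp z).inter_right (sum_cb_closed _ _ (hFcp w))
  have hJsub : ∀ z w, J z w ⊆ F z := fun z w => Set.inter_subset_left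
  have hF1memJ : ∀ x p, p ∈ F1 x ↔ ∀ z, ∃ u ∈ F z, ‖p - u‖ ≤ lam1 * ρ x z := by
    intro x p; rw [hF1 x, Set.mem_iInter]
    exact forall_congr' fun z => mem_add_cb _ _ _
  have hF2memJ : ∀ x p, p ∈ F2 x ↔ ∀ z, ∃ u ∈ F1 z, ‖p - u‖ ≤ lam2 * ρ x z := by
    intro x p; rw [hF2 x, Set.mem_iInter]
    exact forall_congr' fun z => mem_add_cb _ _ _
  have hF1sub : ∀ x, F1 x ⊆ F x := by
    intro x p hp
    obtain ⟨u, hu, hn⟩ := (hF1memJ x p).mp hp x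
    rw [hρ_refl, mul_zero] at hn
    have : p = u := by rwa [← sub_eq_zero, ← norm_le_zero_iff]
    exact this ▸ hu
  have hF1cv : ∀ x, Convex ℝ (F1 x) := by
    intro x; rw [hF1 x]
    exact convex_iInter fun z => (hFcv z).add (convex_closedBall _ _)
  have hF1cp : ∀ x, IsCompact (F1 x) := by
    intro x
    refine IsCompact.of_isClosed_subset (hFcp x) ?_ (hF1sub x)
    rw [hF1 x]
    exact isClosed_iInter fun z => sum_cb_closed _ _ (hFcp z)
  have hF2sub : ∀ x, F2 x ⊆ F1 x := by
    intro x p hp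
    obtain ⟨u, hu, hn⟩ := (hF2memJ x p).mp hp x
    rw [hρ_refl, mul_zero] at hn
    have : p = u := by rwa [← sub_eq_zero, ← norm_le_zero_iff]
    exact this ▸ hu
  -- nonemptiness of the first refinement
  have hF1ne : ∀ x, (F1 x).Nonempty := by
    intro x
    haveI : Nonempty M := ⟨x⟩
    obtain ⟨a, d, hline⟩ := hFdim x
    set S : M → Set X := fun z => F x ∩ (F z + closedBall (0:X) (lam1 * ρ x z)) with hS
    have hpw : ∀ z1 z2, (S z1 ∩ S z2).Nonempty := by
      intro z1 z2
      obtain ⟨f, hfmem, hflip⟩ := hsel x x z1 z2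
      have key : ∀ z ∈ ({x,x,z1,z2}:Finset M), f x ∈ S z := by
        intro z hz
        exact ⟨hfmem x (by simp), (mem_add_cb _ _ _).mpr ⟨f z, hfmem z hz,
          le_trans (hflip x (by simp) z hz) (le_mul_of_one_le_left (hρnn x z) hlam1)⟩⟩
      exact ⟨f x, key z1 (by simp), key z2 (by simp)⟩
    obtain ⟨p, hp⟩ := helly_line S a d (fun z q hq => hline q hq.1)
      (fun z => (hFcp x).inter_right (sum_cb_closed _ _ (hFcp z)))
      (fun z => (hFcv x).inter ((hFcv z).add (convex_closedBall _ _))) hpw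
    refine ⟨p, ?_⟩
    rw [hF1 x, Set.mem_iInter]
    exact fun z => (Set.mem_iInter.mp hp z).2
  -- mem J from F1
  have hF1J : ∀ z q, q ∈ F1 z → ∀ w, q ∈ J z w := by
    intro z q hq w
    exact ⟨hF1sub z hq, (mem_add_cb _ _ _).mpr ((hF1memJ z q).mp hq w)⟩
  -- the key pairwise-intersection lemma
  have pairB : ∀ x z1 z2 w1 w2, ρ x z1 ≤ ρ x z2 →
      ∃ p ∈ F x, (∃ u ∈ J z1 w1, ‖p - u‖ ≤ lam2 * ρ x z1) ∧
                 (∃ u ∈ J z2 w2, ‖p - u‖ ≤ lam2 * ρ x z2) := by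
    intro x z1 z2 w1 w2 h12
    obtain ⟨f, hf, hfl⟩ := hsel x z1 z2 w1
    obtain ⟨g, hg, hgl⟩ := hsel x z1 z2 w2
    obtain ⟨h, hh, hhl⟩ := hsel z1 z2 w1 w2
    have hfx : f x ∈ F x := hf x (by simp)
    have hfz1 : f z1 ∈ F z1 := hf z1 (by simp)
    have hfw1 : f w1 ∈ F w1 := hf w1 (by simp)
    have hgx : g x ∈ F x := hg x (by simp)
    have hgz1 : g z1 ∈ F z1 := hg z1 (by simp)
    have hgz2 : g z2 ∈ F z2 := hg z2 (by simp)
    have hgw2 : g w2 ∈ F w2 := hg w2 (by simp)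
    have hhz1 : h z1 ∈ F z1 := hh z1 (by simp)
    have hhz2 : h z2 ∈ F z2 := hh z2 (by simp)
    have hhw1 : h w1 ∈ F w1 := hh w1 (by simp)
    have hhw2 : h w2 ∈ F w2 := hh w2 (by simp)
    have nf1 : ‖f x - f z1‖ ≤ ρ x z1 := hfl x (by simp) z1 (by simp)
    have nf2 : ‖f z1 - f w1‖ ≤ ρ z1 w1 := hfl z1 (by simp) w1 (by simp)
    have ng1 : ‖g x - g z1‖ ≤ ρ x z1 := hgl x (by simp) z1 (by simp)
    have ng2 : ‖g x - g z2‖ ≤ ρ x z2 := hgl x (by simp) z2 (by simp)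
    have ng3 : ‖g z2 - g w2‖ ≤ ρ z2 w2 := hgl z2 (by simp) w2 (by simp)
    have ng4 : ‖g z1 - g z2‖ ≤ ρ z1 z2 := hgl z1 (by simp) z2 (by simp)
    have nh1 : ‖h z1 - h w1‖ ≤ ρ z1 w1 := hhl z1 (by simp) w1 (by simp)
    have nh2 : ‖h z2 - h w2‖ ≤ ρ z2 w2 := hhl z2 (by simp) w2 (by simp)
    have nh3 : ‖h z1 - h z2‖ ≤ ρ z1 z2 := hhl z1 (by simp) z2 (by simp)
    have ha1 : f z1 ∈ J z1 w1 := ⟨hfz1, (mem_add_cb _ _ _).mpr ⟨f w1, hfw1,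
      le_trans nf2 (le_mul_of_one_le_left (hρnn _ _) hlam1)⟩⟩
    have ha : h z1 ∈ J z1 w1 := ⟨hhz1, (mem_add_cb _ _ _).mpr ⟨h w1, hhw1,
      le_trans nh1 (le_mul_of_one_le_left (hρnn _ _) hlam1)⟩⟩
    have hb : h z2 ∈ J z2 w2 := ⟨hhz2, (mem_add_cb _ _ _).mpr ⟨h w2, hhw2,
      le_trans nh2 (le_mul_of_one_le_left (hρnn _ _) hlam1)⟩⟩
    have hb1 : g z2 ∈ J z2 w2 := ⟨hgz2, (mem_add_cb _ _ _).mpr ⟨g w2, hgw2,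
      le_trans ng3 (le_mul_of_one_le_left (hρnn _ _) hlam1)⟩⟩
    have hsig : ρ z1 z2 ≤ ρ x z1 + ρ x z2 := by
      have := hρ_tri z1 x z2
      rw [hρ_symm z1 x] at this
      linarith
    have hr1 : 0 ≤ ρ x z1 := hρnn x z1
    have hr2 : 0 ≤ ρ x z2 := hρnn x z2
    obtain ⟨A0, D0, hlineF⟩ := hFdim z1
    rcases collin3 A0 D0 (f z1) (g z1) (h z1) (hlineF _ hfz1) (hlineF _ hgz1)
        (hlineF _ hhz1) with hcase | hcase | hcase
    · -- h z1 ∈ segment (f z1) (g z1)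
      obtain ⟨s1, s2, hs1, hs2, hsum, hcomb⟩ := hcase
      set p := s1 • f x + s2 • g x with hp
      have hpF : p ∈ F x := (hFcv x) hfx hgx hs1 hs2 hsum
      have e : p - h z1 = s1 • (f x - f z1) + s2 • (g x - g z1) := by
        rw [hp, ← hcomb]; module
      have key : ‖p - h z1‖ ≤ ρ x z1 := by
        rw [e]
        calc ‖s1 • (f x - f z1) + s2 • (g x - g z1)‖
            ≤ s1 * ‖f x - f z1‖ + s2 * ‖g x - g z1‖ := norm_combo s1 s2 hs1 hs2 _ _
          _ ≤ s1 * ρ x z1 + s2 * ρ x z1 := by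
              refine add_le_add (mul_le_mul_of_nonneg_left nf1 hs1)
                (mul_le_mul_of_nonneg_left ng1 hs2)
          _ = ρ x z1 := by rw [← add_mul, hsum, one_mul]
      have hmul2 : 3 * ρ x z2 ≤ lam2 * ρ x z2 := mul_le_mul_of_nonneg_right hl2 hr2
      refine ⟨p, hpF, ⟨h z1, ha,
        le_trans key (le_mul_of_one_le_left hr1 (by linarith))⟩, ⟨h z2, hb, ?_⟩⟩
      have htri : ‖p - h z2‖ ≤ ‖p - h z1‖ + ‖h z1 - h z2‖ := by
        have := norm_add_le (p - h z1) (h z1 - h z2)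
        simpa [sub_add_sub_cancel] using this
      linarith [key, nh3, hsig, htri, hmul2, h12]
    · -- f z1 ∈ segment (h z1) (g z1)
      obtain ⟨s1, s2, hs1, hs2, hsum, hcomb⟩ := hcase
      set m := s1 • h z2 + s2 • g z2 with hm
      have hmJ : m ∈ J z2 w2 := (hJcv z2 w2) hb hb1 hs1 hs2 hsum
      have e : f z1 - m = s1 • (h z1 - h z2) + s2 • (g z1 - g z2) := by
        rw [hm, ← hcomb]; module
      have key : ‖f z1 - m‖ ≤ ρ z1 z2 := by
        rw [e]
        calc ‖s1 • (h z1 - h z2) + s2 • (g z1 - g z2)‖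
            ≤ s1 * ‖h z1 - h z2‖ + s2 * ‖g z1 - g z2‖ := norm_combo s1 s2 hs1 hs2 _ _
          _ ≤ s1 * ρ z1 z2 + s2 * ρ z1 z2 := by
              refine add_le_add (mul_le_mul_of_nonneg_left nh3 hs1)
                (mul_le_mul_of_nonneg_left ng4 hs2)
          _ = ρ z1 z2 := by rw [← add_mul, hsum, one_mul]
      have key2 : ‖f x - m‖ ≤ ‖f x - f z1‖ + ‖f z1 - m‖ := by
        have := norm_add_le (f x - f z1) (f z1 - m)
        simpa [sub_add_sub_cancel] using this
      have hmul2 : 3 * ρ x z2 ≤ lam2 * ρ x z2 := mul_le_mul_of_nonneg_right hl2 hr2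
      exact ⟨f x, hfx, ⟨f z1, ha1, le_trans nf1 (le_mul_of_one_le_left hr1 (by linarith))⟩,
        ⟨m, hmJ, by linarith [key, key2, nf1, hsig, hmul2, h12]⟩⟩
    · -- g z1 ∈ segment (f z1) (h z1)
      obtain ⟨s1, s2, hs1, hs2, hsum, hcomb⟩ := hcase
      have hmJ : s1 • f z1 + s2 • h z1 ∈ J z1 w1 := (hJcv z1 w1) ha1 ha hs1 hs2 hsum
      rw [hcomb] at hmJ
      exact ⟨g x, hgx, ⟨g z1, hmJ, le_trans ng1 (le_mul_of_one_le_left hr1 (by linarith))⟩,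
        ⟨g z2, hb1, le_trans ng2 (le_mul_of_one_le_left hr2 (by linarith))⟩⟩
  have pairB' : ∀ x z1 z2 w1 w2,
      ∃ p ∈ F x, (∃ u ∈ J z1 w1, ‖p - u‖ ≤ lam2 * ρ x z1) ∧
                 (∃ u ∈ J z2 w2, ‖p - u‖ ≤ lam2 * ρ x z2) := by
    intro x z1 z2 w1 w2
    rcases le_total (ρ x z1) (ρ x z2) with h | h
    · exact pairB x z1 z2 w1 w2 h
    · obtain ⟨p, hp, h2, h1⟩ := pairB x z2 z1 w2 w1 h
      exact ⟨p, hp, h1, h2⟩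
  -- nonemptiness of the second refinement
  have hF2ne : ∀ x, (F2 x).Nonempty := by
    intro x
    haveI : Nonempty M := ⟨x⟩
    obtain ⟨a, d, hline⟩ := hFdim x
    set S : M × M → Set X :=
      fun zw => F x ∩ (J zw.1 zw.2 + closedBall (0:X) (lam2 * ρ x zw.1)) with hS
    have hpw : ∀ i j : M × M, (S i ∩ S j).Nonempty := by
      rintro ⟨z1, w1⟩ ⟨z2, w2⟩
      obtain ⟨p, hp, h1, h2⟩ := pairB' x z1 z2 w1 w2
      exact ⟨p, ⟨hp, (mem_add_cb _ _ _).mpr h1⟩, ⟨hp, (mem_add_cb _ _ _).mpr h2⟩⟩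
    obtain ⟨p, hp⟩ := helly_line S a d (fun i q hq => hline q hq.1)
      (fun i => (hFcp x).inter_right (sum_cb_closed _ _ (hJcp _ _)))
      (fun i => (hFcv x).inter ((hJcv _ _).add (convex_closedBall _ _))) hpw
    refine ⟨p, (hF2memJ x p).mpr fun z => ?_⟩
    obtain ⟨a', d', hline'⟩ := hFdim z
    set S' : Option M → Set X := fun o => match o with
      | none => F z ∩ closedBall p (lam2 * ρ x z)
      | some w => J z w
      with hS'
    have hS'n : S' none = F z ∩ closedBall p (lam2 * ρ x z) := rfl
    have hS's : ∀ w, S' (some w) = J z w := fun w => rfl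
    have hsubz : ∀ o, S' o ⊆ F z := by
      intro o
      match o with
      | none => exact Set.inter_subset_left
      | some w => exact hJsub z w
    have hq0 : ∀ w, ∃ q, q ∈ J z w ∩ (F z ∩ closedBall p (lam2 * ρ x z)) := by
      intro w
      have hpS := Set.mem_iInter.mp hp (z, w)
      obtain ⟨u, hu, hnu⟩ := (mem_add_cb _ _ _).mp hpS.2
      refine ⟨u, hu, hJsub z w hu, ?_⟩
      rw [mem_closedBall, dist_eq_norm, norm_sub_rev]
      exact hnu
    have hpw' : ∀ o1 o2, (S' o1 ∩ S' o2).Nonempty := by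
      intro o1 o2
      match o1, o2 with
      | none, none =>
        obtain ⟨q, _, hq⟩ := hq0 z
        exact ⟨q, hq, hq⟩
      | none, some w =>
        obtain ⟨q, hqJ, hq⟩ := hq0 w
        exact ⟨q, hq, hqJ⟩
      | some w, none =>
        obtain ⟨q, hqJ, hq⟩ := hq0 w
        exact ⟨q, hqJ, hq⟩
      | some w1, some w2 =>
        obtain ⟨q, hq⟩ := hF1ne z
        exact ⟨q, hF1J z q hq w1, hF1J z q hq w2⟩
    have hcp' : ∀ o, IsCompact (S' o) := by
      intro o
      match o with
      | none => exact (hFcp z).inter_right isClosed_closedBall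
      | some w => exact hJcp z w
    have hcv' : ∀ o, Convex ℝ (S' o) := by
      intro o
      match o with
      | none => exact (hFcv z).inter (convex_closedBall _ _)
      | some w => exact hJcv z w
    obtain ⟨q, hq⟩ := helly_line S' a' d' (fun o u hu => hline' u (hsubz o hu)) hcp' hcv' hpw'
    have hqF1 : q ∈ F1 z := by
      refine (hF1memJ z q).mpr fun w => ?_
      have := Set.mem_iInter.mp hq (some w)
      exact (mem_add_cb _ _ _).mp this.2
    have hqb := Set.mem_iInter.mp hq none
    refine ⟨q, hqF1, ?_⟩
    have := hqb.2
    rw [mem_closedBall, dist_eq_norm, norm_sub_rev] at this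
    exact this
  -- Lipschitz estimate, one-sided with explicit points
  have stepC : ∀ x y, ∀ ξ ∈ F2 x, ∃ η ∈ F2 y, ‖ξ - η‖ ≤ γ * ρ x y := by
    intro x y ξ hξ
    haveI : Nonempty M := ⟨x⟩
    set r0 := ρ x y with hr0def
    have hr0 : 0 ≤ r0 := hρnn x y
    -- lemma C : for every z there is a good point of F y
    have lemC : ∀ z, ∃ q ∈ F y, (∃ u ∈ F1 z, ‖q - u‖ ≤ lam2 * ρ y z) ∧ ‖ξ - q‖ ≤ γ * r0 := by
      intro z
      set rz := ρ y z with hrzdef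
      have hrz : 0 ≤ rz := hρnn y z
      obtain ⟨η0, hη0, nη0⟩ := (hF2memJ x ξ).mp hξ y
      obtain ⟨ζ, hζ, nζ⟩ := (hF2memJ x ξ).mp hξ z
      have nζ' : ‖ξ - ζ‖ ≤ lam2 * (r0 + rz) := by
        refine le_trans nζ ?_
        have := hρ_tri x y z
        nlinarith [this]
      obtain ⟨q0, hq0, nq0⟩ := (hF1memJ z ζ).mp hζ y
      have nq0' : ‖ζ - q0‖ ≤ lam1 * rz := by rwa [hρ_symm z y] at nq0
      set denom := 2 * lam2 * r0 + (lam2 - lam1) * rz with hdenom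
      have hdnn : 0 ≤ denom := by nlinarith
      set s : ℝ := if denom = 0 then 0 else 2 * lam2 * r0 / denom with hsdef
      have hs0 : 0 ≤ s := by
        rw [hsdef]
        split
        · exact le_rfl
        · positivity
      have hs1 : s ≤ 1 := by
        rw [hsdef]
        split
        · norm_num
        · rw [div_le_one (lt_of_le_of_ne hdnn (Ne.symm (by assumption)))]
          nlinarith
      have h2nn : (0:ℝ) ≤ 2 * lam2 * r0 := by nlinarith
      have hrznn : (0:ℝ) ≤ (lam2 - lam1) * rz := by nlinarith
      have hkey1 : (1 - s) * (2 * lam2 * r0) ≤ s * ((lam2 - lam1) * rz) := by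
        by_cases hd : denom = 0
        · have hs' : s = 0 := by rw [hsdef, if_pos hd]
          have h1 : 2 * lam2 * r0 = 0 := by
            rw [hdenom] at hd
            linarith
          rw [hs', h1]
          norm_num
        · have hseq' : s * denom = 2 * lam2 * r0 := by
            rw [hsdef, if_neg hd]
            exact div_mul_cancel₀ _ hd
          have heq : (1 - s) * (2 * lam2 * r0) = s * ((lam2 - lam1) * rz) := by
            linear_combination -hseq' + s * hdenom
          exact le_of_eq heq
      have hkey2 : s * rz * (lam2 - lam1) ≤ 2 * lam2 * r0 := by
        by_cases hd : denom = 0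
        · have hs' : s = 0 := by rw [hsdef, if_pos hd]
          rw [hs']
          linarith
        · have hseq' : s * denom = 2 * lam2 * r0 := by
            rw [hsdef, if_neg hd]
            exact div_mul_cancel₀ _ hd
          have hexp : s * denom = s * (2 * lam2 * r0) + s * ((lam2 - lam1) * rz) := by
            rw [hdenom]; ring
          linarith [hseq', hexp, mul_nonneg hs0 h2nn]
      set q := (1 - s) • η0 + s • q0 with hq
      have hqF : q ∈ F y := (hFcv y) (hF1sub y hη0) hq0 (by linarith) hs0 (by ring)
      have e1 : q - ζ = (1 - s) • (η0 - ζ) + s • (q0 - ζ) := by rw [hq]; module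
      have e2 : ξ - q = (1 - s) • (ξ - η0) + s • (ξ - q0) := by rw [hq]; module
      have nη0ζ : ‖η0 - ζ‖ ≤ lam2 * r0 + lam2 * (r0 + rz) := by
        have htri : ‖η0 - ζ‖ ≤ ‖ξ - η0‖ + ‖ξ - ζ‖ := by
          calc ‖η0 - ζ‖ = ‖(η0 - ξ) + (ξ - ζ)‖ := by rw [sub_add_sub_cancel]
            _ ≤ ‖η0 - ξ‖ + ‖ξ - ζ‖ := norm_add_le _ _
            _ = ‖ξ - η0‖ + ‖ξ - ζ‖ := by rw [norm_sub_rev η0 ξ]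
        linarith
      have nξq0 : ‖ξ - q0‖ ≤ lam2 * (r0 + rz) + lam1 * rz := by
        have htri : ‖ξ - q0‖ ≤ ‖ξ - ζ‖ + ‖ζ - q0‖ := by
          have := norm_add_le (ξ - ζ) (ζ - q0)
          simpa [sub_add_sub_cancel] using this
        linarith
      have bound1 : ‖q - ζ‖ ≤ lam2 * rz := by
        rw [e1]
        calc ‖(1 - s) • (η0 - ζ) + s • (q0 - ζ)‖
            ≤ (1 - s) * ‖η0 - ζ‖ + s * ‖q0 - ζ‖ := norm_combo _ _ (by linarith) hs0 _ _
          _ ≤ (1 - s) * (lam2 * r0 + lam2 * (r0 + rz)) + s * (lam1 * rz) := by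
              have nq0'' : ‖q0 - ζ‖ ≤ lam1 * rz := by rw [norm_sub_rev]; exact nq0'
              refine add_le_add (mul_le_mul_of_nonneg_left nη0ζ (by linarith))
                (mul_le_mul_of_nonneg_left nq0'' hs0)
          _ = lam2 * rz - (s * ((lam2 - lam1) * rz) - (1 - s) * (2 * lam2 * r0)) := by ring
          _ ≤ lam2 * rz := by linarith [hkey1]
      have bound2 : ‖ξ - q‖ ≤ γ * r0 := by
        rw [e2]
        have hγden : lam2 * (3 * lam2 + lam1) ≤ γ * (lam2 - lam1) := by
          rw [← div_le_iff₀ hl21] at *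
          linarith [hγ]
        calc ‖(1 - s) • (ξ - η0) + s • (ξ - q0)‖
            ≤ (1 - s) * ‖ξ - η0‖ + s * ‖ξ - q0‖ := norm_combo _ _ (by linarith) hs0 _ _
          _ ≤ (1 - s) * (lam2 * r0) + s * (lam2 * (r0 + rz) + lam1 * rz) := by
              refine add_le_add (mul_le_mul_of_nonneg_left nη0 (by linarith))
                (mul_le_mul_of_nonneg_left nξq0 hs0)
          _ ≤ γ * r0 := by
              rw [← mul_le_mul_iff_left₀ hl21]
              have h1 : s * rz * (lam2 - lam1) * (lam2 + lam1) ≤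
                  2 * lam2 * r0 * (lam2 + lam1) :=
                mul_le_mul_of_nonneg_right hkey2 (by linarith)
              have h2 : lam2 * (3 * lam2 + lam1) * r0 ≤ γ * (lam2 - lam1) * r0 :=
                mul_le_mul_of_nonneg_right hγden hr0
              nlinarith [h1, h2]
      exact ⟨q, hqF, ⟨ζ, hζ, bound1⟩, bound2⟩
    -- assemble via Helly on the line of F y
    obtain ⟨a, d, hline⟩ := hFdim y
    obtain ⟨η1, hη1⟩ := hF2ne y
    have hη1F1 : η1 ∈ F1 y := hF2sub y hη1
    set S : Option M → Set X := fun o => match o with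
      | none => F y ∩ closedBall ξ (γ * r0)
      | some z => F y ∩ (F1 z + closedBall (0:X) (lam2 * ρ y z))
      with hS
    have hsuby : ∀ o, S o ⊆ F y := by
      intro o
      match o with
      | none => exact Set.inter_subset_left
      | some z => exact Set.inter_subset_left
    have hmemb : ∀ z, ∃ q, q ∈ (F y ∩ closedBall ξ (γ * r0)) ∩
        (F y ∩ (F1 z + closedBall (0:X) (lam2 * ρ y z))) := by
      intro z
      obtain ⟨q, hqF, h1, h2⟩ := lemC z
      refine ⟨q, ⟨hqF, ?_⟩, hqF, (mem_add_cb _ _ _).mpr h1⟩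
      rw [mem_closedBall, dist_eq_norm, norm_sub_rev]
      exact h2
    have hpw : ∀ o1 o2, (S o1 ∩ S o2).Nonempty := by
      intro o1 o2
      match o1, o2 with
      | none, none =>
        obtain ⟨q, h1, _⟩ := hmemb y
        exact ⟨q, h1, h1⟩
      | none, some z =>
        obtain ⟨q, h1, h2⟩ := hmemb z
        exact ⟨q, h1, h2⟩
      | some z, none =>
        obtain ⟨q, h1, h2⟩ := hmemb z
        exact ⟨q, h2, h1⟩
      | some z1, some z2 =>
        refine ⟨η1, ⟨hF1sub y hη1F1, ?_⟩, ⟨hF1sub y hη1F1, ?_⟩⟩ <;>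
          · exact (mem_add_cb _ _ _).mpr ((hF2memJ y η1).mp hη1 _)
    have hcp' : ∀ o, IsCompact (S o) := by
      intro o
      match o with
      | none => exact (hFcp y).inter_right isClosed_closedBall
      | some z => exact (hFcp y).inter_right (sum_cb_closed _ _ (hF1cp z))
    have hcv' : ∀ o, Convex ℝ (S o) := by
      intro o
      match o with
      | none => exact (hFcv y).inter (convex_closedBall _ _)
      | some z => exact (hFcv y).inter ((hF1cv z).add (convex_closedBall _ _))
    obtain ⟨η, hη⟩ := helly_line S a d (fun o u hu => hline u (hsuby o hu)) hcp' hcv' hpw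
    have hηF2 : η ∈ F2 y := by
      refine (hF2memJ y η).mpr fun z => ?_
      have := Set.mem_iInter.mp hη (some z)
      exact (mem_add_cb _ _ _).mp this.2
    have hb := (Set.mem_iInter.mp hη none).2
    rw [mem_closedBall, dist_eq_norm, norm_sub_rev] at hb
    exact ⟨η, hηF2, hb⟩
  refine ⟨hF2ne, fun x y => ?_⟩
  have incl : ∀ a b : M, F2 a ⊆ F2 b + closedBall (0:X) (γ * ρ a b) := by
    intro a b ξ hξ
    obtain ⟨η, hη, hn⟩ := stepC a b ξ hξ
    exact (mem_add_cb _ _ _).mpr ⟨η, hη, hn⟩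
  have hmono : ∀ (r r' : ℝ) (A : Set X), r ≤ r' →
      A + closedBall (0:X) r ⊆ A + closedBall (0:X) r' :=
    fun r r' A h => Set.add_subset_add_left (closedBall_subset_closedBall h)
  have hbdd : BddBelow {r : ℝ | 0 < r ∧ F2 x ⊆ F2 y + closedBall (0:X) r ∧
      F2 y ⊆ F2 x + closedBall (0:X) r} := ⟨0, fun r hr => le_of_lt hr.1⟩
  have hc0 : 0 ≤ γ * ρ x y := mul_nonneg (le_of_lt hγ0) (hρnn x y)
  have hmem : ∀ r, γ * ρ x y ≤ r → 0 < r → hausDistB (F2 x) (F2 y) ≤ r := by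
    intro r hr hrpos
    refine csInf_le hbdd ⟨hrpos, Set.Subset.trans (incl x y) (hmono _ _ _ hr), ?_⟩
    refine Set.Subset.trans (incl y x) (hmono _ _ _ ?_)
    rw [hρ_symm y x]; exact hr
  rcases eq_or_lt_of_le hc0 with heq | hlt
  · rw [← heq]
    have : ∀ ε : ℝ, 0 < ε → hausDistB (F2 x) (F2 y) ≤ 0 + ε := by
      intro ε hε
      rw [zero_add]
      exact hmem ε (by linarith [heq]) hε
    exact le_of_forall_pos_le_add this
  · exact hmem _ le_rfl hlt
end

section
/- Let X be a real Banach space, C ⊆ X a convex set, a ∈ X and r ≥ 0, and suppose C ∩ B(a,r) ≠ ∅, where B(a,r) denotes the closed ball of center a and radius r. Then for every s > 0 and every L > 1, (C ∩ B(a, L·r)) + θ(L)·s·B_X ⊇ (C + s·B_X) ∩ B(a, L·r + s), where θ(L) = (3L+1)/(L−1) and B_X is the closed unit ball of X. -/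
open Pointwise Metric

theorem neighborhood_of_intersection_banach
    {X : Type*} [NormedAddCommGroup X] [NormedSpace ℝ X] [CompleteSpace X]
    (C : Set X) (hC : Convex ℝ C) (a : X) (r : ℝ) (hr : 0 ≤ r)
    (hne : (C ∩ closedBall a r).Nonempty)
    (s L : ℝ) (hs : 0 < s) (hL : 1 < L) :
    (C + closedBall (0 : X) s) ∩ closedBall a (L * r + s) ⊆
      (C ∩ closedBall a (L * r)) + closedBall (0 : X) ((3 * L + 1) / (L - 1) * s) := by
  obtain ⟨c₀, hc₀C, hc₀B⟩ := hne
  rw [mem_closedBall, dist_eq_norm] at hc₀B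
  rintro x ⟨hx1, hxB⟩
  rw [Set.mem_add] at hx1
  obtain ⟨c, hc, u, hu, rfl⟩ := hx1
  rw [mem_closedBall, dist_eq_norm] at hxB
  rw [mem_closedBall_zero_iff] at hu
  set D := (L - 1) * r + 2 * s with hD
  have hDpos : 0 < D := by nlinarith
  set t := 2 * s / D with htdef
  have ht0 : 0 < t := div_pos (by linarith) hDpos
  have ht1 : t ≤ 1 := by rw [div_le_one hDpos]; nlinarith
  have htD : t * D = 2 * s := div_mul_cancel₀ _ (ne_of_gt hDpos)
  set c' := (1 - t) • c + t • c₀ with hc'def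
  have hc'C : c' ∈ C := hC hc hc₀C (by linarith) (le_of_lt ht0) (by ring)
  have hca : ‖c - a‖ ≤ L * r + 2 * s := by
    have h1 : c - a = (c + u - a) - u := by abel
    calc ‖c - a‖ = ‖(c + u - a) - u‖ := by rw [← h1]
      _ ≤ ‖c + u - a‖ + ‖u‖ := norm_sub_le _ _
      _ ≤ L * r + 2 * s := by linarith
  have hc'a : ‖c' - a‖ ≤ L * r := by
    have h1 : c' - a = (1 - t) • (c - a) + t • (c₀ - a) := by
      rw [hc'def]; module
    calc ‖c' - a‖ ≤ ‖(1 - t) • (c - a)‖ + ‖t • (c₀ - a)‖ := by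
          rw [h1]; exact norm_add_le _ _
      _ = (1 - t) * ‖c - a‖ + t * ‖c₀ - a‖ := by
          rw [norm_smul, norm_smul, Real.norm_eq_abs, Real.norm_eq_abs,
            abs_of_nonneg (by linarith), abs_of_nonneg (le_of_lt ht0)]
      _ ≤ (1 - t) * (L * r + 2 * s) + t * r := by
          have := mul_le_mul_of_nonneg_left hca (by linarith : (0:ℝ) ≤ 1 - t)
          have := mul_le_mul_of_nonneg_left hc₀B (le_of_lt ht0)
          linarith
      _ = L * r := by nlinarith [htD]
  have hxc' : ‖c + u - c'‖ ≤ (3 * L + 1) / (L - 1) * s := by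
    have h1 : c + u - c' = u + t • (c - c₀) := by rw [hc'def]; module
    have h2 : ‖c - c₀‖ ≤ ‖c - a‖ + ‖c₀ - a‖ := by
      have : c - c₀ = (c - a) - (c₀ - a) := by abel
      rw [this]; exact norm_sub_le _ _
    have h3 : ‖c + u - c'‖ ≤ s + t * (L * r + 2 * s + r) := by
      calc ‖c + u - c'‖ ≤ ‖u‖ + ‖t • (c - c₀)‖ := by rw [h1]; exact norm_add_le _ _
        _ = ‖u‖ + t * ‖c - c₀‖ := by
            rw [norm_smul, Real.norm_eq_abs, abs_of_nonneg (le_of_lt ht0)]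
        _ ≤ s + t * (L * r + 2 * s + r) := by
            have h4 : ‖c - c₀‖ ≤ L * r + 2 * s + r := by linarith
            have := mul_le_mul_of_nonneg_left h4 (le_of_lt ht0)
            linarith
    have hθ : (3 * L + 1) / (L - 1) * (L - 1) = 3 * L + 1 :=
      div_mul_cancel₀ _ (by linarith)
    have key : s + t * (L * r + 2 * s + r) ≤ (3 * L + 1) / (L - 1) * s := by
      rw [← mul_le_mul_iff_of_pos_right (mul_pos (by linarith : (0:ℝ) < L - 1) hDpos)]
      have expand : (s + t * (L * r + 2 * s + r)) * ((L - 1) * D)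
          = s * (L - 1) * D + (t * D) * (L * r + 2 * s + r) * (L - 1) := by ring
      rw [expand, htD]
      have expand2 : (3 * L + 1) / (L - 1) * s * ((L - 1) * D)
          = ((3 * L + 1) / (L - 1) * (L - 1)) * (s * D) := by ring
      rw [expand2, hθ, hD]
      nlinarith [mul_pos hs hs, mul_nonneg (mul_nonneg hs.le hr) (by linarith : (0:ℝ) ≤ L - 1)]
    linarith
  rw [Set.mem_add]
  refine ⟨c', ⟨hc'C, ?_⟩, c + u - c', ?_, by abel⟩
  · rw [mem_closedBall, dist_eq_norm]; exact hc'a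
  · rw [mem_closedBall_zero_iff]; exact hxc'
end

section
/- Let X be a real inner product (Euclidean) space, C ⊆ X a convex set, a ∈ X and r ≥ 0, and suppose C ∩ B(a,r) ≠ ∅, where B(a,r) denotes the closed ball of center a and radius r. Then for every s > 0 and every L > 1, (C ∩ B(a, L·r)) + θ(L)·s·B_X ⊇ (C + s·B_X) ∩ B(a, L·r + s), where θ(L) = 1 + 2L/√(L²−1) and B_X is the closed unit ball of X. -/
open Pointwise Metric RealInnerProductSpace

private lemma nioe_aux (L r s t α W d σ : ℝ) (hL : 1 < L) (hr : 0 < r) (hs : 0 < s)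
    (ht : 0 < t) (ht1 : t ≤ 1) (hW : 0 ≤ W) (hσ : 0 < σ) (hσ2 : σ ^ 2 = L ^ 2 - 1)
    (hi : L ^ 2 * r ^ 2 - 2 * t * α + t ^ 2 * W ^ 2 ≤ r ^ 2)
    (hii : L ^ 2 * r ^ 2 + (1 - t) * α ≤ d * (L * r))
    (hd : d ≤ L * r + 2 * s) :
    (1 - t) * W ≤ 2 * L * s / σ := by
  have h1 : 2 * t * (W * r * σ) ≤ σ ^ 2 * r ^ 2 + t ^ 2 * W ^ 2 := by
    nlinarith [sq_nonneg (σ * r - t * W)]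
  have hσr : σ ^ 2 * r ^ 2 = L ^ 2 * r ^ 2 - r ^ 2 := by rw [hσ2]; ring
  have h2 : t * (W * r * σ) ≤ t * α := by linarith
  have hα : W * r * σ ≤ α := le_of_mul_le_mul_left h2 ht
  have h3 : (1 - t) * α ≤ 2 * L * r * s := by
    nlinarith [mul_le_mul_of_nonneg_right hd (by positivity : (0:ℝ) ≤ L * r)]
  have h4 : (1 - t) * (W * r * σ) ≤ (1 - t) * α :=
    mul_le_mul_of_nonneg_left hα (by linarith)
  have h6 : (1 - t) * W * σ ≤ 2 * L * s := by
    have h5 : ((1 - t) * W * σ) * r ≤ (2 * L * s) * r := by nlinarith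
    exact le_of_mul_le_mul_right h5 hr
  rw [le_div_iff₀ hσ]
  linarith

set_option maxHeartbeats 1000000 in
theorem neighborhood_of_intersection_euclidean
    {X : Type*} [NormedAddCommGroup X] [InnerProductSpace ℝ X]
    (C : Set X) (hC : Convex ℝ C) (a : X) (r : ℝ) (hr : 0 ≤ r)
    (hne : (C ∩ closedBall a r).Nonempty)
    (s L : ℝ) (hs : 0 < s) (hL : 1 < L) :
    (C + closedBall (0 : X) s) ∩ closedBall a (L * r + s) ⊆
      (C ∩ closedBall a (L * r)) +
        closedBall (0 : X) ((1 + 2 * L / Real.sqrt (L ^ 2 - 1)) * s) := by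
  have hL2 : 0 < L ^ 2 - 1 := by nlinarith
  set σ := Real.sqrt (L ^ 2 - 1) with hσdef
  have hσ : 0 < σ := Real.sqrt_pos.mpr hL2
  have hσ2 : σ ^ 2 = L ^ 2 - 1 := Real.sq_sqrt hL2.le
  have hθ1 : s ≤ (1 + 2 * L / σ) * s := by
    have h : (1 : ℝ) ≤ 1 + 2 * L / σ := by
      have : 0 < 2 * L / σ := by positivity
      linarith
    nlinarith [mul_le_mul_of_nonneg_right h hs.le]
  obtain ⟨b, hbC, hbB⟩ := hne
  have hba : ‖b - a‖ ≤ r := mem_closedBall_iff_norm.mp hbB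
  rintro x ⟨⟨c, hcC, u, hu, rfl⟩, hxB⟩
  have hus : ‖u‖ ≤ s := by simpa using mem_closedBall_iff_norm.mp hu
  have hxa : ‖c + u - a‖ ≤ L * r + s := mem_closedBall_iff_norm.mp hxB
  by_cases hca : ‖c - a‖ ≤ L * r
  · refine ⟨c, ⟨hcC, mem_closedBall_iff_norm.mpr hca⟩, u, ?_, rfl⟩
    rw [mem_closedBall_zero_iff]
    linarith
  · push_neg at hca
    rcases eq_or_lt_of_le hr with hr0 | hrpos
    · -- r = 0 : then b = a and we can take c' = b
      have hb0 : ‖b - a‖ ≤ 0 := by rw [← hr0] at hba; exact hba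
      refine ⟨b, ⟨hbC, mem_closedBall_iff_norm.mpr ?_⟩, (c + u) - b, ?_, by abel⟩
      · rw [← hr0]; simpa using hb0
      rw [mem_closedBall_zero_iff]
      have hab : b = a := by
        have h0 : ‖b - a‖ = 0 := le_antisymm hb0 (norm_nonneg _)
        exact sub_eq_zero.mp (norm_eq_zero.mp h0)
      rw [hab]
      have : L * r + s = s := by rw [← hr0]; ring
      linarith [hxa, this]
    -- IVT to find t with ‖b + t • (c - b) - a‖ = L * r
    have hcont : ContinuousOn (fun t : ℝ => ‖b + t • (c - b) - a‖) (Set.Icc 0 1) := by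
      fun_prop
    have hmem : L * r ∈ Set.Icc ‖b + (0:ℝ) • (c - b) - a‖ ‖b + (1:ℝ) • (c - b) - a‖ := by
      constructor
      · simp only [zero_smul, add_zero]
        nlinarith
      · simp only [one_smul]
        have : b + (c - b) - a = c - a := by abel
        rw [this]
        linarith
    obtain ⟨t, ht01, hgt⟩ := intermediate_value_Icc (by norm_num) hcont hmem
    set w := c - b with hw
    set p := b + t • w - a with hp
    have hpn : ‖p‖ = L * r := hgt
    have htpos : 0 < t := by
      rcases lt_or_eq_of_le ht01.1 with h | h
      · exact h
      · exfalso
        rw [← h] at hgt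
        simp only [zero_smul, add_zero] at hgt
        nlinarith [hgt]
    have ht1 : t ≤ 1 := ht01.2
    have hc'C : b + t • w ∈ C := by
      have := hC hbC hcC (by linarith : (0:ℝ) ≤ 1 - t) ht01.1 (by ring)
      have heq : (1 - t) • b + t • c = b + t • w := by rw [hw]; module
      rwa [heq] at this
    have hba' : b - a = p - t • w := by rw [hp]; abel
    have hca' : c - a = p + (1 - t) • w := by rw [hp, hw]; module
    -- (i)
    have hi : L ^ 2 * r ^ 2 - 2 * t * ⟪p, w⟫ + t ^ 2 * ‖w‖ ^ 2 ≤ r ^ 2 := by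
      have h1 : ‖p - t • w‖ ≤ r := by rw [← hba']; exact hba
      have h2 : ‖p - t • w‖ ^ 2 ≤ r ^ 2 := by
        nlinarith [norm_nonneg (p - t • w)]
      have h3 : ‖p - t • w‖ ^ 2 = ‖p‖ ^ 2 - 2 * ⟪p, t • w⟫ + ‖t • w‖ ^ 2 :=
        norm_sub_sq_real p (t • w)
      rw [real_inner_smul_right, norm_smul, mul_pow, Real.norm_eq_abs,
        abs_of_pos htpos] at h3
      have hpn2 : ‖p‖ ^ 2 = L ^ 2 * r ^ 2 := by rw [hpn]; ring
      linarith [h2, h3, hpn2]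
    -- (ii)
    have hii : L ^ 2 * r ^ 2 + (1 - t) * ⟪p, w⟫ ≤ ‖c - a‖ * (L * r) := by
      have h1 : ⟪c - a, p⟫ ≤ ‖c - a‖ * ‖p‖ := real_inner_le_norm _ _
      have h2 : ⟪c - a, p⟫ = ‖p‖ ^ 2 + (1 - t) * ⟪p, w⟫ := by
        rw [hca', inner_add_left, real_inner_smul_left, real_inner_self_eq_norm_sq,
          real_inner_comm]
      have hpn2 : ‖p‖ ^ 2 = L ^ 2 * r ^ 2 := by rw [hpn]; ring
      rw [h2, hpn2, hpn] at h1
      linarith [h1]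
    -- d bound
    have hd : ‖c - a‖ ≤ L * r + 2 * s := by
      have h : ‖c - a‖ ≤ ‖c + u - a‖ + ‖u‖ := by
        have h' : c - a = (c + u - a) + (-u) := by abel
        rw [h']
        simpa using norm_add_le (c + u - a) (-u)
      linarith
    have hwn : (1 - t) * ‖w‖ ≤ 2 * L * s / σ :=
      nioe_aux L r s t ⟪p, w⟫ ‖w‖ ‖c - a‖ σ hL hrpos hs htpos ht1 (norm_nonneg w)
        hσ hσ2 hi hii hd
    refine ⟨b + t • w, ⟨hc'C, mem_closedBall_iff_norm.mpr (by rw [← hp, hpn])⟩,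
      (c + u) - (b + t • w), ?_, by abel⟩
    rw [mem_closedBall_zero_iff]
    have heq : (c + u) - (b + t • w) = u + (1 - t) • w := by rw [hw]; module
    rw [heq]
    calc ‖u + (1 - t) • w‖ ≤ ‖u‖ + ‖(1 - t) • w‖ := norm_add_le _ _
      _ = ‖u‖ + (1 - t) * ‖w‖ := by
          rw [norm_smul, Real.norm_eq_abs, abs_of_nonneg (by linarith : (0:ℝ) ≤ 1 - t)]
      _ ≤ s + 2 * L * s / σ := by linarith [hus, hwn]
      _ = (1 + 2 * L / σ) * s := by field_simp
end

section
/- Let X be a real inner product (Euclidean) space with dim X ≥ 2 and let β ∈ [0,1). For x,y ∈ X with ‖y‖ < 1 < ‖x‖, let z(x,y) denote the unique point of norm 1 on the segment [x,y], and set ω(x,y) = ‖x − z(x,y)‖/(‖x‖ − 1). Then the modulus of squareness ξ_X(β) := sup{ ω(x,y) : x,y ∈ X, ‖y‖ ≤ β < 1 < ‖x‖ } equals (1 − β²)^{−1/2}. -/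
open Real

section Helpers

variable {X : Type*} [NormedAddCommGroup X] [InnerProductSpace ℝ X]

/-- Upper bound: every element of the set is at most `(√(1-β²))⁻¹`. -/
lemma mos_upper {β : ℝ} (hβ0 : 0 ≤ β) (hβ1 : β < 1)
    {x y z : X} (hy : ‖y‖ ≤ β) (hx : 1 < ‖x‖)
    (hseg : z ∈ segment ℝ x y) (hz : ‖z‖ = 1) :
    ‖x - z‖ / (‖x‖ - 1) ≤ (Real.sqrt (1 - β ^ 2))⁻¹ := by
  have hβ2 : (0:ℝ) < 1 - β ^ 2 := by nlinarith
  set c := Real.sqrt (1 - β ^ 2) with hc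
  have hc0 : 0 < c := Real.sqrt_pos.mpr hβ2
  have hc2 : c ^ 2 = 1 - β ^ 2 := Real.sq_sqrt hβ2.le
  have hc1 : c ≤ 1 := by nlinarith
  obtain ⟨a, b, ha, hb, hab, hz_eq⟩ := hseg
  have ha' : a = 1 - b := by linarith
  set u := x - y with hu
  set n := ‖u‖ with hn
  have hn0 : 0 ≤ n := norm_nonneg u
  set I : ℝ := inner ℝ z u with hI
  have hzx : z = x - b • u := by
    rw [← hz_eq, hu, ha']; module
  have hy_eq : y = z - a • u := by
    rw [hzx, hu, ha']; module
  have ha0 : 0 < a := by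
    rcases lt_or_eq_of_le ha with h | h
    · exact h
    · exfalso
      have hb1 : b = 1 := by linarith
      have : y = z := by rw [← hz_eq, ← h, hb1]; simp
      rw [this, hz] at hy; linarith
  have hy2 : ‖y‖ ^ 2 = 1 - 2 * (a * I) + a ^ 2 * n ^ 2 := by
    rw [hy_eq, norm_sub_sq_real, real_inner_smul_right, hz, norm_smul]
    simp only [Real.norm_eq_abs, mul_pow, sq_abs]
    ring
  have hx2 : ‖x‖ ^ 2 = 1 + 2 * (b * I) + b ^ 2 * n ^ 2 := by
    have hxe : x = z + b • u := by rw [hzx]; abel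
    rw [hxe, norm_add_sq_real, real_inner_smul_right, hz, norm_smul]
    simp only [Real.norm_eq_abs, mul_pow, sq_abs]
    ring
  have hyb : ‖y‖ ^ 2 ≤ β ^ 2 := by nlinarith [norm_nonneg y]
  have hInc : n * c ≤ I := by
    nlinarith [sq_nonneg (a * n - c), mul_pos ha0 hc0]
  have hA : (0:ℝ) ≤ 1 + b * n * c := by positivity
  have h1 : (1 + b * n * c) ^ 2 ≤ ‖x‖ ^ 2 := by
    nlinarith [mul_nonneg hb (sub_nonneg.mpr hInc), sq_nonneg (b * n),
      mul_nonneg (sq_nonneg (b * n)) (sub_nonneg.mpr (by nlinarith : c ^ 2 ≤ 1))]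
  have h2 : 1 + b * n * c ≤ ‖x‖ := by
    have := Real.sqrt_le_sqrt h1
    rwa [Real.sqrt_sq hA, Real.sqrt_sq (norm_nonneg x)] at this
  have hxz : ‖x - z‖ = b * n := by
    have hxzv : x - z = b • u := by rw [hzx]; abel
    rw [hxzv, norm_smul, Real.norm_eq_abs, abs_of_nonneg hb]
  have hx1 : 0 < ‖x‖ - 1 := by linarith
  rw [hxz, div_le_iff₀ hx1]
  have key : b * n * c ≤ ‖x‖ - 1 := by linarith
  have : c⁻¹ * (b * n * c) ≤ c⁻¹ * (‖x‖ - 1) :=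
    mul_le_mul_of_nonneg_left key (inv_nonneg.mpr hc0.le)
  calc b * n = c⁻¹ * (b * n * c) := by field_simp
    _ ≤ c⁻¹ * (‖x‖ - 1) := this

/-- Existence of elements approaching the supremum. -/
lemma mos_exists {β : ℝ} (hβ0 : 0 ≤ β) (hβ1 : β < 1)
    (e₁ e₂ : X) (h1 : ‖e₁‖ = 1) (h2 : ‖e₂‖ = 1)
    (h12 : (inner ℝ e₁ e₂ : ℝ) = 0) (r : ℝ) (hr : 0 < r) :
    ∃ x y z : X, ‖y‖ ≤ β ∧ 1 < ‖x‖ ∧ z ∈ segment ℝ x y ∧ ‖z‖ = 1 ∧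
      2 / (2 * Real.sqrt (1 - β ^ 2) + r) ≤ ‖x - z‖ / (‖x‖ - 1) := by
  have hβ2 : (0:ℝ) < 1 - β ^ 2 := by nlinarith
  set c := Real.sqrt (1 - β ^ 2) with hc
  have hc0 : 0 < c := Real.sqrt_pos.mpr hβ2
  have hc2 : c ^ 2 = 1 - β ^ 2 := Real.sq_sqrt hβ2.le
  have key : ∀ p q : ℝ, ‖p • e₁ + q • e₂‖ ^ 2 = p ^ 2 + q ^ 2 := by
    intro p q
    rw [norm_add_sq_real, real_inner_smul_left, real_inner_smul_right, h12,
      norm_smul, norm_smul, h1, h2]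
    simp only [Real.norm_eq_abs, mul_pow, sq_abs]
    ring
  refine ⟨(1 + r * c) • e₁ + (r * β) • e₂,
    (β ^ 2) • e₁ + (-(β * c)) • e₂, e₁, ?_, ?_, ?_, h1, ?_⟩
  · -- ‖y‖ ≤ β
    have hy2 : ‖(β ^ 2) • e₁ + (-(β * c)) • e₂‖ ^ 2 = β ^ 2 := by
      rw [key]; linear_combination β ^ 2 * hc2
    nlinarith [norm_nonneg ((β ^ 2) • e₁ + (-(β * c)) • e₂)]
  · -- 1 < ‖x‖
    have hx2 : ‖(1 + r * c) • e₁ + (r * β) • e₂‖ ^ 2 = 1 + 2 * r * c + r ^ 2 := by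
      rw [key]; linear_combination r ^ 2 * hc2
    nlinarith [norm_nonneg ((1 + r * c) • e₁ + (r * β) • e₂), hr, hc0]
  · -- segment membership
    have hcr : (0:ℝ) < c + r := by linarith
    refine ⟨c / (c + r), r / (c + r), by positivity, by positivity, ?_, ?_⟩
    · field_simp
    · match_scalars
      · field_simp; linear_combination r * hc2
      · field_simp; ring
  · -- the inequality
    set x := (1 + r * c) • e₁ + (r * β) • e₂ with hxdef
    have hx2 : ‖x‖ ^ 2 = 1 + 2 * r * c + r ^ 2 := by
      rw [hxdef, key]; linear_combination r ^ 2 * hc2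
    have hx1 : 1 < ‖x‖ := by nlinarith [norm_nonneg x, hr, hc0]
    have hxz : ‖x - e₁‖ = r := by
      have hv : x - e₁ = (r * c) • e₁ + (r * β) • e₂ := by rw [hxdef]; module
      have : ‖x - e₁‖ ^ 2 = r ^ 2 := by rw [hv, key]; linear_combination r ^ 2 * hc2
      have h' : ‖x - e₁‖ = Real.sqrt (r ^ 2) := by
        rw [← this, Real.sqrt_sq (norm_nonneg _)]
      rw [h', Real.sqrt_sq hr.le]
    have hup : ‖x‖ ≤ 1 + r * c + r ^ 2 / 2 := by
      have h3 : ‖x‖ ^ 2 ≤ (1 + r * c + r ^ 2 / 2) ^ 2 := by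
        nlinarith [sq_nonneg (r * c + r ^ 2 / 2)]
      have := Real.sqrt_le_sqrt h3
      rwa [Real.sqrt_sq (norm_nonneg x), Real.sqrt_sq (by positivity)] at this
    have hd : 0 < ‖x‖ - 1 := by linarith
    rw [hxz, div_le_div_iff₀ (by positivity) hd]
    nlinarith

end Helpers

theorem modulus_of_squareness_euclidean
    {X : Type*} [NormedAddCommGroup X] [InnerProductSpace ℝ X]
    (hdim : 2 ≤ Module.rank ℝ X)
    (β : ℝ) (hβ0 : 0 ≤ β) (hβ1 : β < 1) :
    sSup {w : ℝ | ∃ x y z : X, ‖y‖ ≤ β ∧ 1 < ‖x‖ ∧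
        z ∈ segment ℝ x y ∧ ‖z‖ = 1 ∧ w = ‖x - z‖ / (‖x‖ - 1)} =
      (1 - β ^ 2) ^ (-(1 / 2) : ℝ) := by
  have hβ2 : (0:ℝ) < 1 - β ^ 2 := by nlinarith
  set c := Real.sqrt (1 - β ^ 2) with hc
  have hc0 : 0 < c := Real.sqrt_pos.mpr hβ2
  have hL : (1 - β ^ 2) ^ (-(1 / 2) : ℝ) = c⁻¹ := by
    rw [Real.rpow_neg hβ2.le, ← Real.sqrt_eq_rpow]
  -- obtain an orthonormal pair
  obtain ⟨f, hf⟩ := exists_linearIndependent_of_le_rank (R := ℝ) (M := X)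
    (n := 2) (by exact_mod_cast hdim)
  letI : WellFoundedLT (Fin 2) := Finite.to_wellFoundedLT
  have he : Orthonormal ℝ (InnerProductSpace.gramSchmidtNormed ℝ f) := InnerProductSpace.gramSchmidtNormed_orthonormal (𝕜 := ℝ) hf
  set e₁ := InnerProductSpace.gramSchmidtNormed ℝ f 0 with he1
  set e₂ := InnerProductSpace.gramSchmidtNormed ℝ f 1 with he2
  have h1 : ‖e₁‖ = 1 := he.1 0
  have h2 : ‖e₂‖ = 1 := he.1 1
  have h12 : (inner ℝ e₁ e₂ : ℝ) = 0 := he.2 (by decide : (0 : Fin 2) ≠ 1)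
  rw [hL]
  apply csSup_eq_of_forall_le_of_forall_lt_exists_gt
  · -- nonempty
    obtain ⟨x, y, z, hy, hx, hseg, hz, -⟩ :=
      mos_exists hβ0 hβ1 e₁ e₂ h1 h2 h12 1 one_pos
    exact ⟨_, x, y, z, hy, hx, hseg, hz, rfl⟩
  · rintro w ⟨x, y, z, hy, hx, hseg, hz, rfl⟩
    exact mos_upper hβ0 hβ1 hy hx hseg hz
  · intro w hw
    set w' : ℝ := max w (c⁻¹ / 2) with hw'def
    have hw'pos : 0 < w' := lt_of_lt_of_le (by positivity) (le_max_right _ _)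
    have hw' : w' < c⁻¹ := max_lt hw (by linarith [inv_pos.mpr hc0])
    have hcw : c * w' < 1 := by
      have := mul_lt_mul_of_pos_left hw' hc0
      rwa [mul_inv_cancel₀ hc0.ne'] at this
    set r : ℝ := 1 / w' - c with hrdef
    have hr : 0 < r := by
      rw [hrdef, sub_pos, lt_div_iff₀ hw'pos]; linarith
    obtain ⟨x, y, z, hy, hx, hseg, hz, hbound⟩ :=
      mos_exists hβ0 hβ1 e₁ e₂ h1 h2 h12 r hr
    refine ⟨_, ⟨x, y, z, hy, hx, hseg, hz, rfl⟩, ?_⟩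
    have h2cr : 2 * c + r = c + 1 / w' := by rw [hrdef]; ring
    have hden : 0 < c + 1 / w' := by positivity
    have hkey : w' < 2 / (2 * c + r) := by
      rw [h2cr, lt_div_iff₀ hden]
      have : w' * (c + 1 / w') = w' * c + 1 := by
        rw [mul_add, mul_one_div, div_self hw'pos.ne']
      rw [this]; linarith [hcw, (mul_comm w' c : w' * c = c * w')]
    calc w ≤ w' := le_max_left _ _
      _ < 2 / (2 * c + r) := hkey
      _ ≤ ‖x - z‖ / (‖x‖ - 1) := hbound
end

section
/- Let X be a two-dimensional real Banach space and let 𝒦 be a collection of nonempty compact convex subsets of X whose total intersection ⋂_{K∈𝒦} K is nonempty. Then for every τ > 0, with B = τ·B_X, one has (⋂_{K∈𝒦} K) + B = ⋂_{K,K'∈𝒦} ((K ∩ K') + B). -/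
open Pointwise Metric

theorem neighborhood_of_total_intersection_two_dim
    {X : Type*} [NormedAddCommGroup X] [NormedSpace ℝ X]
    (hdim : Module.finrank ℝ X = 2)
    (𝒦 : Set (Set X))
    (hne : ∀ K ∈ 𝒦, K.Nonempty)
    (hcp : ∀ K ∈ 𝒦, IsCompact K)
    (hcv : ∀ K ∈ 𝒦, Convex ℝ K)
    (hint : (⋂ K ∈ 𝒦, K).Nonempty)
    (τ : ℝ) (hτ : 0 < τ) :
    (⋂ K ∈ 𝒦, K) + closedBall (0 : X) τ =
      ⋂ K ∈ 𝒦, ⋂ K' ∈ 𝒦, ((K ∩ K') + closedBall (0 : X) τ) := by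
  have hfd : FiniteDimensional ℝ X := .of_finrank_eq_succ hdim
  apply Set.Subset.antisymm
  · rintro x hx
    rw [Set.mem_add] at hx
    obtain ⟨a, ha, b, hb, rfl⟩ := hx
    refine Set.mem_iInter₂.mpr fun K hK => Set.mem_iInter₂.mpr fun K' hK' => ?_
    have haK : a ∈ K := Set.mem_iInter₂.mp ha K hK
    have haK' : a ∈ K' := Set.mem_iInter₂.mp ha K' hK'
    exact Set.add_mem_add ⟨haK, haK'⟩ hb
  · intro x hx
    rcases Set.eq_empty_or_nonempty 𝒦 with h𝒦 | ⟨K₀, hK₀⟩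
    · subst h𝒦
      simp only [Set.mem_empty_iff_false, Set.iInter_of_empty, Set.iInter_univ]
      exact ⟨x, trivial, 0, by simpa using hτ.le, by simp⟩
    obtain ⟨p, hp⟩ := hint
    have hpmem : ∀ K ∈ 𝒦, p ∈ K := fun K hK => Set.mem_iInter₂.mp hp K hK
    -- pairwise hypothesis extracted from hx
    have hpair : ∀ K ∈ 𝒦, ∀ K' ∈ 𝒦, (closedBall x τ ∩ (K ∩ K')).Nonempty := by
      intro K hK K' hK'
      have := Set.mem_iInter₂.mp (Set.mem_iInter₂.mp hx K hK) K' hK'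
      rw [Set.mem_add] at this
      obtain ⟨a, ha, b, hb, hab⟩ := this
      refine ⟨a, ?_, ha⟩
      rw [mem_closedBall, dist_comm, dist_eq_norm, ← hab]
      simpa using hb
    -- triple (with ball) intersections via finite Helly for 4 sets
    have key4 : ∀ A ∈ 𝒦, ∀ B ∈ 𝒦, ∀ C ∈ 𝒦,
        (closedBall x τ ∩ (A ∩ (B ∩ C))).Nonempty := by
      intro A hA B hB C hC
      obtain ⟨q₁, hq₁b, hq₁B, hq₁C⟩ := hpair B hB C hC
      obtain ⟨q₂, hq₂b, hq₂A, hq₂C⟩ := hpair A hA C hC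
      obtain ⟨q₃, hq₃b, hq₃A, hq₃B⟩ := hpair A hA B hB
      have hpA := hpmem A hA
      have hpB := hpmem B hB
      have hpC := hpmem C hC
      set F : Fin 4 → Set X := ![closedBall x τ, A, B, C] with hF
      set pts : Fin 4 → X := ![p, q₁, q₂, q₃] with hpts
      have hkey : ∀ i j : Fin 4, j ≠ i → pts i ∈ F j := by
        intro i j hij
        fin_cases i <;> fin_cases j <;>
          first
            | exact absurd rfl hij
            | simp_all [F, pts]
      have h := Convex.helly_theorem' (𝕜 := ℝ) (F := F) (s := Finset.univ)
        (fun i _ => by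
          fin_cases i <;> simp [F, convex_closedBall, hcv A hA, hcv B hB, hcv C hC])
        (by
          intro J _ hJcard
          rw [hdim] at hJcard
          have : ∃ i : Fin 4, i ∉ J := by
            by_contra hc
            push_neg at hc
            have : Finset.univ ⊆ J := fun i _ => hc i
            have := Finset.card_le_card this
            simp at this
            omega
          obtain ⟨i, hi⟩ := this
          refine ⟨pts i, Set.mem_biInter fun j hj => ?_⟩
          exact hkey i j (fun h => hi (h ▸ hj)))
      obtain ⟨y, hy⟩ := h
      have hy' : ∀ i : Fin 4, y ∈ F i := by
        intro i
        exact Set.mem_iInter₂.mp hy i (Finset.mem_univ i)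
      have h0 := hy' 0
      have h1 := hy' 1
      have h2 := hy' 2
      have h3 := hy' 3
      simp only [F, Matrix.cons_val_zero, Matrix.cons_val_one, Matrix.head_cons,
        Matrix.cons_val_two, Matrix.tail_cons, Matrix.cons_val_three] at h0 h1 h2 h3
      exact ⟨y, h0, h1, h2, h3⟩
    -- main Helly for the whole family together with the ball
    classical
    have key : (⋂ K : 𝒦, (closedBall x τ ∩ (K : Set X))).Nonempty := by
      apply Convex.helly_theorem_compact' (𝕜 := ℝ)
      · exact fun K => (convex_closedBall x τ).inter (hcv K K.2)
      · exact fun K => (isCompact_closedBall x τ).inter_right (hcp K K.2).isClosed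
      · intro I hIcard
        rw [hdim] at hIcard
        have hc : I.card = 0 ∨ I.card = 1 ∨ I.card = 2 ∨ I.card = 3 := by omega
        rcases hc with hc | hc | hc | hc
        · rw [Finset.card_eq_zero] at hc
          subst hc
          simp only [Finset.notMem_empty, Set.iInter_of_empty, Set.iInter_univ]
          exact ⟨0, trivial⟩
        · obtain ⟨a, hI⟩ := Finset.card_eq_one.mp hc
          obtain ⟨y, hyb, hyA, _⟩ := key4 a a.2 a a.2 a a.2
          refine ⟨y, Set.mem_iInter₂.mpr fun K hK => ?_⟩
          rw [hI, Finset.mem_singleton] at hK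
          obtain rfl := hK
          exact ⟨hyb, hyA⟩
        · obtain ⟨a, b, hab, hI⟩ := Finset.card_eq_two.mp hc
          obtain ⟨y, hyb, hyA, hyB, _⟩ := key4 a a.2 b b.2 b b.2
          refine ⟨y, Set.mem_iInter₂.mpr fun K hK => ?_⟩
          rw [hI, Finset.mem_insert, Finset.mem_singleton] at hK
          rcases hK with rfl | rfl
          · exact ⟨hyb, hyA⟩
          · exact ⟨hyb, hyB⟩
        · obtain ⟨a, b, c, hab, hac, hbc, hI⟩ := Finset.card_eq_three.mp hc
          obtain ⟨y, hyb, hyA, hyB, hyC⟩ := key4 a a.2 b b.2 c c.2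
          refine ⟨y, Set.mem_iInter₂.mpr fun K hK => ?_⟩
          rw [hI] at hK
          simp only [Finset.mem_insert, Finset.mem_singleton] at hK
          rcases hK with rfl | rfl | rfl
          · exact ⟨hyb, hyA⟩
          · exact ⟨hyb, hyB⟩
          · exact ⟨hyb, hyC⟩
    obtain ⟨a, ha⟩ := key
    have haK : ∀ K ∈ 𝒦, a ∈ closedBall x τ ∩ K := by
      intro K hK
      exact Set.mem_iInter.mp ha ⟨K, hK⟩
    have haball : a ∈ closedBall x τ := (haK K₀ hK₀).1
    rw [Set.mem_add]
    refine ⟨a, Set.mem_iInter₂.mpr fun K hK => (haK K hK).2, x - a, ?_, by abel⟩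
    rw [mem_closedBall, dist_zero_right]
    rw [mem_closedBall, dist_comm, dist_eq_norm] at haball
    exact haball
end

section
/- Let (M,ρ) be a pseudometric space, X a two-dimensional real Banach space, and F a set-valued mapping assigning to each x ∈ M a nonempty compact convex subset F(x) ⊆ X. Assume that for every subset M' ⊆ M with at most 4 points there is a selection f : M' → X with ‖f(x) − f(y)‖ ≤ ρ(x,y) on M'. Let λ1 ≥ 1. Then for every x ∈ M the first balanced refinement F¹(x) = ⋂_{z∈M} (F(z) + λ1·ρ(x,z)·B_X) is a nonempty convex bounded subset of X. -/
open Pointwise Metric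

theorem first_refinement_nonempty_two_dim
    {M : Type*} (ρ : M → M → ℝ)
    (hρ_refl : ∀ x, ρ x x = 0)
    (hρ_symm : ∀ x y, ρ x y = ρ y x)
    (hρ_tri : ∀ x y z, ρ x z ≤ ρ x y + ρ y z)
    {X : Type*} [NormedAddCommGroup X] [NormedSpace ℝ X]
    (hdim : Module.finrank ℝ X = 2)
    (F : M → Set X)
    (hFne : ∀ x, (F x).Nonempty)
    (hFcp : ∀ x, IsCompact (F x))
    (hFcv : ∀ x, Convex ℝ (F x))
    -- finiteness hypothesis: selections on subsets of at most 4 points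
    (hfin : ∀ M' : Finset M, M'.card ≤ 4 →
      ∃ f : M → X, (∀ x ∈ M', f x ∈ F x) ∧
        ∀ x ∈ M', ∀ y ∈ M', ‖f x - f y‖ ≤ ρ x y)
    (lam1 : ℝ) (hlam1 : 1 ≤ lam1)
    (F1 : M → Set X)
    (hF1 : ∀ x, F1 x = ⋂ z, F z + closedBall (0 : X) (lam1 * ρ x z)) :
    ∀ x, (F1 x).Nonempty ∧ Convex ℝ (F1 x) ∧ Bornology.IsBounded (F1 x) := by
  classical
  have hρ_nonneg : ∀ x z, 0 ≤ ρ x z := by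
    intro x z
    have h0 := hρ_tri x z x
    rw [hρ_refl x, hρ_symm z x] at h0
    linarith
  have hfd : FiniteDimensional ℝ X := FiniteDimensional.of_finrank_eq_succ hdim
  intro x
  set C : M → Set X := fun z => F z + closedBall (0 : X) (lam1 * ρ x z) with hC
  have hrad : ∀ z, 0 ≤ lam1 * ρ x z := fun z =>
    mul_nonneg (le_trans zero_le_one hlam1) (hρ_nonneg x z)
  have hCcp : ∀ z, IsCompact (C z) := fun z =>
    (hFcp z).add (isCompact_closedBall 0 _)
  have hCcv : ∀ z, Convex ℝ (C z) := fun z =>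
    (hFcv z).add (convex_closedBall 0 _)
  have hne : (⋂ z, C z).Nonempty := by
    apply Convex.helly_theorem_compact' hCcv hCcp
    intro I hIcard
    rw [hdim] at hIcard
    obtain ⟨f, hf1, hf2⟩ := hfin (insert x I) (by
      calc (insert x I).card ≤ I.card + 1 := Finset.card_insert_le x I
        _ ≤ 4 := by omega)
    refine ⟨f x, Set.mem_iInter₂.2 fun z hz => ?_⟩
    have hfz : f z ∈ F z := hf1 z (Finset.mem_insert_of_mem hz)
    have hd : ‖f x - f z‖ ≤ lam1 * ρ x z := by
      calc ‖f x - f z‖ ≤ ρ x z := hf2 x (Finset.mem_insert_self x I) z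
            (Finset.mem_insert_of_mem hz)
        _ ≤ lam1 * ρ x z := le_mul_of_one_le_left (hρ_nonneg x z) hlam1
    have : f x = f z + (f x - f z) := by abel
    rw [this]
    exact Set.add_mem_add hfz (by simpa [mem_closedBall, dist_eq_norm] using hd)
  have hsub : F1 x ⊆ C x := by
    rw [hF1 x]; exact Set.iInter_subset _ x
  refine ⟨?_, ?_, ?_⟩
  · rw [hF1 x]; exact hne
  · rw [hF1 x]; exact convex_iInter fun z => hCcv z
  · exact ((hCcp x).isBounded).subset hsub
end

section
/- Let (M,ρ) be a pseudometric space, X a two-dimensional real Banach space, and F a set-valued mapping assigning to each x ∈ M a nonempty compact convex subset F(x) ⊆ X. Assume the finiteness hypothesis: for every subset M' ⊆ M with at most 4 points there is a selection f : M' → X with ‖f(x) − f(y)‖ ≤ ρ(x,y) on M'. Let λ1 ≥ 1 satisfy the Lipschitz extension property: every map g from any subset M' ⊆ M into X with ‖g(x)−g(y)‖ ≤ ρ(x,y) on M' extends to ĝ : M → X with ‖ĝ(x)−ĝ(y)‖ ≤ λ1·ρ(x,y) on M. Let λ2 ≥ 3λ1. Then for every x ∈ M the second balanced refinement F²(x)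 is nonempty. -/
open Pointwise Metric

set_option maxHeartbeats 1000000 in
theorem second_refinement_nonempty_two_dim
    {M : Type*} (ρ : M → M → ℝ)
    (hρ_refl : ∀ x, ρ x x = 0)
    (hρ_symm : ∀ x y, ρ x y = ρ y x)
    (hρ_tri : ∀ x y z, ρ x z ≤ ρ x y + ρ y z)
    {X : Type*} [NormedAddCommGroup X] [NormedSpace ℝ X]
    (hdim : Module.finrank ℝ X = 2)
    (F : M → Set X)
    (hFne : ∀ x, (F x).Nonempty)
    (hFcp : ∀ x, IsCompact (F x))
    (hFcv : ∀ x, Convex ℝ (F x))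
    -- finiteness hypothesis: selections on subsets of at most 4 points
    (hfin : ∀ M' : Finset M, M'.card ≤ 4 →
      ∃ f : M → X, (∀ x ∈ M', f x ∈ F x) ∧
        ∀ x ∈ M', ∀ y ∈ M', ‖f x - f y‖ ≤ ρ x y)
    (lam1 lam2 : ℝ) (hlam1 : 1 ≤ lam1)
    -- Lipschitz extension property of `lam1`
    (hext : ∀ (M' : Set M) (g : M → X),
      (∀ x ∈ M', ∀ y ∈ M', ‖g x - g y‖ ≤ ρ x y) →
      ∃ g' : M → X, (∀ x ∈ M', g' x = g x) ∧ ∀ x y, ‖g' x - g' y‖ ≤ lam1 * ρ x y)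
    (hlam2 : 3 * lam1 ≤ lam2)
    (F1 F2 : M → Set X)
    (hF1 : ∀ x, F1 x = ⋂ z, F z + closedBall (0 : X) (lam1 * ρ x z))
    (hF2 : ∀ x, F2 x = ⋂ z, F1 z + closedBall (0 : X) (lam2 * ρ x z)) :
    ∀ x, (F2 x).Nonempty := by
  classical
  -- basic facts
  have hρ0 : ∀ a b, 0 ≤ ρ a b := by
    intro a b
    have h1 := hρ_tri a b a
    rw [hρ_refl a, hρ_symm b a] at h1
    linarith
  have hl1 : (0:ℝ) < lam1 := by linarith
  haveI : FiniteDimensional ℝ X := FiniteDimensional.of_finrank_eq_succ hdim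
  -- membership helpers for Minkowski sums with balls
  have hmem_add : ∀ (S : Set X) (r : ℝ) (u v : X), u ∈ S → ‖v - u‖ ≤ r →
      v ∈ S + closedBall (0:X) r := by
    intro S r u v hu hr
    have hv : v = u + (v - u) := by abel
    rw [hv]
    exact Set.add_mem_add hu (by simpa [mem_closedBall_zero_iff] using hr)
  have hmem_add' : ∀ (S : Set X) (r : ℝ) (v : X), v ∈ S + closedBall (0:X) r →
      ∃ u ∈ S, ‖v - u‖ ≤ r := by
    intro S r v hv
    obtain ⟨u, hu, w, hw, h⟩ := Set.mem_add.mp hv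
    refine ⟨u, hu, ?_⟩
    rw [mem_closedBall_zero_iff] at hw
    have hvu : v - u = w := by rw [← h]; abel
    rwa [hvu]
  -- the sets F w + ball, basic properties
  have hcpA : ∀ (r : ℝ) (w : M), IsCompact (F w + closedBall (0:X) r) := fun r w =>
    (hFcp w).add (isCompact_closedBall _ _)
  have hcvA : ∀ (r : ℝ) (w : M), Convex ℝ (F w + closedBall (0:X) r) := fun r w =>
    (hFcv w).add (convex_closedBall _ _)
  have hF1sub : ∀ y w, F1 y ⊆ F w + closedBall (0:X) (lam1 * ρ y w) := by
    intro y w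
    rw [hF1 y]
    exact Set.iInter_subset _ w
  have hF1cp : ∀ y, IsCompact (F1 y) := by
    intro y
    refine (hcpA (lam1 * ρ y y) y).of_isClosed_subset ?_ (hF1sub y y)
    rw [hF1 y]
    exact isClosed_iInter fun w => (hcpA _ w).isClosed
  have hF1cv : ∀ y, Convex ℝ (F1 y) := by
    intro y
    rw [hF1 y]
    exact convex_iInter fun w => hcvA _ w
  -- nonemptiness of the first refinement (planar Helly)
  have hF1ne : ∀ y, (F1 y).Nonempty := by
    intro y
    rw [hF1 y]
    apply Convex.helly_theorem_compact' (𝕜 := ℝ) (fun w => hcvA _ w) (fun w => hcpA _ w)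
    intro I hI
    rw [hdim] at hI
    obtain ⟨f, hfF, hflip⟩ := hfin (insert y I) (by
      have := Finset.card_insert_le y I
      omega)
    refine ⟨f y, Set.mem_iInter₂.mpr fun w hw => ?_⟩
    refine hmem_add _ _ (f w) (f y) (hfF w (Finset.mem_insert_of_mem hw)) ?_
    calc ‖f y - f w‖ ≤ ρ y w :=
          hflip y (Finset.mem_insert_self y I) w (Finset.mem_insert_of_mem hw)
      _ ≤ lam1 * ρ y w := by nlinarith [hρ0 y w]
  -- the extension trick
  have hext4 : ∀ W : Finset M, W.card ≤ 4 →
      ∃ g : M → X, (∀ w ∈ W, g w ∈ F w) ∧ ∀ a b : M, ‖g a - g b‖ ≤ lam1 * ρ a b := by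
    intro W hW
    obtain ⟨f, hfF, hflip⟩ := hfin W hW
    have hlipW : ∀ a ∈ (↑W : Set M), ∀ b ∈ (↑W : Set M), ‖f a - f b‖ ≤ ρ a b := by
      intro a ha b hb
      exact hflip a (Finset.mem_coe.mp ha) b (Finset.mem_coe.mp hb)
    obtain ⟨g, hgf, hglip⟩ := hext (↑W) f hlipW
    refine ⟨g, ?_, hglip⟩
    intro w hw
    rw [hgf w (Finset.mem_coe.mpr hw)]
    exact hfF w hw
  -- THE PAIR LEMMA
  have pair : ∀ y y' : M, ∃ a ∈ F1 y, ∃ b ∈ F1 y', ‖a - b‖ ≤ lam1 * ρ y y' := by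
    intro y y'
    set c : ℝ := lam1 * ρ y y' with hc
    set D : Set (X × X) := {p : X × X | ‖p.1 - p.2‖ ≤ c} with hD
    set t : Option M → Set (X × X) := fun o => Option.elim o D (fun w =>
        (F w + closedBall (0:X) (lam1 * ρ y w)) ×ˢ
        (F w + closedBall (0:X) (lam1 * ρ y' w))) with ht
    have hDcv : Convex ℝ D := by
      intro p hp q hq a b ha hb hab
      simp only [hD, Set.mem_setOf_eq] at hp hq ⊢
      have hsplit : (a • p + b • q).1 - (a • p + b • q).2
          = a • (p.1 - p.2) + b • (q.1 - q.2) := by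
        simp only [Prod.fst_add, Prod.snd_add, Prod.smul_fst, Prod.smul_snd]
        module
      rw [hsplit]
      calc ‖a • (p.1 - p.2) + b • (q.1 - q.2)‖
          ≤ ‖a • (p.1 - p.2)‖ + ‖b • (q.1 - q.2)‖ := norm_add_le _ _
        _ = a * ‖p.1 - p.2‖ + b * ‖q.1 - q.2‖ := by
            rw [norm_smul, norm_smul, Real.norm_of_nonneg ha, Real.norm_of_nonneg hb]
        _ ≤ a * c + b * c :=
            add_le_add (mul_le_mul_of_nonneg_left hp ha) (mul_le_mul_of_nonneg_left hq hb)
        _ = c := by rw [← add_mul, hab, one_mul]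
    have hDcl : IsClosed D :=
      isClosed_le ((continuous_fst.sub continuous_snd).norm) continuous_const
    have htcl : ∀ o, IsClosed (t o) := by
      rintro (_ | w)
      · exact hDcl
      · exact ((hcpA _ w).isClosed).prod ((hcpA _ w).isClosed)
    have htcv : ∀ o, Convex ℝ (t o) := by
      rintro (_ | w)
      · exact hDcv
      · exact (hcvA _ w).prod (hcvA _ w)
    have key : ((t (some y)) ∩ ⋂ o, t o).Nonempty := by
      by_contra hempty
      rw [Set.not_nonempty_iff_eq_empty] at hempty
      have hscp : IsCompact (t (some y)) := (hcpA _ y).prod (hcpA _ y)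
      obtain ⟨u, hu⟩ := hscp.elim_finite_subfamily_closed t htcl hempty
      have hne : (⋂ o ∈ insert (some y) u, t o).Nonempty := by
        apply Convex.helly_theorem' (𝕜 := ℝ) (fun o _ => htcv o)
        intro I _ hIcard
        have hfr : Module.finrank ℝ (X × X) = 4 := by
          rw [Module.finrank_prod, hdim]
        rw [hfr] at hIcard
        by_cases hnone : none ∈ I
        · set W : Finset M := (I.erase none).image (fun o => o.getD y) with hW
          have hWcard : W.card ≤ 4 := by
            calc W.card ≤ (I.erase none).card := Finset.card_image_le
              _ = I.card - 1 := Finset.card_erase_of_mem hnone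
              _ ≤ 4 := by omega
          have hmemW : ∀ w : M, some w ∈ I → w ∈ W := by
            intro w hw
            rw [hW, Finset.mem_image]
            exact ⟨some w, Finset.mem_erase.mpr ⟨by simp, hw⟩, rfl⟩
          obtain ⟨g, hgF, hglip⟩ := hext4 W hWcard
          refine ⟨(g y, g y'), Set.mem_iInter₂.mpr ?_⟩
          rintro (_ | w) ho
          · exact hglip y y'
          · have hwW : w ∈ W := hmemW w ho
            exact Set.mem_prod.mpr
              ⟨hmem_add _ _ (g w) (g y) (hgF w hwW) (hglip y w),
               hmem_add _ _ (g w) (g y') (hgF w hwW) (hglip y' w)⟩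
        · obtain ⟨a0, ha0⟩ := hF1ne y
          obtain ⟨b0, hb0⟩ := hF1ne y'
          refine ⟨(a0, b0), Set.mem_iInter₂.mpr ?_⟩
          rintro (_ | w) ho
          · exact absurd ho hnone
          · exact Set.mem_prod.mpr ⟨hF1sub y w ha0, hF1sub y' w hb0⟩
      obtain ⟨p, hp⟩ := hne
      have h1 : p ∈ t (some y) := Set.mem_iInter₂.mp hp (some y) (Finset.mem_insert_self _ _)
      have h2 : p ∈ ⋂ o ∈ u, t o :=
        Set.mem_iInter₂.mpr fun o ho => Set.mem_iInter₂.mp hp o (Finset.mem_insert_of_mem ho)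
      rw [Set.eq_empty_iff_forall_notMem] at hu
      exact hu p ⟨h1, h2⟩
    obtain ⟨p, -, hp⟩ := key
    have hps : ∀ o, p ∈ t o := Set.mem_iInter.mp hp
    refine ⟨p.1, ?_, p.2, ?_, ?_⟩
    · rw [hF1 y]
      exact Set.mem_iInter.mpr fun w => (Set.mem_prod.mp (hps (some w))).1
    · rw [hF1 y']
      exact Set.mem_iInter.mpr fun w => (Set.mem_prod.mp (hps (some w))).2
    · exact hps none
  -- splitting a vector in two pieces
  have split : ∀ (v : X) (r e : ℝ), 0 ≤ r → 0 ≤ e → ‖v‖ ≤ r + e →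
      ∃ v' v'' : X, v = v' + v'' ∧ ‖v'‖ ≤ r ∧ ‖v''‖ ≤ e := by
    intro v r e hr he hv
    by_cases h : ‖v‖ ≤ r
    · exact ⟨v, 0, by abel, h, by simpa using he⟩
    · push_neg at h
      have hvpos : 0 < ‖v‖ := lt_of_le_of_lt hr h
      have hv0 : ‖v‖ ≠ 0 := ne_of_gt hvpos
      have hsc : r/‖v‖ + (1 - r/‖v‖) = 1 := by ring
      have hs1 : r/‖v‖ ≤ 1 := div_le_one_of_le₀ h.le (norm_nonneg v)
      refine ⟨(r / ‖v‖) • v, (1 - r / ‖v‖) • v, by rw [← add_smul, hsc, one_smul], ?_, ?_⟩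
      · rw [norm_smul, Real.norm_of_nonneg (by positivity), div_mul_cancel₀ _ hv0]
      · rw [norm_smul, Real.norm_of_nonneg (by linarith), sub_mul, one_mul,
          div_mul_cancel₀ _ hv0]
        linarith
  intro x
  -- THE TRIPLE CONSTRUCTION (core lemma)
  have tlc : ∀ z1 z2 z3 : M, ρ x z1 ≤ ρ x z2 → ρ x z2 ≤ ρ x z3 →
      ∃ b2 ∈ F1 z2, ∃ b3 ∈ F1 z3, ∀ w : M,
        ∃ q ∈ F w + closedBall (0:X) (lam1 * ρ z1 w),
          ‖q - b2‖ ≤ 3 * (lam1 * ρ x z2) ∧ ‖q - b3‖ ≤ 3 * (lam1 * ρ x z3) := by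
    intro z1 z2 z3 h12 h23
    obtain ⟨b2, hb2, b3, hb3, hb23⟩ := pair z2 z3
    refine ⟨b2, hb2, b3, hb3, ?_⟩
    intro w
    set d1 : ℝ := lam1 * ρ x z1 with hd1
    set d2 : ℝ := lam1 * ρ x z2 with hd2
    set d3 : ℝ := lam1 * ρ x z3 with hd3
    have hd10 : 0 ≤ d1 := mul_nonneg hl1.le (hρ0 x z1)
    have hd20 : 0 ≤ d2 := mul_nonneg hl1.le (hρ0 x z2)
    have hd30 : 0 ≤ d3 := mul_nonneg hl1.le (hρ0 x z3)
    have hd12 : d1 ≤ d2 := mul_le_mul_of_nonneg_left h12 hl1.le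
    have hd23 : d2 ≤ d3 := mul_le_mul_of_nonneg_left h23 hl1.le
    have hz12 : lam1 * ρ z1 z2 ≤ d1 + d2 := by
      have h := mul_le_mul_of_nonneg_left (hρ_tri z1 x z2) hl1.le
      rw [hρ_symm z1 x] at h
      calc lam1 * ρ z1 z2 ≤ lam1 * (ρ x z1 + ρ x z2) := h
        _ = d1 + d2 := by rw [hd1, hd2]; ring
    have hz13 : lam1 * ρ z1 z3 ≤ d1 + d3 := by
      have h := mul_le_mul_of_nonneg_left (hρ_tri z1 x z3) hl1.le
      rw [hρ_symm z1 x] at h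
      calc lam1 * ρ z1 z3 ≤ lam1 * (ρ x z1 + ρ x z3) := h
        _ = d1 + d3 := by rw [hd1, hd3]; ring
    have hz23 : lam1 * ρ z2 z3 ≤ d2 + d3 := by
      have h := mul_le_mul_of_nonneg_left (hρ_tri z2 x z3) hl1.le
      rw [hρ_symm z2 x] at h
      calc lam1 * ρ z2 z3 ≤ lam1 * (ρ x z2 + ρ x z3) := h
        _ = d2 + d3 := by rw [hd2, hd3]; ring
    -- the interpolation parameter
    set τ : ℝ := if d3 = 0 then 0 else min 1 ((2*d2 - d1) / (2*d3)) with hτ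
    have hτfacts : 0 ≤ τ ∧ τ ≤ 1 ∧ 2*τ*d3 ≤ 2*d2 - d1 ∧ 2*(1-τ)*d2 ≤ 2*d3 - d1 := by
      rw [hτ]
      by_cases h3 : d3 = 0
      · rw [if_pos h3]
        have h20 : d2 = 0 := le_antisymm (h3 ▸ hd23) hd20
        have h10 : d1 = 0 := le_antisymm (h20 ▸ hd12) hd10
        refine ⟨le_refl 0, zero_le_one, ?_, ?_⟩ <;> rw [h3, h20, h10] <;> norm_num
      · rw [if_neg h3]
        have h3p : 0 < d3 := lt_of_le_of_ne hd30 (Ne.symm h3)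
        have h2d3 : (0:ℝ) < 2*d3 := by linarith
        have hnum : 0 ≤ 2*d2 - d1 := by linarith
        have ht0 : 0 ≤ min 1 ((2*d2 - d1)/(2*d3)) := le_min zero_le_one (by positivity)
        refine ⟨ht0, min_le_left _ _, ?_, ?_⟩
        · have hmr := min_le_right 1 ((2*d2 - d1)/(2*d3))
          rw [le_div_iff₀ h2d3] at hmr
          nlinarith [hmr]
        · rcases le_total 1 ((2*d2-d1)/(2*d3)) with hcs | hcs
          · rw [min_eq_left hcs]
            nlinarith
          · rw [min_eq_right hcs]
            rw [← sub_nonneg]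
            have expand : 2*d3 - d1 - 2*(1 - (2*d2 - d1)/(2*d3))*d2
                = (2*(2*d3-d2)*(d3-d2) + 2*(d2-d1)*(d2+d3)) / (2*d3) := by
              field_simp
              ring
            rw [expand]
            refine div_nonneg ?_ h2d3.le
            nlinarith [mul_nonneg (by linarith : (0:ℝ) ≤ 2*d3 - d2) (by linarith : (0:ℝ) ≤ d3 - d2),
              mul_nonneg (by linarith : (0:ℝ) ≤ d2 - d1) (by linarith : (0:ℝ) ≤ d2 + d3)]
    obtain ⟨ht0, ht1, htA, htB⟩ := hτfacts
    -- decompose b2 b3 over F w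
    obtain ⟨c2, hc2, hvc2⟩ := hmem_add' _ _ b2 (hF1sub z2 w hb2)
    obtain ⟨c3, hc3, hvc3⟩ := hmem_add' _ _ b3 (hF1sub z3 w hb3)
    have hrw0 : 0 ≤ lam1 * ρ z1 w := mul_nonneg hl1.le (hρ0 z1 w)
    have he20 : 0 ≤ lam1 * ρ z1 z2 := mul_nonneg hl1.le (hρ0 z1 z2)
    have he30 : 0 ≤ lam1 * ρ z1 z3 := mul_nonneg hl1.le (hρ0 z1 z3)
    have hb2r : ‖b2 - c2‖ ≤ lam1 * ρ z1 w + lam1 * ρ z1 z2 := by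
      refine le_trans hvc2 ?_
      have h := mul_le_mul_of_nonneg_left (hρ_tri z2 z1 w) hl1.le
      rw [hρ_symm z2 z1] at h
      have h2 : lam1 * (ρ z1 z2 + ρ z1 w) = lam1 * ρ z1 w + lam1 * ρ z1 z2 := by ring
      linarith
    have hb3r : ‖b3 - c3‖ ≤ lam1 * ρ z1 w + lam1 * ρ z1 z3 := by
      refine le_trans hvc3 ?_
      have h := mul_le_mul_of_nonneg_left (hρ_tri z3 z1 w) hl1.le
      rw [hρ_symm z3 z1] at h
      have h2 : lam1 * (ρ z1 z3 + ρ z1 w) = lam1 * ρ z1 w + lam1 * ρ z1 z3 := by ring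
      linarith
    obtain ⟨v2', v2'', hv2eq, hv2a, hv2b⟩ := split (b2 - c2) _ _ hrw0 he20 hb2r
    obtain ⟨v3', v3'', hv3eq, hv3a, hv3b⟩ := split (b3 - c3) _ _ hrw0 he30 hb3r
    set q : X := (1-τ) • (c2 + v2') + τ • (c3 + v3') with hq
    have hqmem : q ∈ F w + closedBall (0:X) (lam1 * ρ z1 w) := by
      have h2 : c2 + v2' ∈ F w + closedBall (0:X) (lam1 * ρ z1 w) :=
        Set.add_mem_add hc2 (by rwa [mem_closedBall_zero_iff])
      have h3 : c3 + v3' ∈ F w + closedBall (0:X) (lam1 * ρ z1 w) :=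
        Set.add_mem_add hc3 (by rwa [mem_closedBall_zero_iff])
      rw [hq]
      exact (hcvA _ w) h2 h3 (by linarith) ht0 (by ring)
    have hv2' : v2' = b2 - c2 - v2'' := by rw [hv2eq]; abel
    have hv3' : v3' = b3 - c3 - v3'' := by rw [hv3eq]; abel
    have hid2 : q - b2 = τ • (b3 - b2) - τ • v3'' - (1-τ) • v2'' := by
      rw [hq, hv2', hv3']; module
    have hid3 : q - b3 = (1-τ) • (b2 - b3) - (1-τ) • v2'' - τ • v3'' := by
      rw [hq, hv2', hv3']; module
    have hL : ‖b3 - b2‖ ≤ d2 + d3 := by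
      rw [norm_sub_rev]; exact le_trans hb23 hz23
    have hL' : ‖b2 - b3‖ ≤ d2 + d3 := le_trans hb23 hz23
    have he2d : ‖v2''‖ ≤ d1 + d2 := le_trans hv2b hz12
    have he3d : ‖v3''‖ ≤ d1 + d3 := le_trans hv3b hz13
    have h1τ : (0:ℝ) ≤ 1 - τ := by linarith
    have hn2 : ‖q - b2‖ ≤ τ * (d2+d3) + τ * (d1+d3) + (1-τ) * (d1+d2) := by
      rw [hid2]
      calc ‖τ • (b3 - b2) - τ • v3'' - (1-τ) • v2''‖
          ≤ ‖τ • (b3 - b2) - τ • v3''‖ + ‖(1-τ) • v2''‖ := norm_sub_le _ _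
        _ ≤ ‖τ • (b3 - b2)‖ + ‖τ • v3''‖ + ‖(1-τ) • v2''‖ := by
            linarith [norm_sub_le (τ • (b3 - b2)) (τ • v3'')]
        _ = τ * ‖b3 - b2‖ + τ * ‖v3''‖ + (1-τ) * ‖v2''‖ := by
            rw [norm_smul, norm_smul, norm_smul, Real.norm_of_nonneg ht0,
              Real.norm_of_nonneg h1τ]
        _ ≤ τ * (d2+d3) + τ * (d1+d3) + (1-τ) * (d1+d2) := by
            have g1 := mul_le_mul_of_nonneg_left hL ht0
            have g2 := mul_le_mul_of_nonneg_left he3d ht0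
            have g3 := mul_le_mul_of_nonneg_left he2d h1τ
            linarith
    have hn3 : ‖q - b3‖ ≤ (1-τ) * (d2+d3) + (1-τ) * (d1+d2) + τ * (d1+d3) := by
      rw [hid3]
      calc ‖(1-τ) • (b2 - b3) - (1-τ) • v2'' - τ • v3''‖
          ≤ ‖(1-τ) • (b2 - b3) - (1-τ) • v2''‖ + ‖τ • v3''‖ := norm_sub_le _ _
        _ ≤ ‖(1-τ) • (b2 - b3)‖ + ‖(1-τ) • v2''‖ + ‖τ • v3''‖ := by
            linarith [norm_sub_le ((1-τ) • (b2 - b3)) ((1-τ) • v2'')]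
        _ = (1-τ) * ‖b2 - b3‖ + (1-τ) * ‖v2''‖ + τ * ‖v3''‖ := by
            rw [norm_smul, norm_smul, norm_smul, Real.norm_of_nonneg ht0,
              Real.norm_of_nonneg h1τ]
        _ ≤ (1-τ) * (d2+d3) + (1-τ) * (d1+d2) + τ * (d1+d3) := by
            have g1 := mul_le_mul_of_nonneg_left hL' h1τ
            have g2 := mul_le_mul_of_nonneg_left he2d h1τ
            have g3 := mul_le_mul_of_nonneg_left he3d ht0
            linarith
    refine ⟨q, hqmem, ?_, ?_⟩
    · nlinarith [hn2, htA]
    · nlinarith [hn3, htB]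
  -- the three-set intersection lemma
  have htrip : ∀ z1 z2 z3 : M, ρ x z1 ≤ ρ x z2 → ρ x z2 ≤ ρ x z3 →
      ∃ p : X, p ∈ F1 z1 + closedBall (0:X) (lam2 * ρ x z1) ∧
        p ∈ F1 z2 + closedBall (0:X) (lam2 * ρ x z2) ∧
        p ∈ F1 z3 + closedBall (0:X) (lam2 * ρ x z3) := by
    intro z1 z2 z3 h12 h23
    obtain ⟨b2, hb2, b3, hb3, hw⟩ := tlc z1 z2 z3 h12 h23
    set T : Option (Option M) → Set X := fun o => Option.elim o
        (F1 z2 + closedBall (0:X) (3 * (lam1 * ρ x z2)))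
        (fun o' => Option.elim o' (F1 z3 + closedBall (0:X) (3 * (lam1 * ρ x z3)))
          (fun w => F w + closedBall (0:X) (lam1 * ρ z1 w))) with hT
    have hTcv : ∀ o, Convex ℝ (T o) := by
      rintro (_ | _ | w)
      · exact (hF1cv z2).add (convex_closedBall _ _)
      · exact (hF1cv z3).add (convex_closedBall _ _)
      · exact hcvA _ w
    have hTcp : ∀ o, IsCompact (T o) := by
      rintro (_ | _ | w)
      · exact (hF1cp z2).add (isCompact_closedBall _ _)
      · exact (hF1cp z3).add (isCompact_closedBall _ _)
      · exact hcpA _ w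
    have hz12 : lam1 * ρ z1 z2 ≤ 3*(lam1 * ρ x z2) := by
      have h := mul_le_mul_of_nonneg_left (hρ_tri z1 x z2) hl1.le
      rw [hρ_symm z1 x] at h
      nlinarith [h, mul_le_mul_of_nonneg_left h12 hl1.le, mul_nonneg hl1.le (hρ0 x z1)]
    have hz13 : lam1 * ρ z1 z3 ≤ 3*(lam1 * ρ x z3) := by
      have h := mul_le_mul_of_nonneg_left (hρ_tri z1 x z3) hl1.le
      rw [hρ_symm z1 x] at h
      nlinarith [h, mul_le_mul_of_nonneg_left (le_trans h12 h23) hl1.le,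
        mul_nonneg hl1.le (hρ0 x z1)]
    have hHelly : (⋂ o, T o).Nonempty := by
      apply Convex.helly_theorem_compact' (𝕜 := ℝ) hTcv hTcp
      intro I hI
      rw [hdim] at hI
      by_cases h2 : none ∈ I <;> by_cases h3 : some none ∈ I
      · set W : Finset M := ((I.erase none).erase (some none)).image
            (fun o => (o.getD (some x)).getD x) with hWd
        have hWcard : W.card ≤ 1 := by
          calc W.card ≤ ((I.erase none).erase (some none)).card := Finset.card_image_le
            _ = (I.erase none).card - 1 := Finset.card_erase_of_mem
                (Finset.mem_erase.mpr ⟨by simp, h3⟩)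
            _ = I.card - 1 - 1 := by rw [Finset.card_erase_of_mem h2]
            _ ≤ 1 := by omega
        have hmemW : ∀ w : M, some (some w) ∈ I → w ∈ W := by
          intro w hw
          rw [hWd, Finset.mem_image]
          refine ⟨some (some w), ?_, rfl⟩
          exact Finset.mem_erase.mpr ⟨by simp, Finset.mem_erase.mpr ⟨by simp, hw⟩⟩
        rcases W.eq_empty_or_nonempty with hWe | ⟨w0, hw0⟩
        · obtain ⟨q, hq, hq2, hq3⟩ := hw x
          refine ⟨q, Set.mem_iInter₂.mpr ?_⟩
          rintro (_ | _ | w) hi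
          · exact hmem_add _ _ b2 q hb2 hq2
          · exact hmem_add _ _ b3 q hb3 hq3
          · exact absurd (hmemW w hi) (by rw [hWe]; simp)
        · obtain ⟨q, hq, hq2, hq3⟩ := hw w0
          refine ⟨q, Set.mem_iInter₂.mpr ?_⟩
          rintro (_ | _ | w) hi
          · exact hmem_add _ _ b2 q hb2 hq2
          · exact hmem_add _ _ b3 q hb3 hq3
          · have hww : w = w0 := Finset.card_le_one.mp hWcard w (hmemW w hi) w0 hw0
            rw [hww]; exact hq
      · obtain ⟨a, ha, b, hb, hab⟩ := pair z1 z2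
        refine ⟨a, Set.mem_iInter₂.mpr ?_⟩
        rintro (_ | _ | w) hi
        · exact hmem_add _ _ b a hb (le_trans hab hz12)
        · exact absurd hi h3
        · exact hF1sub z1 w ha
      · obtain ⟨a, ha, b, hb, hab⟩ := pair z1 z3
        refine ⟨a, Set.mem_iInter₂.mpr ?_⟩
        rintro (_ | _ | w) hi
        · exact absurd hi h2
        · exact hmem_add _ _ b a hb (le_trans hab hz13)
        · exact hF1sub z1 w ha
      · obtain ⟨a0, ha0⟩ := hF1ne z1
        refine ⟨a0, Set.mem_iInter₂.mpr ?_⟩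
        rintro (_ | _ | w) hi
        · exact absurd hi h2
        · exact absurd hi h3
        · exact hF1sub z1 w ha0
    obtain ⟨p, hp⟩ := hHelly
    have hps : ∀ o, p ∈ T o := Set.mem_iInter.mp hp
    have hl2ρ : ∀ z : M, 3 * (lam1 * ρ x z) ≤ lam2 * ρ x z := by
      intro z; nlinarith [hρ0 x z]
    refine ⟨p, ?_, ?_, ?_⟩
    · have hpF1 : p ∈ F1 z1 := by
        rw [hF1 z1]
        exact Set.mem_iInter.mpr fun w => hps (some (some w))
      refine hmem_add _ _ p p hpF1 ?_
      simp only [sub_self, norm_zero]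
      exact mul_nonneg (by linarith) (hρ0 x z1)
    · exact Set.add_subset_add_left (closedBall_subset_closedBall (hl2ρ z2)) (hps none)
    · exact Set.add_subset_add_left (closedBall_subset_closedBall (hl2ρ z3)) (hps (some none))
  -- unsorted triples
  have htripAll : ∀ a b c : M,
      ∃ p : X, p ∈ F1 a + closedBall (0:X) (lam2 * ρ x a) ∧
        p ∈ F1 b + closedBall (0:X) (lam2 * ρ x b) ∧
        p ∈ F1 c + closedBall (0:X) (lam2 * ρ x c) := by
    intro a b c
    rcases le_total (ρ x a) (ρ x b) with h1 | h1 <;>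
      rcases le_total (ρ x a) (ρ x c) with h2 | h2 <;>
      rcases le_total (ρ x b) (ρ x c) with h3 | h3
    · obtain ⟨p, u, v, w⟩ := htrip a b c h1 h3; exact ⟨p, u, v, w⟩
    · obtain ⟨p, u, v, w⟩ := htrip a c b h2 h3; exact ⟨p, u, w, v⟩
    · obtain ⟨p, u, v, w⟩ := htrip a b c h1 h3; exact ⟨p, u, v, w⟩
    · obtain ⟨p, u, v, w⟩ := htrip c a b h2 h1; exact ⟨p, v, w, u⟩
    · obtain ⟨p, u, v, w⟩ := htrip b a c h1 h2; exact ⟨p, v, u, w⟩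
    · obtain ⟨p, u, v, w⟩ := htrip b a c h1 h2; exact ⟨p, v, u, w⟩
    · obtain ⟨p, u, v, w⟩ := htrip b c a h3 h2; exact ⟨p, w, u, v⟩
    · obtain ⟨p, u, v, w⟩ := htrip c b a h3 h1; exact ⟨p, w, v, u⟩
  -- final assembly
  rw [hF2 x]
  apply Convex.helly_theorem_compact' (𝕜 := ℝ)
    (fun z => (hF1cv z).add (convex_closedBall _ _))
    (fun z => (hF1cp z).add (isCompact_closedBall _ _))
  intro I hI
  rw [hdim] at hI
  obtain ⟨a, b, c, habc⟩ : ∃ a b c : M, ∀ z ∈ I, z = a ∨ z = b ∨ z = c := by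
    by_cases h0 : I.card = 0
    · exact ⟨x, x, x, fun z hz => absurd hz (by rw [Finset.card_eq_zero.mp h0]; simp)⟩
    · by_cases h1 : I.card = 1
      · obtain ⟨a, ha⟩ := Finset.card_eq_one.mp h1
        refine ⟨a, a, a, fun z hz => ?_⟩
        rw [ha, Finset.mem_singleton] at hz
        tauto
      · by_cases hc2 : I.card = 2
        · obtain ⟨a, b, -, ha⟩ := Finset.card_eq_two.mp hc2
          refine ⟨a, b, b, fun z hz => ?_⟩
          rw [ha] at hz
          simp only [Finset.mem_insert, Finset.mem_singleton] at hz
          tauto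
        · have hc3 : I.card = 3 := by omega
          obtain ⟨a, b, c, -, -, -, ha⟩ := Finset.card_eq_three.mp hc3
          refine ⟨a, b, c, fun z hz => ?_⟩
          rw [ha] at hz
          simp only [Finset.mem_insert, Finset.mem_singleton] at hz
          tauto
  obtain ⟨p, hpa, hpb, hpc⟩ := htripAll a b c
  refine ⟨p, Set.mem_iInter₂.mpr fun z hz => ?_⟩
  rcases habc z hz with rfl | rfl | rfl
  exacts [hpa, hpb, hpc]
end

section
/- Let X be a real Banach space and let 𝒦 be a collection of closed convex subsets of X containing a nonempty compact convex set K0 of dimension at most 1 (a point or a closed bounded segment). Suppose the total intersection ⋂_{K∈𝒦} K is nonempty. Then for every r ≥ 0, (⋂_{K∈𝒦} K) + r·B_X = ⋂_{K∈𝒦} ((K ∩ K0) + r·B_X), where B_X is the closed unit ball of X. -/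
open Pointwise Metric

private lemma mem_add_closedBall' {X : Type*} [NormedAddCommGroup X]
    (S : Set X) (r : ℝ) (x : X) :
    x ∈ S + closedBall (0 : X) r ↔ ∃ y ∈ S, dist x y ≤ r := by
  constructor
  · rintro ⟨y, hy, b, hb, rfl⟩
    refine ⟨y, hy, ?_⟩
    rw [mem_closedBall_zero_iff] at hb
    simpa [dist_eq_norm] using hb
  · rintro ⟨y, hy, hd⟩
    refine ⟨y, hy, x - y, ?_, by simp⟩
    rw [mem_closedBall_zero_iff]
    simpa [dist_eq_norm] using hd

private lemma clamp_uIcc (t0 t1 t2 : ℝ) :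
    max (min t1 t2) (min t0 (max t1 t2)) ∈ Set.uIcc t0 t1 ∧
    max (min t1 t2) (min t0 (max t1 t2)) ∈ Set.uIcc t0 t2 ∧
    max (min t1 t2) (min t0 (max t1 t2)) ∈ Set.uIcc t1 t2 := by
  rcases le_total t1 t2 with h12 | h12 <;>
    rcases le_total t0 t1 with h01 | h01 <;>
      rcases le_total t0 t2 with h02 | h02 <;>
        simp only [Set.mem_uIcc, min_def, max_def] <;>
          split_ifs <;>
            refine ⟨?_, ?_, ?_⟩ <;>
              first
                | (left; constructor <;> linarith)
                | (right; constructor <;> linarith)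

theorem neighborhood_of_total_intersection_one_dim
    {X : Type*} [NormedAddCommGroup X] [NormedSpace ℝ X]
    (𝒦 : Set (Set X)) (K0 : Set X) (hK0mem : K0 ∈ 𝒦)
    (hK0ne : K0.Nonempty) (hK0cp : IsCompact K0) (hK0cv : Convex ℝ K0)
    -- `K0` has dimension at most 1: it lies on a line
    (hK0dim : ∃ a d : X, ∀ y ∈ K0, ∃ t : ℝ, y = a + t • d)
    (hcl : ∀ K ∈ 𝒦, IsClosed K) (hcv : ∀ K ∈ 𝒦, Convex ℝ K)
    (hint : (⋂ K ∈ 𝒦, K).Nonempty)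
    (r : ℝ) (hr : 0 ≤ r) :
    (⋂ K ∈ 𝒦, K) + closedBall (0 : X) r =
      ⋂ K ∈ 𝒦, ((K ∩ K0) + closedBall (0 : X) r) := by
  obtain ⟨z0, hz0⟩ := hint
  simp only [Set.mem_iInter] at hz0
  ext x
  simp only [Set.mem_iInter, mem_add_closedBall', Set.mem_inter_iff]
  constructor
  · rintro ⟨y, hy, hdxy⟩ K hK
    exact ⟨y, ⟨hy K hK, hy K0 hK0mem⟩, hdxy⟩
  · intro h
    obtain ⟨a, d, hline⟩ := hK0dim
    by_cases hd0 : d = 0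
    · subst hd0
      have haK : ∀ K ∈ 𝒦, ∀ y ∈ K0, y = a := by
        intro K hK y hy
        obtain ⟨t, ht⟩ := hline y hy
        simpa using ht
      obtain ⟨y, ⟨hyK0, hy0⟩, hdxy⟩ := h K0 hK0mem
      have hya := haK K0 hK0mem y hy0
      refine ⟨a, fun K hK => ?_, hya ▸ hdxy⟩
      obtain ⟨y', ⟨hy'K, hy'0⟩, _⟩ := h K hK
      have := haK K hK y' hy'0
      rwa [this] at hy'K
    · -- parametrize the line
      set L : ℝ →ᵃ[ℝ] X := AffineMap.lineMap a (a + d) with hLdef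
      have hL : ∀ t : ℝ, L t = a + t • d := by
        intro t; simp [hLdef, AffineMap.lineMap_apply, add_comm]
      set T : Set X → Set ℝ := fun K => L ⁻¹' (K ∩ (K0 ∩ closedBall x r)) with hTdef
      have hTmem : ∀ K t, t ∈ T K ↔ a + t • d ∈ K ∧ a + t • d ∈ K0 ∧ dist x (a + t • d) ≤ r := by
        intro K t
        simp [hTdef, Set.mem_preimage, hL t, mem_closedBall, dist_comm]
      have hTne : ∀ K ∈ 𝒦, (T K).Nonempty := by
        intro K hK
        obtain ⟨y, ⟨hyK, hy0⟩, hdxy⟩ := h K hK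
        obtain ⟨t, rfl⟩ := hline y hy0
        exact ⟨t, (hTmem K t).2 ⟨hyK, hy0, hdxy⟩⟩
      have hTcv : ∀ K ∈ 𝒦, Convex ℝ (T K) := by
        intro K hK
        exact Convex.affine_preimage L ((hcv K hK).inter (hK0cv.inter (convex_closedBall x r)))
      have hTcl : ∀ K ∈ 𝒦, IsClosed (T K) := by
        intro K hK
        refine IsClosed.preimage L.continuous_of_finiteDimensional ?_
        exact (hcl K hK).inter (hK0cp.isClosed.inter isClosed_closedBall)
      -- boundedness
      obtain ⟨R, hR⟩ := hK0cp.isBounded.subset_closedBall 0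
      have hTsub : ∀ K, T K ⊆ Set.Icc (-((R + ‖a‖) / ‖d‖)) ((R + ‖a‖) / ‖d‖) := by
        intro K t ht
        rw [hTmem K t] at ht
        have h0 : a + t • d ∈ K0 := ht.2.1
        have hn : ‖a + t • d‖ ≤ R := mem_closedBall_zero_iff.mp (hR h0)
        have hdn : 0 < ‖d‖ := norm_pos_iff.mpr hd0
        have h1 : |t| * ‖d‖ ≤ R + ‖a‖ := by
          have : ‖t • d‖ = ‖(a + t • d) - a‖ := by
            congr 1; abel
          rw [norm_smul, Real.norm_eq_abs] at this
          calc |t| * ‖d‖ = ‖(a + t • d) - a‖ := this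
            _ ≤ ‖a + t • d‖ + ‖a‖ := norm_sub_le _ _
            _ ≤ R + ‖a‖ := by linarith
        have h2 : |t| ≤ (R + ‖a‖) / ‖d‖ := by
          rw [le_div_iff₀ hdn]; exact h1
        exact abs_le.mp h2
      have hTbb : ∀ K, BddBelow (T K) := fun K => (bddBelow_Icc).mono (hTsub K)
      have hTba : ∀ K, BddAbove (T K) := fun K => (bddAbove_Icc).mono (hTsub K)
      have hInfMem : ∀ K ∈ 𝒦, sInf (T K) ∈ T K :=
        fun K hK => (hTcl K hK).csInf_mem (hTne K hK) (hTbb K)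
      have hSupMem : ∀ K ∈ 𝒦, sSup (T K) ∈ T K :=
        fun K hK => (hTcl K hK).csSup_mem (hTne K hK) (hTba K)
      -- pairwise intersections
      obtain ⟨t0, ht0⟩ := hline z0 (hz0 K0 hK0mem)
      have hpair : ∀ K1 ∈ 𝒦, ∀ K2 ∈ 𝒦, ∃ t, t ∈ T K1 ∧ t ∈ T K2 := by
        intro K1 h1 K2 h2
        obtain ⟨t1, ht1⟩ := hTne K1 h1
        obtain ⟨t2, ht2⟩ := hTne K2 h2
        rw [hTmem] at ht1 ht2
        set c := max (min t1 t2) (min t0 (max t1 t2)) with hc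
        obtain ⟨hc1, hc2, hcD⟩ := clamp_uIcc t0 t1 t2
        -- J1, J2, D
        have hJ : ∀ K ∈ 𝒦, Convex ℝ (L ⁻¹' (K ∩ K0)) := fun K hK =>
          Convex.affine_preimage L ((hcv K hK).inter hK0cv)
        have hD : Convex ℝ (L ⁻¹' closedBall x r) :=
          Convex.affine_preimage L (convex_closedBall x r)
        have ht0J : ∀ K ∈ 𝒦, t0 ∈ L ⁻¹' (K ∩ K0) := by
          intro K hK
          simp only [Set.mem_preimage, hL, ← ht0]
          exact ⟨hz0 K hK, hz0 K0 hK0mem⟩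
        have ht1J : t1 ∈ L ⁻¹' (K1 ∩ K0) := by
          simp only [Set.mem_preimage, hL]; exact ⟨ht1.1, ht1.2.1⟩
        have ht2J : t2 ∈ L ⁻¹' (K2 ∩ K0) := by
          simp only [Set.mem_preimage, hL]; exact ⟨ht2.1, ht2.2.1⟩
        have ht1D : t1 ∈ L ⁻¹' closedBall x r := by
          simp only [Set.mem_preimage, hL, mem_closedBall, dist_comm]; exact ht1.2.2
        have ht2D : t2 ∈ L ⁻¹' closedBall x r := by
          simp only [Set.mem_preimage, hL, mem_closedBall, dist_comm]; exact ht2.2.2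
        have hcJ1 : c ∈ L ⁻¹' (K1 ∩ K0) :=
          ((hJ K1 h1).ordConnected.uIcc_subset (ht0J K1 h1) ht1J) hc1
        have hcJ2 : c ∈ L ⁻¹' (K2 ∩ K0) :=
          ((hJ K2 h2).ordConnected.uIcc_subset (ht0J K2 h2) ht2J) hc2
        have hcD' : c ∈ L ⁻¹' closedBall x r :=
          (hD.ordConnected.uIcc_subset ht1D ht2D) hcD
        refine ⟨c, ?_, ?_⟩ <;> rw [hTmem] <;>
          simp only [Set.mem_preimage, hL, Set.mem_inter_iff, mem_closedBall, dist_comm] at hcJ1 hcJ2 hcD' <;>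
          exact ⟨by tauto, by tauto, by tauto⟩
      -- Helly on the line
      set A : Set ℝ := (fun K => sInf (T K)) '' 𝒦 with hA
      have hAne : A.Nonempty := ⟨sInf (T K0), K0, hK0mem, rfl⟩
      have hub : ∀ K ∈ 𝒦, ∀ s ∈ A, s ≤ sSup (T K) := by
        rintro K hK s ⟨K', hK', rfl⟩
        obtain ⟨t, htK', htK⟩ := hpair K' hK' K hK
        exact le_trans (csInf_le (hTbb K') htK') (le_csSup (hTba K) htK)
      have hAbdd : BddAbove A := ⟨sSup (T K0), fun s hs => hub K0 hK0mem s hs⟩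
      set tst := sSup A with htst
      have hmem : ∀ K ∈ 𝒦, tst ∈ T K := by
        intro K hK
        have h1 : sInf (T K) ≤ tst := le_csSup hAbdd ⟨K, hK, rfl⟩
        have h2 : tst ≤ sSup (T K) := csSup_le hAne (hub K hK)
        have := (hTcv K hK).ordConnected.uIcc_subset (hInfMem K hK) (hSupMem K hK)
        exact this (Set.mem_uIcc.mpr (Or.inl ⟨h1, h2⟩))
      refine ⟨a + tst • d, fun K hK => ((hTmem K tst).1 (hmem K hK)).1,
        ((hTmem K0 tst).1 (hmem K0 hK0mem)).2.2⟩
end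

section
/- Let (M,ρ) be a pseudometric space and X a real Banach space with dim X > 1. Let F assign to each x ∈ M a nonempty compact convex subset F(x) ⊆ X of dimension at most 1 (a point or a closed bounded segment). Assume that for every subset M' ⊆ M with at most 4 points there is a selection f : M' → X with ‖f(x) − f(y)‖ ≤ ρ(x,y) on M'. Let λ1 ≥ 1. Then for every x ∈ M the first balanced refinement F¹(x) = ⋂_{z∈M} (F(z) + λ1·ρ(x,z)·B_X) is a nonempty compact convex set of dimension at most 1. -/
open Pointwise Metric

theorem first_refinement_one_dim
    {M : Type*} (ρ : M → M → ℝ)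
    (hρ_refl : ∀ x, ρ x x = 0)
    (hρ_symm : ∀ x y, ρ x y = ρ y x)
    (hρ_tri : ∀ x y z, ρ x z ≤ ρ x y + ρ y z)
    {X : Type*} [NormedAddCommGroup X] [NormedSpace ℝ X] [CompleteSpace X]
    (hdim : 1 < Module.rank ℝ X)
    (F : M → Set X)
    (hFne : ∀ x, (F x).Nonempty)
    (hFcp : ∀ x, IsCompact (F x))
    (hFcv : ∀ x, Convex ℝ (F x))
    -- every set `F x` has dimension at most 1: it lies on a line
    (hFdim : ∀ x, ∃ a d : X, ∀ y ∈ F x, ∃ t : ℝ, y = a + t • d)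
    -- finiteness hypothesis: selections on subsets of at most 4 points
    (hfin : ∀ M' : Finset M, M'.card ≤ 4 →
      ∃ f : M → X, (∀ x ∈ M', f x ∈ F x) ∧
        ∀ x ∈ M', ∀ y ∈ M', ‖f x - f y‖ ≤ ρ x y)
    (lam1 : ℝ) (hlam1 : 1 ≤ lam1)
    (F1 : M → Set X)
    (hF1 : ∀ x, F1 x = ⋂ z, F z + closedBall (0 : X) (lam1 * ρ x z)) :
    ∀ x, (F1 x).Nonempty ∧ IsCompact (F1 x) ∧ Convex ℝ (F1 x) ∧
      ∃ a d : X, ∀ y ∈ F1 x, ∃ t : ℝ, y = a + t • d := by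
  classical
  have hρ_nonneg : ∀ x y, 0 ≤ ρ x y := by
    intro x y
    have h1 := hρ_tri x y x
    have h2 := hρ_refl x
    have h3 := hρ_symm x y
    nlinarith
  intro x
  set S : M → Set X := fun z => F z + closedBall (0 : X) (lam1 * ρ x z) with hSdef
  have hSclosed : ∀ z, IsClosed (S z) :=
    fun z => IsClosed.add_left_of_isCompact Metric.isClosed_closedBall (hFcp z)
  have hSconv : ∀ z, Convex ℝ (S z) :=
    fun z => (hFcv z).add (convex_closedBall _ _)
  -- the z = x term shows F1 x ⊆ F x
  have hsub : F1 x ⊆ F x := by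
    rw [hF1]
    intro y hy
    have h := Set.mem_iInter.mp hy x
    rw [hρ_refl, mul_zero] at h
    obtain ⟨u, hu, v, hv, huv⟩ := Set.mem_add.mp h
    rw [mem_closedBall_zero_iff] at hv
    have hv0 : v = 0 := norm_le_zero_iff.mp hv
    rw [hv0, add_zero] at huv
    rwa [← huv]
  obtain ⟨a, d, hline⟩ := hFdim x
  -- key finite intersection property
  have key : ∀ u : Finset M, (F x ∩ ⋂ z ∈ u, S z).Nonempty := by
    intro u
    rcases u.eq_empty_or_nonempty with rfl | ⟨z₀, hz₀⟩
    · simpa using hFne x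
    set T : M → Set ℝ := fun z => {t : ℝ | a + t • d ∈ F x ∩ S z} with hTdef
    have hTconv : ∀ z, Convex ℝ (T z) := by
      intro z t₁ ht₁ t₂ ht₂ c₁ c₂ hc₁ hc₂ hc
      have h := ((hFcv x).inter (hSconv z)) ht₁ ht₂ hc₁ hc₂ hc
      have hc2 : c₂ = 1 - c₁ := by linarith
      have heq : a + (c₁ • t₁ + c₂ • t₂) • d
          = c₁ • (a + t₁ • d) + c₂ • (a + t₂ • d) := by
        rw [hc2]; simp only [smul_eq_mul]; module
      show a + (c₁ • t₁ + c₂ • t₂) • d ∈ F x ∩ S z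
      rw [heq]
      exact h
    have hhelly : (⋂ z ∈ u, T z).Nonempty := by
      apply Convex.helly_theorem' (𝕜 := ℝ) (fun i _ => hTconv i)
      intro I hI hIcard
      have hIcard' : I.card ≤ 2 := by simpa using hIcard
      obtain ⟨f, hf1, hf2⟩ := hfin (insert x I) (by
        calc (insert x I).card ≤ I.card + 1 := Finset.card_insert_le _ _
        _ ≤ 4 := by omega)
      have hfx : f x ∈ F x := hf1 x (Finset.mem_insert_self _ _)
      obtain ⟨t, ht⟩ := hline (f x) hfx
      refine ⟨t, Set.mem_iInter₂.mpr fun z hz => ?_⟩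
      have hzmem : z ∈ insert x I := Finset.mem_insert_of_mem hz
      refine Set.mem_setOf.mpr ⟨by rw [← ht]; exact hfx, ?_⟩
      rw [← ht]
      refine Set.mem_add.mpr ⟨f z, hf1 z hzmem, f x - f z, ?_, by abel⟩
      rw [mem_closedBall_zero_iff]
      have h1 : ‖f x - f z‖ ≤ ρ x z :=
        hf2 x (Finset.mem_insert_self _ _) z hzmem
      have h2 := hρ_nonneg x z
      nlinarith
    obtain ⟨t, ht⟩ := hhelly
    have ht' := Set.mem_iInter₂.mp ht
    refine ⟨a + t • d, (ht' z₀ hz₀).1, Set.mem_iInter₂.mpr fun z hz => (ht' z hz).2⟩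
  have hne : (F1 x).Nonempty := by
    rw [hF1]
    have h := (hFcp x).inter_iInter_nonempty S hSclosed key
    exact h.mono Set.inter_subset_right
  have hcl : IsClosed (F1 x) := by
    rw [hF1]; exact isClosed_iInter hSclosed
  refine ⟨hne, (hFcp x).of_isClosed_subset hcl hsub, ?_, a, d,
    fun y hy => hline y (hsub hy)⟩
  rw [hF1]
  exact convex_iInter fun z => hSconv z
end

section
/- Let (M,ρ) be a pseudometric space and X a real Banach space with dim X > 1. Let F assign to each x ∈ M a nonempty compact convex subset F(x) ⊆ X of dimension at most 1 (a point or a closed bounded segment). Assume that for every subset M' ⊆ M with at most 4 points there is a selection f : M' → X with ‖f(x) − f(y)‖ ≤ ρ(x,y) on M'. Let λ1 ≥ 1 and λ2 ≥ 3λ1. Then for every x ∈ M the second balanced refinement F²(x) is nonempty. -/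
open Pointwise Metric

set_option linter.unusedSectionVars false
set_option linter.unusedVariables false
set_option maxHeartbeats 4000000

section Auxiliary

variable {X : Type*} [NormedAddCommGroup X] [NormedSpace ℝ X]

lemma mem_add_cball' {S : Set X} {p : X} {r : ℝ} :
    p ∈ S + closedBall (0:X) r ↔ ∃ y ∈ S, ‖p - y‖ ≤ r := by
  constructor
  · rintro ⟨y, hy, b, hb, rfl⟩
    refine ⟨y, hy, ?_⟩
    simpa [dist_eq_norm] using mem_closedBall.1 hb
  · rintro ⟨y, hy, h⟩
    exact ⟨y, hy, p - y, by simpa [dist_eq_norm] using h, add_sub_cancel y p⟩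


lemma lineHelly' {ι : Type*} [Nonempty ι] (S : ι → Set X) (c d : X)
    (hsub : ∀ i, ∀ p ∈ S i, ∃ t : ℝ, p = c + t • d)
    (hcp : ∀ i, IsCompact (S i)) (hcv : ∀ i, Convex ℝ (S i))
    (hpair : ∀ i j, (S i ∩ S j).Nonempty) :
    (⋂ i, S i).Nonempty := by
  by_cases hd : d = 0
  · refine ⟨c, Set.mem_iInter.2 fun i => ?_⟩
    obtain ⟨p, hp, -⟩ := hpair i i
    obtain ⟨t, rfl⟩ := hsub i p hp
    simpa [hd] using hp
  · obtain ⟨g, hg1, hgd⟩ := exists_dual_vector ℝ d (norm_ne_zero_iff.2 hd)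
    set φ : X →L[ℝ] ℝ := ‖d‖⁻¹ • g with hφ
    have hφd : φ d = 1 := by
      simp [hφ, hgd, inv_mul_cancel₀ (norm_ne_zero_iff.2 hd)]
    have key : ∀ i, ∀ p ∈ S i, p = c + (φ (p - c)) • d := by
      intro i p hp
      obtain ⟨t, hpt⟩ := hsub i p hp
      have : φ (p - c) = t := by
        rw [hpt]; simp [hφd]
      rw [this, ← hpt]
    set T : ι → Set ℝ := fun i => (fun p => φ (p - c)) '' S i with hT
    have hTcont : Continuous fun p : X => φ (p - c) := by fun_prop
    have hTne : ∀ i, (T i).Nonempty := by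
      intro i; obtain ⟨p, hp, -⟩ := hpair i i; exact ⟨_, p, hp, rfl⟩
    have hTcp : ∀ i, IsCompact (T i) := fun i => (hcp i).image hTcont
    set l : ι → ℝ := fun i => sInf (T i) with hl
    set u : ι → ℝ := fun i => sSup (T i) with hu
    have hlmem : ∀ i, l i ∈ T i := fun i => (hTcp i).sInf_mem (hTne i)
    have humem : ∀ i, u i ∈ T i := fun i => (hTcp i).sSup_mem (hTne i)
    have hlu : ∀ i j, l i ≤ u j := by
      intro i j
      obtain ⟨p, hpi, hpj⟩ := hpair i j
      have h1 : l i ≤ φ (p - c) := csInf_le (hTcp i).bddBelow ⟨p, hpi, rfl⟩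
      have h2 : φ (p - c) ≤ u j := le_csSup (hTcp j).bddAbove ⟨p, hpj, rfl⟩
      linarith
    have hbdd : BddAbove (Set.range l) := ⟨u (Classical.arbitrary ι), by
      rintro r ⟨i, rfl⟩; exact hlu i _⟩
    set L : ℝ := ⨆ i, l i with hL
    have hLl : ∀ j, l j ≤ L := fun j => le_ciSup hbdd j
    have hLu : ∀ j, L ≤ u j := fun j => ciSup_le fun i => hlu i j
    refine ⟨c + L • d, Set.mem_iInter.2 fun j => ?_⟩
    obtain ⟨p1, hp1, hc1⟩ := hlmem j
    obtain ⟨p2, hp2, hc2⟩ := humem j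
    have hp1' : p1 = c + (l j) • d := by rw [← hc1]; exact key j p1 hp1
    have hp2' : p2 = c + (u j) • d := by rw [← hc2]; exact key j p2 hp2
    rcases eq_or_lt_of_le (hlu j j) with heq | hlt
    · have : L = l j := le_antisymm (heq ▸ hLu j) (hLl j)
      rw [this, ← hp1']; exact hp1
    · set τ : ℝ := (L - l j) / (u j - l j) with hτ
      have hτ0 : 0 ≤ τ := div_nonneg (by linarith [hLl j]) (by linarith)
      have hτ1 : τ ≤ 1 := by
        rw [hτ, div_le_one (by linarith)]
        linarith [hLu j]
      have := hcv j hp1 hp2 (by linarith : (0:ℝ) ≤ 1 - τ) hτ0 (by ring)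
      have heqpt : (1 - τ) • p1 + τ • p2 = c + L • d := by
        rw [hp1', hp2']
        have hmul : τ * (u j - l j) = L - l j := by
          rw [hτ]; exact div_mul_cancel₀ _ (by linarith)
        have : (1 - τ) * l j + τ * u j = L := by linear_combination hmul
        rw [show (1-τ) • (c + l j • d) + τ • (c + u j • d)
            = c + ((1-τ) * l j + τ * u j) • d by module, this]
      rwa [heqpt] at this

lemma coreAux' (a a' : ℝ) (ha : 0 ≤ a) (ha' : 0 ≤ a') (hle : a' ≤ a)
    (hx kx hz kz ez hzp kzp ezp : X)
    (hc1 : kz = hz ∨ ∃ t : ℝ, ez - hz = t • (kz - hz))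
    (hc2 : hzp = kzp ∨ ∃ t : ℝ, ezp - kzp = t • (hzp - kzp))
    (e1 : ‖hx - hz‖ ≤ a) (e2 : ‖kx - kz‖ ≤ a)
    (e3 : ‖hx - hzp‖ ≤ a') (e4 : ‖kx - kzp‖ ≤ a')
    (e5 : ‖hz - hzp‖ ≤ a + a') (e6 : ‖kz - kzp‖ ≤ a + a')
    (e7 : ‖ez - ezp‖ ≤ a + a') :
    ∃ q ∈ segment ℝ hx kx, ∃ y ∈ segment ℝ hz ez, ∃ y' ∈ segment ℝ kzp ezp,
      ‖q - y‖ ≤ 3 * a ∧ ‖q - y'‖ ≤ 3 * a' := by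
  by_cases hdeg2 : hzp = kzp
  · refine ⟨hx, left_mem_segment ℝ _ _, hz, left_mem_segment ℝ _ _, kzp,
      left_mem_segment ℝ _ _, by linarith, ?_⟩
    rw [← hdeg2]; linarith
  by_cases hdeg1 : kz = hz
  · refine ⟨kx, right_mem_segment ℝ _ _, hz, left_mem_segment ℝ _ _, kzp,
      left_mem_segment ℝ _ _, ?_, by linarith⟩
    rw [← hdeg1]; linarith
  -- nondegenerate
  obtain ⟨t, ht⟩ := hc1.resolve_left hdeg1
  obtain ⟨t', ht'⟩ := hc2.resolve_left hdeg2
  have hez : ez = hz + t • (kz - hz) := by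
    have := sub_eq_iff_eq_add.1 ht; rw [this]; abel
  have hezp : ezp = kzp + t' • (hzp - kzp) := by
    have := sub_eq_iff_eq_add.1 ht'; rw [this]; abel
  set D : ℝ := ‖kz - hz‖ with hDdef
  set D' : ℝ := ‖hzp - kzp‖ with hD'def
  have hD : 0 < D := norm_pos_iff.2 (sub_ne_zero.2 hdeg1)
  have hD' : 0 < D' := norm_pos_iff.2 (sub_ne_zero.2 hdeg2)
  set s : ℝ := a + a' with hsdef
  have hs : 0 ≤ s := by positivity
  -- tracking bound: for θ ∈ [0,1]
  have track1 : ∀ θ : ℝ, 0 ≤ θ → θ ≤ 1 →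
      ‖((1-θ) • hx + θ • kx) - ((1-θ) • hz + θ • kz)‖ ≤ a := by
    intro θ h0 h1
    have hid : ((1-θ) • hx + θ • kx) - ((1-θ) • hz + θ • kz)
        = (1-θ) • (hx - hz) + θ • (kx - kz) := by module
    rw [hid]
    calc ‖(1-θ) • (hx - hz) + θ • (kx - kz)‖
        ≤ ‖(1-θ) • (hx - hz)‖ + ‖θ • (kx - kz)‖ := norm_add_le _ _
      _ = (1-θ) * ‖hx - hz‖ + θ * ‖kx - kz‖ := by
          rw [norm_smul, norm_smul, Real.norm_eq_abs, Real.norm_eq_abs,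
            abs_of_nonneg (by linarith), abs_of_nonneg h0]
      _ ≤ (1-θ) * a + θ * a := by
          gcongr <;> linarith
      _ = a := by ring
  have track2 : ∀ θ : ℝ, 0 ≤ θ → θ ≤ 1 →
      ‖((1-θ) • hx + θ • kx) - ((1-θ) • hzp + θ • kzp)‖ ≤ a' := by
    intro θ h0 h1
    have hid : ((1-θ) • hx + θ • kx) - ((1-θ) • hzp + θ • kzp)
        = (1-θ) • (hx - hzp) + θ • (kx - kzp) := by module
    rw [hid]
    calc ‖(1-θ) • (hx - hzp) + θ • (kx - kzp)‖
        ≤ ‖(1-θ) • (hx - hzp)‖ + ‖θ • (kx - kzp)‖ := norm_add_le _ _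
      _ = (1-θ) * ‖hx - hzp‖ + θ * ‖kx - kzp‖ := by
          rw [norm_smul, norm_smul, Real.norm_eq_abs, Real.norm_eq_abs,
            abs_of_nonneg (by linarith), abs_of_nonneg h0]
      _ ≤ (1-θ) * a' + θ * a' := by gcongr <;> linarith
      _ = a' := by ring
  have hsegq : ∀ θ : ℝ, 0 ≤ θ → θ ≤ 1 → ((1-θ) • hx + θ • kx) ∈ segment ℝ hx kx := by
    intro θ h0 h1
    exact ⟨1-θ, θ, by linarith, h0, by ring, rfl⟩
  rcases le_or_gt 0 t' with ht'0 | ht'neg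
  · rcases le_or_gt t' 1 with ht'1 | ht'big
    · -- case 2b : 0 ≤ t' ≤ 1
      set θ : ℝ := 1 - t' with hθdef
      have h0 : 0 ≤ θ := by simp [hθdef]; linarith
      have h1 : θ ≤ 1 := by simp [hθdef]; linarith
      refine ⟨(1-θ) • hx + θ • kx, hsegq θ h0 h1, ez, right_mem_segment ℝ _ _, ezp,
        right_mem_segment ℝ _ _, ?_, ?_⟩
      · have hqe : ‖(1-θ) • hx + θ • kx - ezp‖ ≤ a' := by
          have hid : (1-θ) • hzp + θ • kzp = ezp := by
            rw [hezp, hθdef]; module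
          calc ‖(1-θ) • hx + θ • kx - ezp‖
              = ‖(1-θ) • hx + θ • kx - ((1-θ) • hzp + θ • kzp)‖ := by rw [hid]
            _ ≤ a' := track2 θ h0 h1
        calc ‖(1-θ) • hx + θ • kx - ez‖
            ≤ ‖(1-θ) • hx + θ • kx - ezp‖ + ‖ezp - ez‖ := by
              have := norm_add_le ((1-θ) • hx + θ • kx - ezp) (ezp - ez)
              simpa using this
          _ ≤ a' + s := by
              have : ‖ezp - ez‖ = ‖ez - ezp‖ := norm_sub_rev _ _
              rw [this]; gcongr
          _ ≤ 3 * a := by rw [hsdef]; linarith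
      · have hid : (1-θ) • hzp + θ • kzp = ezp := by
          rw [hezp, hθdef]; module
        calc ‖(1-θ) • hx + θ • kx - ezp‖
            = ‖(1-θ) • hx + θ • kx - ((1-θ) • hzp + θ • kzp)‖ := by rw [hid]
          _ ≤ a' := track2 θ h0 h1
          _ ≤ 3 * a' := by linarith
    · -- case 2a : t' > 1
      refine ⟨hx, left_mem_segment ℝ _ _, hz, left_mem_segment ℝ _ _, hzp, ?_,
        by linarith, by linarith⟩
      -- hzp ∈ segment kzp ezp
      have ht'pos : (0:ℝ) < t' := by linarith
      refine ⟨1 - 1/t', 1/t', by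
        have : 1/t' ≤ 1 := by rw [div_le_one ht'pos]; linarith
        linarith, by positivity, by ring, ?_⟩
      have hinv : (1/t') * t' = 1 := by field_simp
      rw [hezp]
      have hmod : (1 - 1/t') • kzp + (1/t') • (kzp + t' • (hzp - kzp))
          = kzp + ((1/t') * t') • (hzp - kzp) := by module
      rw [hmod, hinv, one_smul]; abel
  · -- case 2c : t' < 0
    set β : ℝ := 1 - t' with hβdef
    have hβ : 1 < β := by rw [hβdef]; linarith
    have hidP1 : β • (kz - kzp) - (ez - ezp) - (β - 1) • (hz - hzp)
        = (β - t) • (kz - hz) := by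
      rw [hez, hezp, hβdef]; module
    have hidP2 : (ez - ezp) - t • (kz - kzp) - (1 - t) • (hz - hzp)
        = (β - t) • (hzp - kzp) := by
      rw [hez, hezp, hβdef]; module
    have P1 : |β - t| * D ≤ 2 * β * s := by
      have h1 : |β - t| * D = ‖β • (kz - kzp) - (ez - ezp) - (β - 1) • (hz - hzp)‖ := by
        rw [hidP1, norm_smul, Real.norm_eq_abs]
      rw [h1]
      calc ‖β • (kz - kzp) - (ez - ezp) - (β - 1) • (hz - hzp)‖
          ≤ ‖β • (kz - kzp)‖ + ‖ez - ezp‖ + ‖(β - 1) • (hz - hzp)‖ := by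
            have t1 := norm_sub_le (β • (kz - kzp) - (ez - ezp)) ((β - 1) • (hz - hzp))
            have t2 := norm_sub_le (β • (kz - kzp)) (ez - ezp)
            linarith
        _ ≤ β * s + s + (β - 1) * s := by
            rw [norm_smul, norm_smul, Real.norm_eq_abs, Real.norm_eq_abs,
              abs_of_nonneg (by linarith : (0:ℝ) ≤ β), abs_of_nonneg (by linarith : (0:ℝ) ≤ β - 1)]
            have u1 := mul_le_mul_of_nonneg_left e6 (by linarith : (0:ℝ) ≤ β)
            have u2 := mul_le_mul_of_nonneg_left e5 (by linarith : (0:ℝ) ≤ β - 1)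
            linarith
        _ = 2 * β * s := by ring
    have P2 : |β - t| * D' ≤ (1 + |t| + |1 - t|) * s := by
      have h1 : |β - t| * D' = ‖(ez - ezp) - t • (kz - kzp) - (1 - t) • (hz - hzp)‖ := by
        rw [hidP2, norm_smul, Real.norm_eq_abs]
      rw [h1]
      calc ‖(ez - ezp) - t • (kz - kzp) - (1 - t) • (hz - hzp)‖
          ≤ ‖ez - ezp‖ + |t| * ‖kz - kzp‖ + |1 - t| * ‖hz - hzp‖ := by
            have t1 := norm_sub_le ((ez-ezp) - t • (kz - kzp)) ((1 - t) • (hz - hzp))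
            have t2 := norm_sub_le (ez - ezp) (t • (kz - kzp))
            rw [norm_smul, Real.norm_eq_abs] at t1 t2
            linarith
        _ ≤ s + |t| * s + |1 - t| * s := by
            have u1 := mul_le_mul_of_nonneg_left e6 (abs_nonneg t)
            have u2 := mul_le_mul_of_nonneg_left e5 (abs_nonneg (1-t))
            linarith
        _ = (1 + |t| + |1 - t|) * s := by ring
    set θs : ℝ := max 0 (1 - 2*a'/D') with hθsdef
    have hθs0 : 0 ≤ θs := le_max_left _ _
    have hθs1 : θs ≤ 1 := by
      apply max_le (by norm_num)
      have : 0 ≤ 2*a'/D' := by positivity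
      linarith
    have hslack : (1 - θs) * D' ≤ 2 * a' := by
      rcases le_or_gt (1 - 2*a'/D') 0 with h | h
      · rw [hθsdef, max_eq_left h]
        have h2 : (1:ℝ) ≤ 2*a'/D' := by linarith
        rw [le_div_iff₀ hD', one_mul] at h2
        linarith
      · rw [hθsdef, max_eq_right h.le]
        have heq : (1 - (1 - 2*a'/D')) * D' = 2*a' := by field_simp; ring
        linarith [heq.le]
    have KEY : θs * D ≤ max (t*D) 0 + 2*a := by
      by_contra hbad
      push_neg at hbad
      have hmaxnn : (0:ℝ) ≤ max (t*D) 0 := le_max_right _ _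
      have hθpos : 0 < θs := by
        rcases lt_or_eq_of_le hθs0 with h | h
        · exact h
        · exfalso
          rw [← h, zero_mul] at hbad
          linarith
      have hmax : θs = 1 - 2*a'/D' := by
        rcases le_or_gt (1 - 2*a'/D') 0 with h | h
        · exfalso
          rw [hθsdef, max_eq_left h] at hθpos
          exact lt_irrefl _ hθpos
        · rw [hθsdef, max_eq_right h.le]
      have hD'a : 2*a' < D' := by
        have h : 0 < 1 - 2*a'/D' := hmax ▸ hθpos
        have h2 : 2*a'/D' < 1 := by linarith
        rw [div_lt_one hD'] at h2
        linarith
      have hBADa : (max (t*D) 0 + 2*a) * D' < D * (D' - 2*a') := by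
        have h1 : θs * D * D' = D * (D' - 2*a') := by
          rw [hmax]; field_simp
        calc (max (t*D) 0 + 2*a) * D' < θs * D * D' :=
              mul_lt_mul_of_pos_right hbad hD'
          _ = D * (D' - 2*a') := h1
      rcases le_or_gt 0 t with htpos | htneg
      · have hmaxt : max (t*D) 0 = t*D := max_eq_left (by positivity)
        rw [hmaxt] at hBADa
        have ht1 : t < 1 := by
          by_contra hcon
          push_neg at hcon
          have : D ≤ t * D := by nlinarith
          nlinarith [mul_nonneg ha' hD.le, mul_nonneg ha hD'.le, mul_pos hD hD']
        have habs : |β - t| = β - t := abs_of_pos (by linarith)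
        have habst : |t| = t := abs_of_nonneg htpos
        have habs1t : |1 - t| = 1 - t := abs_of_nonneg (by linarith)
        rw [habs, habst, habs1t] at P2
        rw [habs] at P1
        -- P2 : (β - t) * D' ≤ (1 + t + (1 - t)) * s = 2*s
        have P2' : (β - t) * D' ≤ 2 * s := by linarith [P2]
        -- T2 : (β-1) * D' * D < 2*a*(D - D')
        have T2 : (β - 1) * (D' * D) < 2*a*(D - D') := by
          have hm := mul_le_mul_of_nonneg_right P2' hD.le
          nlinarith [hBADa, hm]
        have hDD' : D' < D := by
          by_contra hcon
          push_neg at hcon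
          have h1 : 0 < (β - 1) * (D' * D) :=
            mul_pos (by linarith) (mul_pos hD' hD)
          have h2 : 2*a*(D - D') ≤ 0 :=
            mul_nonpos_of_nonneg_of_nonpos (by linarith) (by linarith)
          linarith
        rcases le_or_gt (2*s) D with hD2s | hD2s
        · -- P1 ⇒ D - 2s ≤ t*D ; with BADa ⇒ contradiction
          have hstep : D - 2*s ≤ t*D := by
            have h1 : β*(D - 2*s) ≤ t*D := by nlinarith [P1]
            have h2 : D - 2*s ≤ β*(D - 2*s) := by
              nlinarith [mul_le_mul_of_nonneg_right (show (1:ℝ) ≤ β by linarith)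
                (show (0:ℝ) ≤ D - 2*s by linarith)]
            linarith
          have hmul : (D - 2*s)*D' ≤ t*D*D' := mul_le_mul_of_nonneg_right hstep hD'.le
          have hfin : 2*a'*(D - D') < 0 := by nlinarith [hBADa, hmul, hsdef]
          have hpos : 0 ≤ a' * (D - D') := mul_nonneg ha' (by linarith)
          nlinarith [hfin, hpos]
        · have hD'2s : 2*s < D' := by
            by_contra hcon
            push_neg at hcon
            have p1 : 0 ≤ a' * (2*s - D') := mul_nonneg ha' (by linarith)
            have p2 : 0 ≤ (2*s - D) * (D' - 2*a') :=
              mul_nonneg (by linarith) (by linarith)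
            have p3 : 0 ≤ t*D*D' := mul_nonneg (mul_nonneg htpos hD.le) hD'.le
            nlinarith [hBADa, p1, p2, p3]
          linarith
      · have hmaxt : max (t*D) 0 = 0 := max_eq_right (by nlinarith)
        rw [hmaxt, zero_add] at hBADa
        have habs : |β - t| = β - t := abs_of_pos (by linarith)
        have habst : |t| = -t := abs_of_neg htneg
        have habs1t : |1 - t| = 1 - t := abs_of_nonneg (by linarith)
        rw [habs, habst, habs1t] at P2
        rw [habs] at P1
        -- P2 : (β - t) * D' ≤ (1 - t + (1 - t)) * s = (2 - 2t)*s
        have hD'lt : D' < 2*s := by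
          nlinarith [P2, mul_pos (by linarith : (0:ℝ) < β - 1) hD']
        have hDlt : D < 2*s := by
          nlinarith [P1, mul_pos hD (by linarith : (0:ℝ) < -t),
            mul_pos (by linarith : (0:ℝ) < β) hD]
        have p1 : 0 ≤ a' * (2*s - D') := mul_nonneg ha' (by linarith)
        have p2 : 0 ≤ (2*s - D) * (D' - 2*a') :=
          mul_nonneg (by linarith) (by linarith)
        nlinarith [hBADa, p1, p2]
    -- construct the winning points
    refine ⟨(1-θs) • hx + θs • kx, hsegq θs hθs0 hθs1, ?_⟩
    have hy' : ‖((1-θs) • hx + θs • kx) - kzp‖ ≤ 3 * a' := by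
      have hid : ((1-θs) • hzp + θs • kzp) - kzp = (1-θs) • (hzp - kzp) := by module
      calc ‖((1-θs) • hx + θs • kx) - kzp‖
          ≤ ‖((1-θs) • hx + θs • kx) - ((1-θs) • hzp + θs • kzp)‖
            + ‖((1-θs) • hzp + θs • kzp) - kzp‖ := by
            have := norm_add_le (((1-θs) • hx + θs • kx) - ((1-θs) • hzp + θs • kzp))
              (((1-θs) • hzp + θs • kzp) - kzp)
            simpa using this
        _ ≤ a' + (1-θs) * D' := by
            have h2 : ‖((1-θs) • hzp + θs • kzp) - kzp‖ = (1-θs) * D' := by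
              rw [hid, norm_smul, Real.norm_eq_abs, abs_of_nonneg (by linarith : (0:ℝ) ≤ 1-θs)]
            rw [h2]
            gcongr
            exact track2 θs hθs0 hθs1
        _ ≤ 3 * a' := by linarith [hslack]
    rcases le_or_gt t 0 with htle | htpos
    · -- y = hz
      refine ⟨hz, left_mem_segment ℝ _ _, kzp, left_mem_segment ℝ _ _, ?_, hy'⟩
      have hmaxt : max (t*D) 0 = 0 := max_eq_right (by nlinarith)
      rw [hmaxt, zero_add] at KEY
      have hid : ((1-θs) • hz + θs • kz) - hz = θs • (kz - hz) := by module
      calc ‖((1-θs) • hx + θs • kx) - hz‖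
          ≤ ‖((1-θs) • hx + θs • kx) - ((1-θs) • hz + θs • kz)‖
            + ‖((1-θs) • hz + θs • kz) - hz‖ := by
            have := norm_add_le (((1-θs) • hx + θs • kx) - ((1-θs) • hz + θs • kz))
              (((1-θs) • hz + θs • kz) - hz)
            simpa using this
        _ ≤ a + θs * D := by
            have h2 : ‖((1-θs) • hz + θs • kz) - hz‖ = θs * D := by
              rw [hid, norm_smul, Real.norm_eq_abs, abs_of_nonneg hθs0]
            rw [h2]
            gcongr
            exact track1 θs hθs0 hθs1
        _ ≤ 3 * a := by linarith
    · -- t > 0 : y = (1-τ) hz + τ ez with τ = min (θs/t) 1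
      set τ : ℝ := min (θs/t) 1 with hτdef
      have hτ0 : 0 ≤ τ := le_min (by positivity) (by norm_num)
      have hτ1 : τ ≤ 1 := min_le_right _ _
      refine ⟨(1-τ) • hz + τ • ez, ⟨1-τ, τ, by linarith, hτ0, by ring, rfl⟩,
        kzp, left_mem_segment ℝ _ _, ?_, hy'⟩
      have hmaxt : max (t*D) 0 = t*D := max_eq_left (by positivity)
      rw [hmaxt] at KEY
      have hcoef : 0 ≤ θs - τ*t ∧ (θs - τ*t) * D ≤ 2*a := by
        rcases le_or_gt (θs/t) 1 with h | h
        · have hτeq : τ = θs/t := min_eq_left h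
          have : τ * t = θs := by rw [hτeq]; field_simp
          constructor
          · linarith [this.le]
          · rw [this]
            simp only [sub_self, zero_mul]
            positivity
        · have hτeq : τ = 1 := min_eq_right h.le
          have hts : t < θs := (one_lt_div htpos).1 h
          constructor
          · rw [hτeq]; linarith
          · rw [hτeq, one_mul]
            nlinarith [KEY]
      have hid : ((1-θs) • hz + θs • kz) - ((1-τ) • hz + τ • ez)
          = (θs - τ*t) • (kz - hz) := by
        rw [hez]; module
      calc ‖((1-θs) • hx + θs • kx) - ((1-τ) • hz + τ • ez)‖
          ≤ ‖((1-θs) • hx + θs • kx) - ((1-θs) • hz + θs • kz)‖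
            + ‖((1-θs) • hz + θs • kz) - ((1-τ) • hz + τ • ez)‖ := by
            have := norm_add_le (((1-θs) • hx + θs • kx) - ((1-θs) • hz + θs • kz))
              (((1-θs) • hz + θs • kz) - ((1-τ) • hz + τ • ez))
            simpa using this
        _ ≤ a + 2*a := by
            have h2 : ‖((1-θs) • hz + θs • kz) - ((1-τ) • hz + τ • ez)‖
                = (θs - τ*t) * D := by
              rw [hid, norm_smul, Real.norm_eq_abs, abs_of_nonneg hcoef.1]
            rw [h2]
            linarith [track1 θs hθs0 hθs1, hcoef.2]
        _ = 3 * a := by ring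

lemma core' (a a' : ℝ) (ha : 0 ≤ a) (ha' : 0 ≤ a')
    (hx kx hz kz ez hzp kzp ezp : X)
    (hc1 : kz = hz ∨ ∃ t : ℝ, ez - hz = t • (kz - hz))
    (hc2 : hzp = kzp ∨ ∃ t : ℝ, ezp - kzp = t • (hzp - kzp))
    (e1 : ‖hx - hz‖ ≤ a) (e2 : ‖kx - kz‖ ≤ a)
    (e3 : ‖hx - hzp‖ ≤ a') (e4 : ‖kx - kzp‖ ≤ a')
    (e5 : ‖hz - hzp‖ ≤ a + a') (e6 : ‖kz - kzp‖ ≤ a + a')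
    (e7 : ‖ez - ezp‖ ≤ a + a') :
    ∃ q ∈ segment ℝ hx kx, ∃ y ∈ segment ℝ hz ez, ∃ y' ∈ segment ℝ kzp ezp,
      ‖q - y‖ ≤ 3 * a ∧ ‖q - y'‖ ≤ 3 * a' := by
  rcases le_total a' a with hle | hle
  · exact coreAux' a a' ha ha' hle hx kx hz kz ez hzp kzp ezp hc1 hc2 e1 e2 e3 e4 e5 e6 e7
  · obtain ⟨q, hq, y', hy', y, hy, b2, b1⟩ :=
      coreAux' a' a ha' ha hle kx hx kzp hzp ezp kz hz ez hc2 hc1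
        e4 e3 e2 e1
        (by rw [norm_sub_rev]; linarith [e6]) (by rw [norm_sub_rev]; linarith [e5])
        (by rw [norm_sub_rev]; linarith [e7])
    rw [segment_symm] at hq
    exact ⟨q, hq, y, hy, y', hy', b1, b2⟩

lemma colin3' {c d p1 p2 p3 : X} (h1 : ∃ t:ℝ, p1 = c + t • d) (h2 : ∃ t:ℝ, p2 = c + t • d)
    (h3 : ∃ t:ℝ, p3 = c + t • d) :
    p2 = p1 ∨ ∃ r : ℝ, p3 - p1 = r • (p2 - p1) := by
  obtain ⟨t1, rfl⟩ := h1; obtain ⟨t2, rfl⟩ := h2; obtain ⟨t3, rfl⟩ := h3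
  by_cases h : t2 = t1
  · left; rw [h]
  · right
    refine ⟨(t3 - t1)/(t2 - t1), ?_⟩
    have hne : t2 - t1 ≠ 0 := sub_ne_zero.2 h
    have h4 : (c + t2 • d) - (c + t1 • d) = (t2 - t1) • d := by module
    have h5 : (c + t3 • d) - (c + t1 • d) = (t3 - t1) • d := by module
    rw [h4, h5, smul_smul, div_mul_cancel₀ _ hne]

end Auxiliary

theorem second_refinement_nonempty_one_dim
    {M : Type*} (ρ : M → M → ℝ)
    (hρ_refl : ∀ x, ρ x x = 0)
    (hρ_symm : ∀ x y, ρ x y = ρ y x)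
    (hρ_tri : ∀ x y z, ρ x z ≤ ρ x y + ρ y z)
    {X : Type*} [NormedAddCommGroup X] [NormedSpace ℝ X] [CompleteSpace X]
    (hdim : 1 < Module.rank ℝ X)
    (F : M → Set X)
    (hFne : ∀ x, (F x).Nonempty)
    (hFcp : ∀ x, IsCompact (F x))
    (hFcv : ∀ x, Convex ℝ (F x))
    -- every set `F x` has dimension at most 1: it lies on a line
    (hFdim : ∀ x, ∃ a d : X, ∀ y ∈ F x, ∃ t : ℝ, y = a + t • d)
    -- finiteness hypothesis: selections on subsets of at most 4 points
    (hfin : ∀ M' : Finset M, M'.card ≤ 4 →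
      ∃ f : M → X, (∀ x ∈ M', f x ∈ F x) ∧
        ∀ x ∈ M', ∀ y ∈ M', ‖f x - f y‖ ≤ ρ x y)
    (lam1 lam2 : ℝ) (hlam1 : 1 ≤ lam1) (hlam2 : 3 * lam1 ≤ lam2)
    (F1 F2 : M → Set X)
    (hF1 : ∀ x, F1 x = ⋂ z, F z + closedBall (0 : X) (lam1 * ρ x z))
    (hF2 : ∀ x, F2 x = ⋂ z, F1 z + closedBall (0 : X) (lam2 * ρ x z)) :
    ∀ x, (F2 x).Nonempty := by
  intro x
  classical
  have hρnn : ∀ p q : M, 0 ≤ ρ p q := by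
    intro p q
    have h1 := hρ_tri p q p
    rw [hρ_refl p, hρ_symm q p] at h1
    linarith
  have hsel : ∀ L : List M, L.length ≤ 4 → ∃ f : M → X,
      (∀ m ∈ L, f m ∈ F m) ∧ ∀ m ∈ L, ∀ m' ∈ L, ‖f m - f m'‖ ≤ ρ m m' := by
    intro L hL
    obtain ⟨f, hf1, hf2⟩ := hfin L.toFinset (le_trans L.toFinset_card_le hL)
    exact ⟨f, fun m hm => hf1 m (by simpa using hm),
      fun m hm m' hm' => hf2 m (by simpa using hm) m' (by simpa using hm')⟩
  set Iset : M → M → Set X :=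
    fun z w => F z ∩ (F w + closedBall (0:X) (lam1 * ρ z w)) with hIdef
  have hIsub : ∀ z w, Iset z w ⊆ F z := fun z w => Set.inter_subset_left
  have hIcv : ∀ z w, Convex ℝ (Iset z w) :=
    fun z w => (hFcv z).inter ((hFcv w).add (convex_closedBall _ _))
  have hIcp : ∀ z w, IsCompact (Iset z w) :=
    fun z w => (hFcp z).inter_right
      (IsClosed.add_left_of_isCompact Metric.isClosed_closedBall (hFcp w))
  have hmemI : ∀ z w (p u : X), p ∈ F z → u ∈ F w → ‖p - u‖ ≤ ρ z w → p ∈ Iset z w := by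
    intro z w p u hp hu hpu
    refine ⟨hp, mem_add_cball'.2 ⟨u, hu, le_trans hpu ?_⟩⟩
    nlinarith [hρnn z w]
  have htri : ∀ z z', ρ z z' ≤ ρ x z + ρ x z' := by
    intro z z'
    have h := hρ_tri z x z'
    rw [hρ_symm z x] at h
    linarith
  obtain ⟨cx, dx, hlinex⟩ := hFdim x
  -- Step C : the common point q
  set AS : M × M → Set X :=
    fun p => F x ∩ (Iset p.1 p.2 + closedBall (0:X) (3 * lam1 * ρ x p.1)) with hASdef
  have hq : (⋂ p, AS p).Nonempty := by
    have : Nonempty (M × M) := ⟨(x, x)⟩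
    apply lineHelly' AS cx dx
    · exact fun i p hp => hlinex p hp.1
    · exact fun i => (hFcp x).inter_right
        (IsClosed.add_left_of_isCompact Metric.isClosed_closedBall (hIcp i.1 i.2))
    · exact fun i => (hFcv x).inter ((hIcv i.1 i.2).add (convex_closedBall _ _))
    · rintro ⟨z, w⟩ ⟨z', w'⟩
      obtain ⟨h, hh1, hh2⟩ := hsel [x, z, z', w] (by norm_num)
      obtain ⟨k, hk1, hk2⟩ := hsel [x, z, z', w'] (by norm_num)
      obtain ⟨e, he1, he2⟩ := hsel [z, z', w, w'] (by norm_num)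
      obtain ⟨cz, dz, hlz⟩ := hFdim z
      obtain ⟨cz', dz', hlz'⟩ := hFdim z'
      have hc1 := colin3' (hlz _ (hh1 z (by simp))) (hlz _ (hk1 z (by simp)))
        (hlz _ (he1 z (by simp)))
      have hc2 := colin3' (hlz' _ (hk1 z' (by simp))) (hlz' _ (hh1 z' (by simp)))
        (hlz' _ (he1 z' (by simp)))
      obtain ⟨q, hqseg, y, hyseg, y', hy'seg, b1, b2⟩ :=
        core' (ρ x z) (ρ x z') (hρnn x z) (hρnn x z')
          (h x) (k x) (h z) (k z) (e z) (h z') (k z') (e z')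
          hc1 hc2
          (hh2 x (by simp) z (by simp))
          (hk2 x (by simp) z (by simp))
          (hh2 x (by simp) z' (by simp))
          (hk2 x (by simp) z' (by simp))
          (le_trans (hh2 z (by simp) z' (by simp)) (htri z z'))
          (le_trans (hk2 z (by simp) z' (by simp)) (htri z z'))
          (le_trans (he2 z (by simp) z' (by simp)) (htri z z'))
      have hqFx : q ∈ F x := (hFcv x).segment_subset (hh1 x (by simp)) (hk1 x (by simp)) hqseg
      have hyI : y ∈ Iset z w :=
        (hIcv z w).segment_subset
          (hmemI z w (h z) (h w) (hh1 z (by simp)) (hh1 w (by simp))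
            (hh2 z (by simp) w (by simp)))
          (hmemI z w (e z) (e w) (he1 z (by simp)) (he1 w (by simp))
            (he2 z (by simp) w (by simp)))
          hyseg
      have hy'I : y' ∈ Iset z' w' :=
        (hIcv z' w').segment_subset
          (hmemI z' w' (k z') (k w') (hk1 z' (by simp)) (hk1 w' (by simp))
            (hk2 z' (by simp) w' (by simp)))
          (hmemI z' w' (e z') (e w') (he1 z' (by simp)) (he1 w' (by simp))
            (he2 z' (by simp) w' (by simp)))
          hy'seg
      refine ⟨q, ⟨hqFx, mem_add_cball'.2 ⟨y, hyI, le_trans b1 ?_⟩⟩,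
        hqFx, mem_add_cball'.2 ⟨y', hy'I, le_trans b2 ?_⟩⟩
      · nlinarith [hρnn x z]
      · nlinarith [hρnn x z']
  obtain ⟨q, hqmem⟩ := hq
  have hqAS : ∀ z w : M, q ∈ AS (z, w) := fun z w => Set.mem_iInter.1 hqmem (z, w)
  have hqFx : q ∈ F x := (hqAS x x).1
  -- Step D : for each z a point of F1 z close to q
  have hstepD : ∀ z : M, ∃ y, y ∈ F1 z ∧ ‖q - y‖ ≤ 3 * lam1 * ρ x z := by
    intro z
    obtain ⟨cz, dz, hlz⟩ := hFdim z
    set S2 : Option M → Set X :=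
      fun o => o.elim (F z ∩ closedBall q (3 * lam1 * ρ x z)) (fun w => Iset z w) with hS2def
    have hS2 : (⋂ o, S2 o).Nonempty := by
      apply lineHelly' S2 cz dz
      · rintro (_ | w) p hp
        · exact hlz p hp.1
        · exact hlz p (hIsub z w hp)
      · rintro (_ | w)
        · exact (hFcp z).inter_right Metric.isClosed_closedBall
        · exact hIcp z w
      · rintro (_ | w)
        · exact (hFcv z).inter (convex_closedBall _ _)
        · exact hIcv z w
      · have hcross : ∀ w : M, ∃ p, p ∈ S2 none ∧ p ∈ Iset z w := by
          intro w
          obtain ⟨y, hyI, hb⟩ := mem_add_cball'.1 (hqAS z w).2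
          refine ⟨y, ⟨hIsub z w hyI, ?_⟩, hyI⟩
          rw [mem_closedBall, dist_eq_norm, norm_sub_rev]
          exact hb
        rintro (_ | w) (_ | w')
        · obtain ⟨p, hp, -⟩ := hcross z
          exact ⟨p, hp, hp⟩
        · obtain ⟨p, hp1, hp2⟩ := hcross w'
          exact ⟨p, hp1, hp2⟩
        · obtain ⟨p, hp1, hp2⟩ := hcross w
          exact ⟨p, hp2, hp1⟩
        · obtain ⟨f, hf1, hf2⟩ := hsel [z, w, w'] (by norm_num)
          exact ⟨f z,
            hmemI z w (f z) (f w) (hf1 z (by simp)) (hf1 w (by simp))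
              (hf2 z (by simp) w (by simp)),
            hmemI z w' (f z) (f w') (hf1 z (by simp)) (hf1 w' (by simp))
              (hf2 z (by simp) w' (by simp))⟩
    obtain ⟨y, hy⟩ := hS2
    have hynone := Set.mem_iInter.1 hy none
    have hysome : ∀ w, y ∈ Iset z w := fun w => Set.mem_iInter.1 hy (some w)
    refine ⟨y, ?_, ?_⟩
    · rw [hF1 z]
      exact Set.mem_iInter.2 fun w => (hysome w).2
    · have := hynone.2
      rw [mem_closedBall, dist_eq_norm] at this
      rw [norm_sub_rev]
      exact this
  choose Y hY1 hY2 using hstepD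
  refine ⟨q, ?_⟩
  rw [hF2 x]
  refine Set.mem_iInter.2 fun z => ?_
  refine mem_add_cball'.2 ⟨Y z, hY1 z, le_trans (hY2 z) ?_⟩
  nlinarith [hρnn x z]
end

section
/- Let (M,ρ) be a pseudometric space and let F assign to each x ∈ M a nonempty closed bounded interval F(x) ⊆ ℝ. Suppose that for every x,y ∈ M there exist points g(x) ∈ F(x) and g(y) ∈ F(y) with |g(x) − g(y)| ≤ ρ(x,y). Then for every λ1 ≥ 1 and every x ∈ M, the first balanced refinement F¹(x) = ⋂_{z∈M} (F(z) + λ1·ρ(x,z)·[−1,1]) is nonempty, and d_H(F¹(x), F¹(y)) ≤ λ1·ρ(x,y) for all x,y ∈ M. -/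
open Pointwise Metric

theorem first_refinement_real_line
    {M : Type*} (ρ : M → M → ℝ)
    (hρ_refl : ∀ x, ρ x x = 0)
    (hρ_symm : ∀ x y, ρ x y = ρ y x)
    (hρ_tri : ∀ x y z, ρ x z ≤ ρ x y + ρ y z)
    (F : M → Set ℝ)
    -- each `F x` is a nonempty closed bounded interval
    (hFI : ∀ x, ∃ a b : ℝ, a ≤ b ∧ F x = Set.Icc a b)
    -- two-point selections
    (hsel : ∀ x y, ∃ gx ∈ F x, ∃ gy ∈ F y, |gx - gy| ≤ ρ x y)
    (lam1 : ℝ) (hlam1 : 1 ≤ lam1)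
    (F1 : M → Set ℝ)
    (hF1 : ∀ x, F1 x = ⋂ z, F z + closedBall (0 : ℝ) (lam1 * ρ x z)) :
    (∀ x, (F1 x).Nonempty) ∧ ∀ x y, hausDistB (F1 x) (F1 y) ≤ lam1 * ρ x y := by
  choose a b hab hFe using hFI
  have hρ0 : ∀ x y, 0 ≤ ρ x y := by
    intro x y
    have h := hρ_tri x y x
    rw [hρ_refl, hρ_symm y x] at h
    linarith
  have hlam0 : (0:ℝ) ≤ lam1 := le_trans zero_le_one hlam1
  have hr0 : ∀ x z, 0 ≤ lam1 * ρ x z := fun x z => mul_nonneg hlam0 (hρ0 x z)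
  -- key inequality
  have key : ∀ x z w, a z - b w ≤ lam1 * ρ x z + lam1 * ρ x w := by
    intro x z w
    obtain ⟨gz, hgz, gw, hgw, habs⟩ := hsel z w
    rw [hFe z] at hgz; rw [hFe w] at hgw
    have h1 : ρ z w ≤ ρ x z + ρ x w := by
      have h := hρ_tri z x w
      rw [hρ_symm z x] at h
      linarith
    have h2 : ρ x z + ρ x w ≤ lam1 * ρ x z + lam1 * ρ x w := by
      nlinarith [hρ0 x z, hρ0 x w]
    obtain ⟨h5, h6⟩ := abs_le.mp habs
    obtain ⟨h3, _⟩ := hgz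
    obtain ⟨_, h4⟩ := hgw
    linarith
  set l : M → M → ℝ := fun x z => a z - lam1 * ρ x z with hl
  set u : M → M → ℝ := fun x z => b z + lam1 * ρ x z with hu
  have hlu : ∀ x z w, l x z ≤ u x w := by
    intro x z w
    have := key x z w
    simp only [hl, hu]
    linarith
  have hIcc : ∀ x z, F z + closedBall (0:ℝ) (lam1 * ρ x z) = Set.Icc (l x z) (u x z) := by
    intro x z
    rw [hFe z, Real.closedBall_eq_Icc,
      Set.Icc_add_Icc (hab z) (by linarith [hr0 x z])]
    simp only [hl, hu]
    norm_num
    congr 1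
  set A : M → ℝ := fun x => sSup (Set.range (l x)) with hA
  set B : M → ℝ := fun x => sInf (Set.range (u x)) with hB
  have hbddA : ∀ x, BddAbove (Set.range (l x)) := by
    intro x
    exact ⟨u x x, by rintro _ ⟨z, rfl⟩; exact hlu x z x⟩
  have hbddB : ∀ x, BddBelow (Set.range (u x)) := by
    intro x
    exact ⟨l x x, by rintro _ ⟨z, rfl⟩; exact hlu x x z⟩
  have hmemF1 : ∀ x t, t ∈ F1 x ↔ ∀ z, l x z ≤ t ∧ t ≤ u x z := by
    intro x t
    rw [hF1]
    simp only [Set.mem_iInter, hIcc, Set.mem_Icc]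
  have hAmem : ∀ x, A x ∈ F1 x := by
    intro x
    rw [hmemF1]
    intro z
    constructor
    · exact le_csSup (hbddA x) ⟨z, rfl⟩
    · exact csSup_le ⟨l x x, ⟨x, rfl⟩⟩ (by rintro _ ⟨w, rfl⟩; exact hlu x w z)
  have hAB : ∀ x, A x ≤ B x := by
    intro x
    refine csSup_le ⟨l x x, ⟨x, rfl⟩⟩ ?_
    rintro _ ⟨w, rfl⟩
    exact le_csInf ⟨u x x, ⟨x, rfl⟩⟩ (by rintro _ ⟨z, rfl⟩; exact hlu x w z)
  -- the main inclusion
  have hincl : ∀ x y, F1 x ⊆ F1 y + closedBall (0:ℝ) (lam1 * ρ x y) := by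
    intro x y t ht
    rw [hmemF1] at ht
    set s : ℝ := max (A y) (min t (B y)) with hs
    have hsmem : s ∈ F1 y := by
      rw [hmemF1]
      intro z
      constructor
      · exact le_trans (le_csSup (hbddA y) ⟨z, rfl⟩) (le_max_left _ _)
      · apply max_le
        · refine csSup_le ⟨l y y, ⟨y, rfl⟩⟩ ?_
          rintro _ ⟨w, rfl⟩; exact hlu y w z
        · exact le_trans (min_le_right _ _) (csInf_le (hbddB y) ⟨z, rfl⟩)
    have h1 : A y ≤ t + lam1 * ρ x y := by
      refine csSup_le ⟨l y y, ⟨y, rfl⟩⟩ ?_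
      rintro _ ⟨z, rfl⟩
      have htr : ρ x z ≤ ρ x y + ρ y z := hρ_tri x y z
      have : lam1 * ρ x z ≤ lam1 * ρ x y + lam1 * ρ y z := by nlinarith
      have h2 := (ht z).1
      simp only [hl] at h2 ⊢
      linarith
    have h2 : t - lam1 * ρ x y ≤ B y := by
      refine le_csInf ⟨u y y, ⟨y, rfl⟩⟩ ?_
      rintro _ ⟨z, rfl⟩
      have htr : ρ x z ≤ ρ x y + ρ y z := hρ_tri x y z
      have : lam1 * ρ x z ≤ lam1 * ρ x y + lam1 * ρ y z := by nlinarith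
      have h3 := (ht z).2
      simp only [hu] at h3 ⊢
      linarith
    have hdist : |t - s| ≤ lam1 * ρ x y := by
      have hxy0 := hr0 x y
      rcases le_total t (A y) with h | h
      · have hmin : min t (B y) = t := min_eq_left (le_trans h (hAB y))
        have : s = A y := by rw [hs, hmin, max_eq_left h]
        rw [this, abs_le]
        constructor <;> linarith
      · rcases le_total t (B y) with h' | h'
        · have : s = t := by rw [hs, min_eq_left h', max_eq_right h]
          rw [this]
          simp [hxy0]
        · have : s = B y := by rw [hs, min_eq_right h', max_eq_right (hAB y)]
          rw [this, abs_le]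
          constructor <;> linarith
    rw [Set.mem_add]
    exact ⟨s, hsmem, t - s, by simpa [Real.dist_eq] using hdist, by ring⟩
  refine ⟨fun x => ⟨A x, hAmem x⟩, fun x y => ?_⟩
  unfold hausDistB
  apply le_of_forall_pos_le_add
  intro ε hε
  apply csInf_le
  · exact ⟨0, fun r hr => le_of_lt hr.1⟩
  · refine ⟨by linarith [hr0 x y], ?_, ?_⟩
    · exact (hincl x y).trans (Set.add_subset_add_left
        (closedBall_subset_closedBall (by linarith)))
    · have := hincl y x
      rw [hρ_symm y x] at this
      exact this.trans (Set.add_subset_add_left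
        (closedBall_subset_closedBall (by linarith)))
end

section
/- Equip ℝ² with the sup norm ‖(x1,x2)‖ = max{|x1|, |x2|}, so that the unit ball is the square Q0 = [−1,1]². Let K1, K2 ⊆ ℝ² be nonempty compact convex sets with K1 ∩ K2 ≠ ∅, let τ ≥ 0, and set Q = [−τ,τ]². Then (K1 ∩ K2) + Q = (K1 + Q) ∩ (K2 + Q) ∩ H[(K1 ∩ K2) + Q], where for a nonempty bounded convex closed set S ⊆ ℝ², H[S] = (S + Ox1) ∩ (S + Ox2) is its rectangular hull, Ox1 and Ox2 being the two coordinate axes (the lines {(t,0) : t ∈ ℝ} and {(0,t) : t ∈ ℝ}). -/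
set_option maxHeartbeats 1000000

open Pointwise Metric

private lemma pos_factor' {a b : ℝ} (ha : 0 < a) (h : 0 < a * b) : 0 < b := by
  by_contra hb
  push_neg at hb
  nlinarith

theorem rectangular_hull_intersection_linf
    (K1 K2 : Set (Fin 2 → ℝ))
    (hK1ne : K1.Nonempty) (hK1cp : IsCompact K1) (hK1cv : Convex ℝ K1)
    (hK2ne : K2.Nonempty) (hK2cp : IsCompact K2) (hK2cv : Convex ℝ K2)
    (hint : (K1 ∩ K2).Nonempty)
    (τ : ℝ) (hτ : 0 ≤ τ) :
    (K1 ∩ K2) + closedBall (0 : Fin 2 → ℝ) τ =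
      (K1 + closedBall (0 : Fin 2 → ℝ) τ) ∩
        (K2 + closedBall (0 : Fin 2 → ℝ) τ) ∩
        ((((K1 ∩ K2) + closedBall (0 : Fin 2 → ℝ) τ) + {v : Fin 2 → ℝ | v 1 = 0}) ∩
          (((K1 ∩ K2) + closedBall (0 : Fin 2 → ℝ) τ) + {v : Fin 2 → ℝ | v 0 = 0})) := by
  ext x
  simp only [Set.mem_inter_iff, Set.mem_add, Set.mem_setOf_eq]
  constructor
  · rintro ⟨z, hz, q, hq, rfl⟩
    exact ⟨⟨⟨z, hz.1, q, hq, rfl⟩, ⟨z, hz.2, q, hq, rfl⟩⟩,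
      ⟨z + q, ⟨z, hz, q, hq, rfl⟩, 0, rfl, add_zero _⟩,
      ⟨z + q, ⟨z, hz, q, hq, rfl⟩, 0, rfl, add_zero _⟩⟩
  · rintro ⟨⟨⟨a, ha, qa, hqa, hax⟩, ⟨b, hb, qb, hqb, hbx⟩⟩,
      ⟨p1, ⟨s, hs, qs, hqs, rfl⟩, v1, hv1, hp1x⟩,
      ⟨p2, ⟨t, ht, qt, hqt, rfl⟩, v2, hv2, hp2x⟩⟩
    have habsq : ∀ (q : Fin 2 → ℝ), q ∈ closedBall (0 : Fin 2 → ℝ) τ → ∀ i, |q i| ≤ τ := by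
      intro q hq i
      have h1 := mem_closedBall_zero_iff.mp hq
      have h2 := norm_le_pi_norm q i
      rw [Real.norm_eq_abs] at h2
      linarith
    have ha0 : |a 0 - x 0| ≤ τ := by
      have h := habsq qa hqa 0
      have : a 0 - x 0 = -qa 0 := by rw [← hax]; simp
      rw [this, abs_neg]; exact h
    have ha1 : |a 1 - x 1| ≤ τ := by
      have h := habsq qa hqa 1
      have : a 1 - x 1 = -qa 1 := by rw [← hax]; simp
      rw [this, abs_neg]; exact h
    have hb0 : |b 0 - x 0| ≤ τ := by
      have h := habsq qb hqb 0
      have : b 0 - x 0 = -qb 0 := by rw [← hbx]; simp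
      rw [this, abs_neg]; exact h
    have hb1 : |b 1 - x 1| ≤ τ := by
      have h := habsq qb hqb 1
      have : b 1 - x 1 = -qb 1 := by rw [← hbx]; simp
      rw [this, abs_neg]; exact h
    have hs1 : |s 1 - x 1| ≤ τ := by
      have h := habsq qs hqs 1
      have : s 1 - x 1 = -(qs 1) := by
        rw [← hp1x]
        have : v1 1 = 0 := hv1
        simp [this]
      rw [this, abs_neg]; exact h
    have ht0 : |t 0 - x 0| ≤ τ := by
      have h := habsq qt hqt 0
      have : t 0 - x 0 = -(qt 0) := by
        rw [← hp2x]
        have : v2 0 = 0 := hv2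
        simp [this]
      rw [this, abs_neg]; exact h
    by_contra hcon
    -- disjointness of the ball around x and K1 ∩ K2
    have hdisj : Disjoint (closedBall x τ) (K1 ∩ K2) := by
      rw [Set.disjoint_left]
      intro z hzB hzS
      refine hcon ⟨z, hzS, x - z, ?_, by abel⟩
      rw [mem_closedBall_zero_iff]
      have hd : dist z x ≤ τ := mem_closedBall.mp hzB
      rw [dist_eq_norm] at hd
      rwa [show x - z = -(z - x) by abel, norm_neg]
    have hScp : IsCompact (K1 ∩ K2) := hK1cp.inter_right hK2cp.isClosed
    have hScv : Convex ℝ (K1 ∩ K2) := hK1cv.inter hK2cv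
    obtain ⟨f, u, v, hfu, huv, hvf⟩ :=
      geometric_hahn_banach_compact_closed (convex_closedBall x τ) (isCompact_closedBall x τ)
        hScv hScp.isClosed hdisj
    set α := f (Pi.single (0 : Fin 2) (1 : ℝ)) with hαdef
    set β := f (Pi.single (1 : Fin 2) (1 : ℝ)) with hβdef
    have frep : ∀ y : Fin 2 → ℝ, f y = y 0 * α + y 1 * β := by
      intro y
      have hy : y = y 0 • (Pi.single (0 : Fin 2) (1 : ℝ) : Fin 2 → ℝ)
          + y 1 • (Pi.single (1 : Fin 2) (1 : ℝ) : Fin 2 → ℝ) := by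
        funext i
        fin_cases i <;> simp
      conv_lhs => rw [hy]
      rw [map_add, map_smul, map_smul]
      simp [smul_eq_mul, hαdef, hβdef]
    clear_value α β
    have hball : ∀ y : Fin 2 → ℝ, |y 0 - x 0| ≤ τ → |y 1 - x 1| ≤ τ →
        y 0 * α + y 1 * β < u := by
      intro y h0 h1
      have hmem : y ∈ closedBall x τ := by
        rw [mem_closedBall_iff_norm]
        rw [pi_norm_le_iff_of_nonneg hτ]
        intro i
        fin_cases i
        · simpa [Real.norm_eq_abs] using h0
        · simpa [Real.norm_eq_abs] using h1
      have := hfu y hmem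
      rwa [frep] at this
    have hfs : v < s 0 * α + s 1 * β := by have := hvf s hs; rwa [frep] at this
    have hft : v < t 0 * α + t 1 * β := by have := hvf t ht; rwa [frep] at this
    set sa : ℝ := if 0 ≤ α then 1 else -1 with hsadef
    set sb : ℝ := if 0 ≤ β then 1 else -1 with hsbdef
    have hsaα : sa * α = |α| := by
      rcases le_or_gt 0 α with h | h
      · simp [hsadef, h, abs_of_nonneg h]
      · simp [hsadef, not_le.mpr h, abs_of_neg h]
    have hsbβ : sb * β = |β| := by
      rcases le_or_gt 0 β with h | h
      · simp [hsbdef, h, abs_of_nonneg h]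
      · simp [hsbdef, not_le.mpr h, abs_of_neg h]
    have hsa2 : sa * sa = 1 := by
      rcases le_or_gt 0 α with h | h
      · simp [hsadef, h]
      · simp [hsadef, not_le.mpr h]
    have hsb2 : sb * sb = 1 := by
      rcases le_or_gt 0 β with h | h
      · simp [hsbdef, h]
      · simp [hsbdef, not_le.mpr h]
    have hsa1 : |sa| = 1 := by
      rcases le_or_gt 0 α with h | h
      · simp [hsadef, h]
      · simp [hsadef, not_le.mpr h]
    have hsb1 : |sb| = 1 := by
      rcases le_or_gt 0 β with h | h
      · simp [hsbdef, h]
      · simp [hsbdef, not_le.mpr h]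
    clear_value sa sb
    -- corner estimates
    have hcorner : ∀ (y0 y1 : ℝ), |y0 - x 0| ≤ τ → |y1 - x 1| ≤ τ → y0 * α + y1 * β < u := by
      intro y0 y1 h0 h1
      have h := hball ![y0, y1] (by simpa using h0) (by simpa using h1)
      simpa using h
    have hshift : ∀ s0 : ℝ, |s0| = 1 → |(x 0 + τ * s0) - x 0| ≤ τ ∧ |(x 1 + τ * s0) - x 1| ≤ τ := by
      intro s0 h
      constructor <;>
      · rw [add_sub_cancel_left, abs_mul, h, mul_one, abs_of_nonneg hτ]
    have hxx0 : |x 0 - x 0| ≤ τ := by simpa using hτ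
    have hxx1 : |x 1 - x 1| ≤ τ := by simpa using hτ
    have hA : x 0 * α + x 1 * β + τ * |β| < u := by
      have h := hcorner (x 0) (x 1 + τ * sb) hxx0 (hshift sb hsb1).2
      have hexp : (x 1 + τ * sb) * β = x 1 * β + τ * (sb * β) := by ring
      rw [hexp, hsbβ] at h
      linarith
    have hB : x 0 * α + x 1 * β + τ * |α| < u := by
      have h := hcorner (x 0 + τ * sa) (x 1) (hshift sa hsa1).1 hxx1
      have hexp : (x 0 + τ * sa) * α = x 0 * α + τ * (sa * α) := by ring
      rw [hexp, hsaα] at h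
      linarith
    have hC : x 0 * α + x 1 * β + τ * |α| + τ * |β| < u := by
      have h := hcorner (x 0 + τ * sa) (x 1 + τ * sb) (hshift sa hsa1).1 (hshift sb hsb1).2
      have hexp : (x 0 + τ * sa) * α + (x 1 + τ * sb) * β
          = x 0 * α + x 1 * β + τ * (sa * α) + τ * (sb * β) := by ring
      rw [hexp, hsaα, hsbβ] at h
      linarith
    -- α and β are nonzero
    have hα : α ≠ 0 := by
      intro h0
      rw [h0] at hfs hA
      simp only [mul_zero, zero_add] at hfs hA
      have h1 : β * (s 1 - x 1) ≤ |β| * τ := by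
        calc β * (s 1 - x 1) ≤ |β * (s 1 - x 1)| := le_abs_self _
          _ = |β| * |s 1 - x 1| := abs_mul _ _
          _ ≤ |β| * τ := mul_le_mul_of_nonneg_left hs1 (abs_nonneg β)
      have hr : β * (s 1 - x 1) = s 1 * β - x 1 * β := by ring
      linarith
    have hβ : β ≠ 0 := by
      intro h0
      rw [h0] at hft hB
      simp only [mul_zero, add_zero] at hft hB
      have h1 : α * (t 0 - x 0) ≤ |α| * τ := by
        calc α * (t 0 - x 0) ≤ |α * (t 0 - x 0)| := le_abs_self _
          _ = |α| * |t 0 - x 0| := abs_mul _ _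
          _ ≤ |α| * τ := mul_le_mul_of_nonneg_left ht0 (abs_nonneg α)
      have hr : α * (t 0 - x 0) = t 0 * α - x 0 * α := by ring
      linarith
    have hαpos : 0 < |α| := abs_pos.mpr hα
    have hβpos : 0 < |β| := abs_pos.mpr hβ
    -- the distinguished point d
    obtain ⟨μ, hμpos, hμeq⟩ :
        ∃ μ : ℝ, 0 < μ ∧ x 0 * α + x 1 * β + (τ + μ) * (|α| + |β|) = v := by
      have hcpos : (0:ℝ) < |α| + |β| := by linarith
      refine ⟨(v - (x 0 * α + x 1 * β)) / (|α| + |β|) - τ, ?_, ?_⟩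
      · rw [sub_pos, lt_div_iff₀ hcpos]
        have hexp : τ * (|α| + |β|) = τ * |α| + τ * |β| := by ring
        linarith
      · rw [show τ + ((v - (x 0 * α + x 1 * β)) / (|α| + |β|) - τ)
            = (v - (x 0 * α + x 1 * β)) / (|α| + |β|) from by ring,
          div_mul_cancel₀ _ hcpos.ne']
        ring
    set d : Fin 2 → ℝ := ![x 0 + (τ + μ) * sa, x 1 + (τ + μ) * sb] with hddef
    have hd0 : d 0 = x 0 + (τ + μ) * sa := by rw [hddef]; simp
    have hd1 : d 1 = x 1 + (τ + μ) * sb := by rw [hddef]; simp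
    clear_value d
    have hfd : d 0 * α + d 1 * β = v := by
      rw [hd0, hd1]
      linear_combination hμeq + (τ + μ) * hsaα + (τ + μ) * hsbβ
    -- crossing construction
    have cross : ∀ (K : Set (Fin 2 → ℝ)), Convex ℝ K → ∀ aa ∈ K, ∀ z ∈ K,
        aa 0 * α + aa 1 * β < v → v < z 0 * α + z 1 * β →
        ∃ w ∈ K, w 0 * α + w 1 * β = v ∧
          (∀ i, |w i - x i| ≤ max |aa i - x i| |z i - x i|) := by
      intro K hKcv aa haa z hz hav hvz
      have hden : 0 < (z 0 * α + z 1 * β) - (aa 0 * α + aa 1 * β) := by linarith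
      set lam : ℝ := (v - (aa 0 * α + aa 1 * β)) / ((z 0 * α + z 1 * β) - (aa 0 * α + aa 1 * β))
        with hlamdef
      have hl0 : 0 ≤ lam := div_nonneg (by linarith) hden.le
      have hl1 : lam ≤ 1 := by rw [hlamdef, div_le_one hden]; linarith
      refine ⟨(1 - lam) • aa + lam • z, hKcv haa hz (by linarith) hl0 (by ring), ?_, ?_⟩
      · have happ0 : ((1 - lam) • aa + lam • z) 0 = (1 - lam) * aa 0 + lam * z 0 := rfl
        have happ1 : ((1 - lam) • aa + lam • z) 1 = (1 - lam) * aa 1 + lam * z 1 := rfl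
        rw [happ0, happ1, hlamdef]
        have key := div_mul_cancel₀ (v - (aa 0 * α + aa 1 * β)) hden.ne'
        linear_combination key
      · intro i
        have happ : ((1 - lam) • aa + lam • z) i = (1 - lam) * aa i + lam * z i := rfl
        rw [happ]
        have hre : (1 - lam) * aa i + lam * z i - x i
            = (1 - lam) * (aa i - x i) + lam * (z i - x i) := by ring
        rw [hre]
        refine (abs_add_le _ _).trans ?_
        rw [abs_mul, abs_mul, abs_of_nonneg (by linarith : (0:ℝ) ≤ 1 - lam), abs_of_nonneg hl0]
        have hm1 := le_max_left |aa i - x i| |z i - x i|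
        have hm2 := le_max_right |aa i - x i| |z i - x i|
        have hstep : (1 - lam) * |aa i - x i| + lam * |z i - x i|
            ≤ (1 - lam) * max |aa i - x i| |z i - x i| + lam * max |aa i - x i| |z i - x i| :=
          add_le_add (mul_le_mul_of_nonneg_left hm1 (by linarith))
            (mul_le_mul_of_nonneg_left hm2 hl0)
        have hone : (1 - lam) * max |aa i - x i| |z i - x i| + lam * max |aa i - x i| |z i - x i|
            = max |aa i - x i| |z i - x i| := by ring
        linarith
    -- key positional facts
    have key1 : ∀ w : Fin 2 → ℝ, w 0 * α + w 1 * β = v → |w 1 - x 1| ≤ τ →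
        sa * d 0 < sa * w 0 := by
      intro w hfw hw1
      have h1 : -|x 1 - w 1| ≤ sb * (x 1 - w 1) := by
        calc -|x 1 - w 1| = -|sb * (x 1 - w 1)| := by rw [abs_mul, hsb1, one_mul]
          _ ≤ sb * (x 1 - w 1) := neg_abs_le _
      have h2 : sb * (d 1 - w 1) = sb * (x 1 - w 1) + (τ + μ) := by
        rw [hd1]
        linear_combination (τ + μ) * hsb2
      have h3 : |x 1 - w 1| ≤ τ := by rwa [abs_sub_comm]
      have e1 : μ ≤ sb * (d 1 - w 1) := by linarith
      have hbsb : β = sb * |β| := by linear_combination sb * hsbβ - β * hsb2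
      have h4 : β * (d 1 - w 1) = |β| * (sb * (d 1 - w 1)) := by
        linear_combination (d 1 - w 1) * hbsb
      have h5 : 0 < β * (d 1 - w 1) := by
        rw [h4]
        have h5a := mul_le_mul_of_nonneg_left e1 (abs_nonneg β)
        have h5b : 0 < |β| * μ := mul_pos hβpos hμpos
        linarith
      have h6 : 0 < α * (w 0 - d 0) := by
        have heq : α * (w 0 - d 0) = β * (d 1 - w 1) := by linear_combination hfw - hfd
        linarith
      have haid : α = sa * |α| := by linear_combination sa * hsaα - α * hsa2
      have h7 : α * (w 0 - d 0) = |α| * (sa * (w 0 - d 0)) := by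
        linear_combination (w 0 - d 0) * haid
      have h8 : 0 < sa * (w 0 - d 0) := pos_factor' hαpos (by rw [← h7]; exact h6)
      have h9 : sa * (w 0 - d 0) = sa * w 0 - sa * d 0 := by ring
      linarith
    have key2 : ∀ w : Fin 2 → ℝ, |w 0 - x 0| ≤ τ → sa * w 0 < sa * d 0 := by
      intro w hw0
      have h1 : sa * (w 0 - x 0) ≤ |w 0 - x 0| := by
        calc sa * (w 0 - x 0) ≤ |sa * (w 0 - x 0)| := le_abs_self _
          _ = |w 0 - x 0| := by rw [abs_mul, hsa1, one_mul]
      have h2 : sa * (w 0 - d 0) = sa * (w 0 - x 0) - (τ + μ) := by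
        rw [hd0]
        linear_combination (-(τ + μ)) * hsa2
      have h3 : sa * (w 0 - d 0) = sa * w 0 - sa * d 0 := by ring
      linarith
    -- building d from two crossing points
    have build : ∀ (K : Set (Fin 2 → ℝ)), Convex ℝ K →
        ∀ w ∈ K, ∀ w' ∈ K, w 0 * α + w 1 * β = v → w' 0 * α + w' 1 * β = v →
        sa * w' 0 < sa * d 0 → sa * d 0 < sa * w 0 → d ∈ K := by
      intro K hK w hw w' hw' hfw hfw' hl hr
      have hden : 0 < sa * w 0 - sa * w' 0 := by linarith
      set θ : ℝ := (sa * d 0 - sa * w' 0) / (sa * w 0 - sa * w' 0) with hθdef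
      have hθ0 : 0 ≤ θ := div_nonneg (by linarith) hden.le
      have hθ1 : θ ≤ 1 := by rw [hθdef, div_le_one hden]; linarith
      have hmem : (1 - θ) • w' + θ • w ∈ K := hK hw' hw (by linarith) hθ0 (by ring)
      have happ0 : ((1 - θ) • w' + θ • w) 0 = (1 - θ) * w' 0 + θ * w 0 := rfl
      have happ1 : ((1 - θ) • w' + θ • w) 1 = (1 - θ) * w' 1 + θ * w 1 := rfl
      have hc0 : ((1 - θ) • w' + θ • w) 0 = d 0 := by
        rw [happ0, hθdef]
        have key := div_mul_cancel₀ (sa * d 0 - sa * w' 0) hden.ne'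
        linear_combination sa * key - ((sa * d 0 - sa * w' 0) / (sa * w 0 - sa * w' 0) * (w 0 - w' 0) - (d 0 - w' 0)) * hsa2
      have hcv : ((1 - θ) • w' + θ • w) 0 * α + ((1 - θ) • w' + θ • w) 1 * β = v := by
        rw [happ0, happ1]
        linear_combination (1 - θ) * hfw' + θ * hfw
      have hc1 : ((1 - θ) • w' + θ • w) 1 = d 1 := by
        have hz : (((1 - θ) • w' + θ • w) 1 - d 1) * β = 0 := by
          linear_combination hcv - hfd - α * hc0
        have := (mul_eq_zero.mp hz).resolve_right hβ
        linarith [sub_eq_zero.mp this]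
      have heq : (1 - θ) • w' + θ • w = d := by
        funext i
        fin_cases i
        · exact hc0
        · exact hc1
      rwa [heq] at hmem
    -- f a < v and f b < v
    have hfa : a 0 * α + a 1 * β < v := lt_trans (hball a ha0 ha1) huv
    have hfb : b 0 * α + b 1 * β < v := lt_trans (hball b hb0 hb1) huv
    -- crossing points for K1
    obtain ⟨w1, hw1K, hw1f, hw1bd⟩ := cross K1 hK1cv a ha s hs.1 hfa hfs
    obtain ⟨w1', hw1'K, hw1'f, hw1'bd⟩ := cross K1 hK1cv a ha t ht.1 hfa hft
    obtain ⟨w2, hw2K, hw2f, hw2bd⟩ := cross K2 hK2cv b hb s hs.2 hfb hfs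
    obtain ⟨w2', hw2'K, hw2'f, hw2'bd⟩ := cross K2 hK2cv b hb t ht.2 hfb hft
    have hw1c : |w1 1 - x 1| ≤ τ := (hw1bd 1).trans (max_le ha1 hs1)
    have hw1'c : |w1' 0 - x 0| ≤ τ := (hw1'bd 0).trans (max_le ha0 ht0)
    have hw2c : |w2 1 - x 1| ≤ τ := (hw2bd 1).trans (max_le hb1 hs1)
    have hw2'c : |w2' 0 - x 0| ≤ τ := (hw2'bd 0).trans (max_le hb0 ht0)
    have hdK1 : d ∈ K1 :=
      build K1 hK1cv w1 hw1K w1' hw1'K hw1f hw1'f (key2 w1' hw1'c) (key1 w1 hw1f hw1c)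
    have hdK2 : d ∈ K2 :=
      build K2 hK2cv w2 hw2K w2' hw2'K hw2f hw2'f (key2 w2' hw2'c) (key1 w2 hw2f hw2c)
    have hcontra := hvf d ⟨hdK1, hdK2⟩
    rw [frep, hfd] at hcontra
    exact lt_irrefl v hcontra
end
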